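/- arXiv:1505.06098 — 3 statements merged into one kernel-verified Lean document; each statement's English description precedes it below -/
import Mathlib

section
/- There is a bijection between the set of pairs (T, occupied corner of T) where T ranges over tree-like tableaux of size n, and the set of pairs (T', i) where T' is a tree-like tableau of size n-1 and i is an integer in {1, ..., n}. -/
open Polynomial

/-- A tree-like tableau: a Young diagram together with a set of pointed cells,
such that the top-left cell is pointed (the root point), every non-root point
has a point above it in its column or to its left in its row but not both,
and no row or column of the diagram is empty of points. Cells are indexed by
`(row, column)` with the top-left cell `(0,0)`. -/
structure TreeLikeTableau where
  shape : YoungDiagram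
  points : Finset (ℕ × ℕ)
  points_subset : points ⊆ shape.cells
  root_mem : (0, 0) ∈ points
  point_cond : ∀ p ∈ points, p ≠ (0, 0) →
    Xor' (∃ r < p.1, (r, p.2) ∈ points) (∃ c < p.2, (p.1, c) ∈ points)
  no_empty_row : ∀ i j : ℕ, (i, j) ∈ shape.cells → ∃ c, (i, c) ∈ points
  no_empty_col : ∀ i j : ℕ, (i, j) ∈ shape.cells → ∃ r, (r, j) ∈ points

namespace TreeLikeTableau

/-- The size of a tree-like tableau is its number of points. -/
def size (T : TreeLikeTableau) : ℕ := T.points.card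

/-- The occupied corners of a tree-like tableau: pointed cells whose bottom
and right edges lie on the Southeast border of the diagram. -/
def occCorners (T : TreeLikeTableau) : Finset (ℕ × ℕ) :=
  T.points.filter (fun p => (p.1 + 1, p.2) ∉ T.shape.cells ∧ (p.1, p.2 + 1) ∉ T.shape.cells)

/-- The number of occupied corners. -/
def oc (T : TreeLikeTableau) : ℕ := T.occCorners.card

end TreeLikeTableau

namespace TLTAux
open TreeLikeTableau

lemma tlt_ext {T1 T2 : TreeLikeTableau} (h1 : T1.shape = T2.shape)
    (h2 : T1.points = T2.points) : T1 = T2 := by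
  cases T1; cases T2; simp_all

def rows (T : TreeLikeTableau) : ℕ := T.shape.colLen 0
def cols (T : TreeLikeTableau) : ℕ := T.shape.rowLen 0

lemma point_mem_shape {T : TreeLikeTableau} {p : ℕ × ℕ} (hp : p ∈ T.points) :
    p ∈ T.shape := T.points_subset hp

lemma root_shape (T : TreeLikeTableau) : ((0,0) : ℕ×ℕ) ∈ T.shape :=
  point_mem_shape T.root_mem

/-- transpose of a tree-like tableau -/
def tr (T : TreeLikeTableau) : TreeLikeTableau where
  shape := T.shape.transpose
  points := T.points.image Prod.swap
  points_subset := by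
    intro p hp
    rw [Finset.mem_image] at hp
    obtain ⟨q, hq, rfl⟩ := hp
    rw [YoungDiagram.mem_cells, YoungDiagram.mem_transpose, Prod.swap_swap]
    exact T.points_subset hq
  root_mem := by
    rw [Finset.mem_image]
    exact ⟨(0,0), T.root_mem, rfl⟩
  point_cond := by
    intro p hp hne
    rw [Finset.mem_image] at hp
    obtain ⟨q, hq, rfl⟩ := hp
    have hqne : q ≠ (0,0) := by
      intro h; apply hne; rw [h]; rfl
    have := T.point_cond q hq hqne
    have hmem : ∀ x : ℕ × ℕ, x ∈ T.points.image Prod.swap ↔ x.swap ∈ T.points := by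
      intro x
      rw [Finset.mem_image]
      constructor
      · rintro ⟨y, hy, rfl⟩; rwa [Prod.swap_swap]
      · intro h; exact ⟨x.swap, h, Prod.swap_swap x⟩
    unfold Xor' at this ⊢
    simp only [hmem, Prod.swap_prod_mk, Prod.fst_swap, Prod.snd_swap]
    rcases this with h | h
    · exact Or.inr ⟨h.1, h.2⟩
    · exact Or.inl ⟨h.1, h.2⟩
  no_empty_row := by
    intro i j hij
    rw [YoungDiagram.mem_cells, YoungDiagram.mem_transpose] at hij
    obtain ⟨r, hr⟩ := T.no_empty_col j i hij
    exact ⟨r, Finset.mem_image.mpr ⟨(r, i), hr, rfl⟩⟩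
  no_empty_col := by
    intro i j hij
    rw [YoungDiagram.mem_cells, YoungDiagram.mem_transpose] at hij
    obtain ⟨c, hc⟩ := T.no_empty_row j i hij
    exact ⟨c, Finset.mem_image.mpr ⟨(j, c), hc, rfl⟩⟩

@[simp] lemma tr_shape (T : TreeLikeTableau) : (tr T).shape = T.shape.transpose := rfl

@[simp] lemma mem_tr_points {T : TreeLikeTableau} {p : ℕ × ℕ} :
    p ∈ (tr T).points ↔ p.swap ∈ T.points := by
  show p ∈ T.points.image Prod.swap ↔ _
  rw [Finset.mem_image]
  constructor
  · rintro ⟨y, hy, rfl⟩; rwa [Prod.swap_swap]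
  · intro h; exact ⟨p.swap, h, Prod.swap_swap p⟩

@[simp] lemma mem_tr_points' {T : TreeLikeTableau} {a b : ℕ} :
    (a, b) ∈ (tr T).points ↔ (b, a) ∈ T.points := mem_tr_points

lemma tr_tr (T : TreeLikeTableau) : tr (tr T) = T := by
  apply tlt_ext
  · exact T.shape.transpose_transpose
  · ext p
    simp [Prod.swap_swap]

@[simp] lemma size_tr (T : TreeLikeTableau) : (tr T).size = T.size :=
  Finset.card_image_of_injective _ Prod.swap_injective

lemma mem_tr_occCorners {T : TreeLikeTableau} {p : ℕ × ℕ} :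
    p ∈ (tr T).occCorners ↔ p.swap ∈ T.occCorners := by
  unfold occCorners
  simp only [Finset.mem_filter, mem_tr_points, tr_shape, YoungDiagram.mem_cells,
    YoungDiagram.mem_transpose, Prod.fst_swap, Prod.snd_swap]
  constructor
  · rintro ⟨h1, h2, h3⟩; exact ⟨h1, h3, h2⟩
  · rintro ⟨h1, h2, h3⟩; exact ⟨h1, h3, h2⟩

@[simp] lemma rows_tr (T : TreeLikeTableau) : rows (tr T) = cols T :=
  YoungDiagram.colLen_transpose _ 0

@[simp] lemma cols_tr (T : TreeLikeTableau) : cols (tr T) = rows T :=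
  YoungDiagram.rowLen_transpose _ 0

end TLTAux
namespace TLTAux
open TreeLikeTableau

/-- `p` is the only point in its row. -/
def rowOnly (T : TreeLikeTableau) (p : ℕ × ℕ) : Prop :=
  ∀ q ∈ T.points, q.1 = p.1 → q = p

/-- `p` is the only point in its column. -/
def colOnly (T : TreeLikeTableau) (p : ℕ × ℕ) : Prop :=
  ∀ q ∈ T.points, q.2 = p.2 → q = p

lemma mem_occCorners_iff {T : TreeLikeTableau} {p : ℕ × ℕ} :
    p ∈ T.occCorners ↔ p ∈ T.points ∧ (p.1 + 1, p.2) ∉ T.shape ∧ (p.1, p.2 + 1) ∉ T.shape := by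
  unfold occCorners
  simp [Finset.mem_filter, YoungDiagram.mem_cells]

lemma rowOnly_tr {T : TreeLikeTableau} {p : ℕ × ℕ} :
    rowOnly (tr T) p ↔ colOnly T p.swap := by
  constructor
  · intro h q hq hq2
    have := h q.swap (mem_tr_points.mpr (by rwa [Prod.swap_swap])) (by simpa using hq2)
    rw [← Prod.swap_swap q, this]
  · intro h q hq hq1
    have := h q.swap (mem_tr_points.mp hq) (by simpa using hq1)
    rw [← Prod.swap_swap q, this, Prod.swap_swap]

lemma colOnly_tr {T : TreeLikeTableau} {p : ℕ × ℕ} :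
    colOnly (tr T) p ↔ rowOnly T p.swap := by
  constructor
  · intro h q hq hq2
    have := h q.swap (mem_tr_points.mpr (by rwa [Prod.swap_swap])) (by simpa using hq2)
    rw [← Prod.swap_swap q, this]
  · intro h q hq hq1
    have := h q.swap (mem_tr_points.mp hq) (by simpa using hq1)
    rw [← Prod.swap_swap q, this, Prod.swap_swap]

lemma corner_ne_root {T : TreeLikeTableau} {p : ℕ × ℕ} (h2 : 2 ≤ T.size)
    (hp : p ∈ T.occCorners) : p ≠ (0, 0) := by
  rintro rfl
  obtain ⟨-, hb, hr⟩ := mem_occCorners_iff.mp hp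
  have hsub : T.points ⊆ {((0 : ℕ), (0 : ℕ))} := by
    intro q hq
    have hqs : q ∈ T.shape := point_mem_shape hq
    rw [Finset.mem_singleton]
    by_contra hne
    rcases Nat.eq_zero_or_pos q.1 with h1 | h1
    · rcases Nat.eq_zero_or_pos q.2 with h2' | h2'
      · exact hne (Prod.ext h1 h2')
      · exact hr (T.shape.up_left_mem (Nat.zero_le _) h2' (by rwa [← Prod.mk.eta (p := q)] at hqs))
    · exact hb (T.shape.up_left_mem h1 (Nat.zero_le _) (by rwa [← Prod.mk.eta (p := q)] at hqs))
  have := Finset.card_le_card hsub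
  simp only [Finset.card_singleton] at this
  unfold TreeLikeTableau.size at h2
  omega

lemma no_cell_below {T : TreeLikeTableau} {p : ℕ × ℕ} (hp : p ∈ T.occCorners)
    {i : ℕ} (hi : p.1 < i) : (i, p.2) ∉ T.shape := by
  intro h
  exact (mem_occCorners_iff.mp hp).2.1 (T.shape.up_left_mem hi (le_refl _) h)

lemma no_cell_right {T : TreeLikeTableau} {p : ℕ × ℕ} (hp : p ∈ T.occCorners)
    {j : ℕ} (hj : p.2 < j) : (p.1, j) ∉ T.shape := by
  intro h
  exact (mem_occCorners_iff.mp hp).2.2 (T.shape.up_left_mem (le_refl _) hj h)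

lemma corner_dichotomy {T : TreeLikeTableau} {p : ℕ × ℕ} (h2 : 2 ≤ T.size)
    (hp : p ∈ T.occCorners) : Xor' (rowOnly T p) (colOnly T p) := by
  have hne := corner_ne_root h2 hp
  have hmem := (mem_occCorners_iff.mp hp).1
  have hxor := T.point_cond p hmem hne
  have hA : (¬∃ r < p.1, (r, p.2) ∈ T.points) ↔ colOnly T p := by
    constructor
    · intro h q hq hq2
      by_contra hqe
      rcases Nat.lt_trichotomy q.1 p.1 with hlt | heq | hgt
      · exact h ⟨q.1, hlt, by rwa [← hq2, Prod.mk.eta]⟩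
      · exact hqe (Prod.ext heq hq2)
      · exact no_cell_below hp hgt (by rw [← hq2, Prod.mk.eta]; exact point_mem_shape hq)
    · rintro h ⟨r, hr, hrp⟩
      have := h (r, p.2) hrp rfl
      rw [Prod.ext_iff] at this
      omega
  have hB : (¬∃ c < p.2, (p.1, c) ∈ T.points) ↔ rowOnly T p := by
    constructor
    · intro h q hq hq1
      by_contra hqe
      rcases Nat.lt_trichotomy q.2 p.2 with hlt | heq | hgt
      · exact h ⟨q.2, hlt, by rwa [← hq1, Prod.mk.eta]⟩
      · exact hqe (Prod.ext hq1 heq)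
      · exact no_cell_right hp hgt (by rw [← hq1, Prod.mk.eta]; exact point_mem_shape hq)
    · rintro h ⟨c, hc, hcp⟩
      have := h (p.1, c) hcp rfl
      rw [Prod.ext_iff] at this
      omega
  rw [← hA, ← hB]
  rcases hxor with ⟨ha, hb⟩ | ⟨hb, ha⟩
  · exact Or.inl ⟨hb, not_not_intro ha⟩
  · exact Or.inr ⟨ha, not_not_intro hb⟩

/-- the set of points having no point to their left -/
def lacksLeft (T : TreeLikeTableau) : Finset (ℕ × ℕ) :=
  T.points.filter (fun p => ¬∃ c < p.2, (p.1, c) ∈ T.points)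

/-- the set of points having no point above them -/
def lacksAbove (T : TreeLikeTableau) : Finset (ℕ × ℕ) :=
  T.points.filter (fun p => ¬∃ r < p.1, (r, p.2) ∈ T.points)

lemma card_lacksLeft (T : TreeLikeTableau) : (lacksLeft T).card = rows T := by
  rw [show rows T = (Finset.range (rows T)).card by simp]
  apply Finset.card_bij (fun p _ => p.1)
  · intro p hp
    rw [Finset.mem_range]
    have : p ∈ T.shape := point_mem_shape (Finset.mem_filter.mp hp).1
    have : (p.1, 0) ∈ T.shape := T.shape.up_left_mem (le_refl _) (Nat.zero_le _)
      (by rwa [Prod.mk.eta])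
    exact YoungDiagram.mem_iff_lt_colLen.mp this
  · intro p hp q hq he
    obtain ⟨hp1, hp2⟩ := Finset.mem_filter.mp hp
    obtain ⟨hq1, hq2⟩ := Finset.mem_filter.mp hq
    rcases Nat.lt_trichotomy p.2 q.2 with h | h | h
    · exact absurd ⟨p.2, h, by rw [← he, Prod.mk.eta]; exact hp1⟩ hq2
    · exact Prod.ext he h
    · exact absurd ⟨q.2, h, by rw [he, Prod.mk.eta]; exact hq1⟩ hp2
  · intro r hr
    rw [Finset.mem_range] at hr
    have hshape : ((r, 0) : ℕ × ℕ) ∈ T.shape := YoungDiagram.mem_iff_lt_colLen.mpr hr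
    obtain ⟨c0, hc0⟩ := T.no_empty_row r 0 ((YoungDiagram.mem_cells _).mpr hshape)
    set S := (T.points.filter (fun q => q.1 = r)).image Prod.snd with hS
    have hSne : S.Nonempty := ⟨c0, Finset.mem_image.mpr ⟨(r, c0),
      Finset.mem_filter.mpr ⟨hc0, rfl⟩, rfl⟩⟩
    set c := S.min' hSne with hc
    have hcS : c ∈ S := S.min'_mem hSne
    obtain ⟨q, hq, hq2⟩ := Finset.mem_image.mp hcS
    obtain ⟨hq1, hqr⟩ := Finset.mem_filter.mp hq
    refine ⟨(r, c), Finset.mem_filter.mpr ⟨by rw [← hqr, ← hq2, Prod.mk.eta]; exact hq1, ?_⟩, rfl⟩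
    rintro ⟨c', hc', hcp'⟩
    have : c ≤ c' := S.min'_le c' (Finset.mem_image.mpr ⟨(r, c'),
      Finset.mem_filter.mpr ⟨hcp', rfl⟩, rfl⟩)
    omega

lemma lacksAbove_eq (T : TreeLikeTableau) :
    lacksAbove T = (lacksLeft (tr T)).image Prod.swap := by
  ext p
  simp only [lacksAbove, lacksLeft, Finset.mem_image, Finset.mem_filter]
  constructor
  · rintro ⟨h1, h2⟩
    refine ⟨p.swap, ⟨mem_tr_points.mpr (by rwa [Prod.swap_swap]), ?_⟩, Prod.swap_swap p⟩
    rintro ⟨c, hc, hcp⟩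
    rw [Prod.snd_swap] at hc
    rw [Prod.fst_swap] at hcp
    exact h2 ⟨c, hc, mem_tr_points.mp hcp⟩
  · rintro ⟨q, ⟨hq1, hq2⟩, rfl⟩
    refine ⟨by simpa using mem_tr_points.mp hq1, ?_⟩
    rintro ⟨r, hr, hrp⟩
    exact hq2 ⟨r, by simpa using hr, by simpa using mem_tr_points'.mpr (by simpa using hrp)⟩

lemma card_lacksAbove (T : TreeLikeTableau) : (lacksAbove T).card = cols T := by
  rw [lacksAbove_eq, Finset.card_image_of_injective _ Prod.swap_injective,
    card_lacksLeft, rows_tr]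

lemma rows_add_cols (T : TreeLikeTableau) : rows T + cols T = T.size + 1 := by
  have hunion : lacksLeft T ∪ lacksAbove T = T.points := by
    apply Finset.Subset.antisymm
    · intro p hp
      rcases Finset.mem_union.mp hp with h | h
      · exact (Finset.mem_filter.mp h).1
      · exact (Finset.mem_filter.mp h).1
    · intro p hp
      by_cases hne : p = (0, 0)
      · apply Finset.mem_union_left
        refine Finset.mem_filter.mpr ⟨hp, ?_⟩
        rintro ⟨c, hc, -⟩
        subst hne
        exact Nat.not_lt_zero c hc
      · have := T.point_cond p hp hne
        rcases this with ⟨-, h⟩ | ⟨-, h⟩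
        · exact Finset.mem_union_left _ (Finset.mem_filter.mpr ⟨hp, h⟩)
        · exact Finset.mem_union_right _ (Finset.mem_filter.mpr ⟨hp, h⟩)
  have hinter : lacksLeft T ∩ lacksAbove T = {((0 : ℕ), (0 : ℕ))} := by
    apply Finset.Subset.antisymm
    · intro p hp
      rw [Finset.mem_inter] at hp
      obtain ⟨h1, h2⟩ := hp
      rw [Finset.mem_singleton]
      by_contra hne
      have := T.point_cond p (Finset.mem_filter.mp h1).1 hne
      rcases this with ⟨h, -⟩ | ⟨h, -⟩
      · exact (Finset.mem_filter.mp h2).2 h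
      · exact (Finset.mem_filter.mp h1).2 h
    · intro p hp
      rw [Finset.mem_singleton] at hp
      subst hp
      refine Finset.mem_inter.mpr ⟨Finset.mem_filter.mpr ⟨T.root_mem, ?_⟩,
        Finset.mem_filter.mpr ⟨T.root_mem, ?_⟩⟩
      · rintro ⟨c, hc, -⟩; exact Nat.not_lt_zero c hc
      · rintro ⟨r, hr, -⟩; exact Nat.not_lt_zero r hr
  have := Finset.card_union_add_card_inter (lacksLeft T) (lacksAbove T)
  rw [hunion, hinter, card_lacksLeft, card_lacksAbove] at this
  simp only [Finset.card_singleton] at this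
  unfold TreeLikeTableau.size
  omega

end TLTAux
namespace TLTAux
open TreeLikeTableau

/-- delete row `r` from a finset of cells, shifting lower rows up -/
def delRow (s : Finset (ℕ × ℕ)) (r : ℕ) : Finset (ℕ × ℕ) :=
  (s.filter (fun q => q.1 ≠ r)).image (fun q => if q.1 < r then q else (q.1 - 1, q.2))

lemma mem_delRow {s : Finset (ℕ × ℕ)} {r i j : ℕ} :
    (i, j) ∈ delRow s r ↔ (i < r ∧ (i, j) ∈ s) ∨ (r ≤ i ∧ (i + 1, j) ∈ s) := by
  unfold delRow
  rw [Finset.mem_image]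
  constructor
  · rintro ⟨q, hq, hq2⟩
    obtain ⟨hq1, hqr⟩ := Finset.mem_filter.mp hq
    by_cases h : q.1 < r
    · rw [if_pos h] at hq2
      subst hq2
      exact Or.inl ⟨h, hq1⟩
    · rw [if_neg h] at hq2
      push_neg at h
      have hq1r : r < q.1 := lt_of_le_of_ne h (Ne.symm hqr)
      have : q = (i + 1, j) := by
        rw [Prod.ext_iff] at hq2 ⊢
        simp only [Prod.fst_swap] at *
        omega
      subst this
      simp only at hq2
      refine Or.inr ⟨by omega, hq1⟩
  · rintro (⟨h1, h2⟩ | ⟨h1, h2⟩)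
    · exact ⟨(i, j), Finset.mem_filter.mpr ⟨h2, by simp; omega⟩, by simp [h1]⟩
    · refine ⟨(i + 1, j), Finset.mem_filter.mpr ⟨h2, by simp; omega⟩, ?_⟩
      rw [if_neg (show ¬((i + 1, j).1 < r) by simp; omega)]
      simp

lemma card_delRow {s : Finset (ℕ × ℕ)} {r : ℕ} :
    (delRow s r).card = (s.filter (fun q => q.1 ≠ r)).card := by
  apply Finset.card_image_of_injOn
  intro q1 hq1 q2 hq2 he
  rw [Finset.mem_coe, Finset.mem_filter] at hq1 hq2
  by_cases h1 : q1.1 < r <;> by_cases h2 : q2.1 < r <;>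
    simp only [if_pos, if_neg, h1, h2, if_true, if_false] at he
  · exact he
  · rw [Prod.ext_iff] at he ⊢; constructor <;> [skip; exact he.2] ;
    have := hq2.2; omega
  · rw [Prod.ext_iff] at he ⊢; constructor <;> [skip; exact he.2] ;
    have := hq1.2; omega
  · rw [Prod.ext_iff] at he ⊢; constructor <;> [skip; exact he.2] ;
    have := hq1.2; have := hq2.2; omega

/-- delete row `r` from a Young diagram -/
def delRowShape (μ : YoungDiagram) (r : ℕ) : YoungDiagram where
  cells := delRow μ.cells r
  isLowerSet := by
    rintro ⟨a1, a2⟩ ⟨b1, b2⟩ hba ha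
    obtain ⟨hb1, hb2⟩ := Prod.mk_le_mk.mp hba
    rw [Finset.mem_coe] at ha ⊢
    rw [mem_delRow] at ha ⊢
    simp only [YoungDiagram.mem_cells] at ha ⊢
    rcases ha with ⟨h1, h2⟩ | ⟨h1, h2⟩
    · exact Or.inl ⟨by omega, μ.up_left_mem hb1 hb2 h2⟩
    · by_cases hb : b1 < r
      · exact Or.inl ⟨hb, μ.up_left_mem (by omega) hb2 h2⟩
      · exact Or.inr ⟨by omega, μ.up_left_mem (by omega) hb2 h2⟩

lemma mem_delRowShape {μ : YoungDiagram} {r i j : ℕ} :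
    (i, j) ∈ delRowShape μ r ↔ (i < r ∧ (i, j) ∈ μ) ∨ (r ≤ i ∧ (i + 1, j) ∈ μ) := by
  change (i, j) ∈ delRow μ.cells r ↔ _
  rw [mem_delRow]
  simp only [YoungDiagram.mem_cells]

lemma colLen_eq {μ : YoungDiagram} {j k : ℕ} (h : ∀ i, (i, j) ∈ μ ↔ i < k) :
    μ.colLen j = k := by
  apply le_antisymm
  · by_contra hc
    push_neg at hc
    have : (k, j) ∈ μ := YoungDiagram.mem_iff_lt_colLen.mpr hc
    rw [h] at this
    omega
  · rcases Nat.eq_zero_or_pos k with rfl | hk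
    · exact Nat.zero_le _
    · have : (k - 1, j) ∈ μ := (h _).mpr (by omega)
      have := YoungDiagram.mem_iff_lt_colLen.mp this
      omega

section Delete

variable {T : TreeLikeTableau} {r c : ℕ}

lemma col_witness (hp : (r, c) ∈ T.occCorners) (hrow : rowOnly T (r, c))
    (hcol : ¬colOnly T (r, c)) : ∃ r₂ < r, (r₂, c) ∈ T.points := by
  unfold colOnly at hcol
  push_neg at hcol
  obtain ⟨q, hq, hq2, hqne⟩ := hcol
  have hq2' : q.2 = c := hq2
  have hq1 : q.1 ≠ r := by
    intro h
    exact hqne (hrow q hq h)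
  have hlt : q.1 < r := by
    rcases Nat.lt_or_ge q.1 r with h | h
    · exact h
    · exfalso
      have : q.1 > r := by omega
      exact no_cell_below hp this (by rw [← hq2', Prod.mk.eta]; exact point_mem_shape hq)
  exact ⟨q.1, hlt, by rw [← hq2', Prod.mk.eta]; exact hq⟩

lemma del_r_pos (hp : (r, c) ∈ T.occCorners) (hrow : rowOnly T (r, c))
    (hcol : ¬colOnly T (r, c)) : 1 ≤ r := by
  obtain ⟨r₂, hr₂, -⟩ := col_witness hp hrow hcol
  omega

/-- delete the row of the occupied corner `(r, c)`, assuming the row contains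
no other point -/
def deleteRowT (T : TreeLikeTableau) (r c : ℕ) (hp : (r, c) ∈ T.occCorners)
    (hrow : rowOnly T (r, c)) (hcol : ¬colOnly T (r, c)) : TreeLikeTableau where
  shape := delRowShape T.shape r
  points := delRow T.points r
  points_subset := by
    rintro ⟨i, j⟩ hij
    rw [mem_delRow] at hij
    rw [YoungDiagram.mem_cells, mem_delRowShape]
    rcases hij with ⟨h1, h2⟩ | ⟨h1, h2⟩
    · exact Or.inl ⟨h1, (YoungDiagram.mem_cells _).mp (T.points_subset h2)⟩
    · exact Or.inr ⟨h1, (YoungDiagram.mem_cells _).mp (T.points_subset h2)⟩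
  root_mem := by
    rw [mem_delRow]
    exact Or.inl ⟨del_r_pos hp hrow hcol, T.root_mem⟩
  point_cond := by
    rintro ⟨i, j⟩ hij hne
    rw [mem_delRow] at hij
    -- original row index
    have key : ∀ oI : ℕ, oI ≠ r → (oI, j) ∈ T.points → (oI, j) ≠ (0, 0) →
        (oI = i ∧ i < r) ∨ (oI = i + 1 ∧ r ≤ i) →
        Xor' (∃ r' < i, (r', j) ∈ delRow T.points r)
          (∃ c' < j, (i, c') ∈ delRow T.points r) := by
      intro oI hoIr hoIp hoIne hcase
      have hxor := T.point_cond (oI, j) hoIp hoIne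
      simp only at hxor
      have E1 : (∃ c' < j, (i, c') ∈ delRow T.points r) ↔ (∃ c' < j, (oI, c') ∈ T.points) := by
        constructor
        · rintro ⟨c', hc', hm⟩
          rw [mem_delRow] at hm
          rcases hm with ⟨h1, h2⟩ | ⟨h1, h2⟩
          · rcases hcase with ⟨rfl, -⟩ | ⟨rfl, h3⟩
            · exact ⟨c', hc', h2⟩
            · omega
          · rcases hcase with ⟨rfl, h3⟩ | ⟨rfl, -⟩
            · omega
            · exact ⟨c', hc', h2⟩
        · rintro ⟨c', hc', hm⟩
          refine ⟨c', hc', ?_⟩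
          rw [mem_delRow]
          rcases hcase with ⟨rfl, h3⟩ | ⟨rfl, h3⟩
          · exact Or.inl ⟨h3, hm⟩
          · exact Or.inr ⟨h3, hm⟩
      have E2 : (∃ r' < i, (r', j) ∈ delRow T.points r) ↔ (∃ r' < oI, (r', j) ∈ T.points) := by
        constructor
        · rintro ⟨r', hr', hm⟩
          rw [mem_delRow] at hm
          rcases hm with ⟨h1, h2⟩ | ⟨h1, h2⟩
          · exact ⟨r', by omega, h2⟩
          · refine ⟨r' + 1, by omega, h2⟩
        · rintro ⟨r', hr', hm⟩
          have hr'r : r' ≠ r := by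
            intro h
            subst h
            -- then j = c by rowOnly, and oI > r with (oI, j) ∈ points, contra corner
            have hjc : j = c := by
              have := hrow (r', j) hm rfl
              rw [Prod.ext_iff] at this
              exact this.2
            subst hjc
            have hoIgt : r' < oI := hr'
            exact no_cell_below hp hoIgt (point_mem_shape hoIp)
          rcases Nat.lt_or_ge r' r with h | h
          · refine ⟨r', by omega, ?_⟩
            rw [mem_delRow]
            exact Or.inl ⟨h, hm⟩
          · have hgt : r < r' := by omega
            refine ⟨r' - 1, by omega, ?_⟩
            rw [mem_delRow]
            exact Or.inr ⟨by omega, by rwa [Nat.sub_add_cancel (by omega)]⟩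
      rw [E1, E2]
      exact hxor
    rcases hij with ⟨h1, h2⟩ | ⟨h1, h2⟩
    · exact key i (by
        intro h
        have := hrow (i, j) h2 h
        rw [Prod.ext_iff] at this
        omega) h2 (by simpa using hne) (Or.inl ⟨rfl, h1⟩)
    · refine key (i + 1) (by omega) h2 (by simp) (Or.inr ⟨rfl, h1⟩)
  no_empty_row := by
    intro i j hij
    rw [YoungDiagram.mem_cells, mem_delRowShape] at hij
    rcases hij with ⟨h1, h2⟩ | ⟨h1, h2⟩
    · obtain ⟨c', hc'⟩ := T.no_empty_row i j ((YoungDiagram.mem_cells _).mpr h2)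
      exact ⟨c', mem_delRow.mpr (Or.inl ⟨h1, hc'⟩)⟩
    · obtain ⟨c', hc'⟩ := T.no_empty_row (i + 1) j ((YoungDiagram.mem_cells _).mpr h2)
      exact ⟨c', mem_delRow.mpr (Or.inr ⟨h1, hc'⟩)⟩
  no_empty_col := by
    intro i j hij
    rw [YoungDiagram.mem_cells, mem_delRowShape] at hij
    have hsh : ∃ i', (i', j) ∈ T.shape := by
      rcases hij with ⟨h1, h2⟩ | ⟨h1, h2⟩
      exacts [⟨i, h2⟩, ⟨i + 1, h2⟩]
    obtain ⟨i', hi'⟩ := hsh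
    obtain ⟨r'', hr''⟩ := T.no_empty_col i' j ((YoungDiagram.mem_cells _).mpr hi')
    rcases Nat.lt_trichotomy r'' r with h | h | h
    · exact ⟨r'', mem_delRow.mpr (Or.inl ⟨h, hr''⟩)⟩
    · subst h
      have hjc : j = c := by
        have := hrow (r'', j) hr'' rfl
        rw [Prod.ext_iff] at this
        exact this.2
      subst hjc
      obtain ⟨r₂, hr₂, hr₂m⟩ := col_witness hp hrow hcol
      exact ⟨r₂, mem_delRow.mpr (Or.inl ⟨hr₂, hr₂m⟩)⟩
    · exact ⟨r'' - 1, mem_delRow.mpr (Or.inr ⟨by omega,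
        by rwa [Nat.sub_add_cancel (by omega)]⟩)⟩

lemma size_deleteRowT (hp : (r, c) ∈ T.occCorners) (hrow : rowOnly T (r, c))
    (hcol : ¬colOnly T (r, c)) :
    (deleteRowT T r c hp hrow hcol).size + 1 = T.size := by
  unfold TreeLikeTableau.size
  show (delRow T.points r).card + 1 = T.points.card
  rw [card_delRow]
  have hfe : T.points.filter (fun q => q.1 ≠ r) = T.points.erase (r, c) := by
    ext q
    rw [Finset.mem_filter, Finset.mem_erase]
    constructor
    · rintro ⟨h1, h2⟩
      refine ⟨?_, h1⟩
      intro h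
      rw [h] at h2
      exact h2 rfl
    · rintro ⟨h1, h2⟩
      refine ⟨h2, ?_⟩
      intro h
      exact h1 (hrow q h2 h)
  rw [hfe, Finset.card_erase_of_mem (mem_occCorners_iff.mp hp).1]
  have : 1 ≤ T.points.card := Finset.card_pos.mpr ⟨(0,0), T.root_mem⟩
  omega

lemma colLen0_deleteRowT (hp : (r, c) ∈ T.occCorners) (hrow : rowOnly T (r, c))
    (hcol : ¬colOnly T (r, c)) :
    rows (deleteRowT T r c hp hrow hcol) + 1 = rows T := by
  have hrm : r < rows T := by
    have : ((r, 0) : ℕ × ℕ) ∈ T.shape :=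
      T.shape.up_left_mem (le_refl _) (Nat.zero_le _) (point_mem_shape (mem_occCorners_iff.mp hp).1)
    exact YoungDiagram.mem_iff_lt_colLen.mp this
  have : rows (deleteRowT T r c hp hrow hcol) = rows T - 1 := by
    apply colLen_eq
    intro i
    show (i, 0) ∈ delRowShape T.shape r ↔ _
    rw [mem_delRowShape]
    rw [YoungDiagram.mem_iff_lt_colLen, YoungDiagram.mem_iff_lt_colLen]
    show (i < r ∧ i < rows T) ∨ (r ≤ i ∧ i + 1 < rows T) ↔ i < rows T - 1
    omega
  omega

lemma colLenC_deleteRowT (hp : (r, c) ∈ T.occCorners) (hrow : rowOnly T (r, c))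
    (hcol : ¬colOnly T (r, c)) :
    (deleteRowT T r c hp hrow hcol).shape.colLen c = r := by
  apply colLen_eq
  intro i
  show (i, c) ∈ delRowShape T.shape r ↔ _
  rw [mem_delRowShape]
  constructor
  · rintro (⟨h1, h2⟩ | ⟨h1, h2⟩)
    · exact h1
    · exact absurd h2 (no_cell_below hp (by omega))
  · intro h
    exact Or.inl ⟨h, T.shape.up_left_mem (by omega) (le_refl _)
      (point_mem_shape (mem_occCorners_iff.mp hp).1)⟩

end Delete
end TLTAux
namespace TLTAux
open TreeLikeTableau

/-- insert a row at position `r`, with middle part `mid` providing row `r` -/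
def insRowCells (s : Finset (ℕ × ℕ)) (r c : ℕ) : Finset (ℕ × ℕ) :=
  (s.filter (fun q => q.1 < r)) ∪ (Finset.range (c + 1)).image (fun j => (r, j)) ∪
    (s.filter (fun q => r ≤ q.1)).image (fun q => (q.1 + 1, q.2))

def insRowPoints (s : Finset (ℕ × ℕ)) (r c : ℕ) : Finset (ℕ × ℕ) :=
  (s.filter (fun q => q.1 < r)) ∪ {(r, c)} ∪
    (s.filter (fun q => r ≤ q.1)).image (fun q => (q.1 + 1, q.2))

lemma mem_insRowCells {s : Finset (ℕ × ℕ)} {r c i j : ℕ} :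
    (i, j) ∈ insRowCells s r c ↔
      (i < r ∧ (i, j) ∈ s) ∨ (i = r ∧ j ≤ c) ∨ (r < i ∧ (i - 1, j) ∈ s) := by
  unfold insRowCells
  simp only [Finset.mem_union, Finset.mem_filter, Finset.mem_image, Finset.mem_range]
  constructor
  · rintro ((⟨h1, h2⟩ | ⟨j', hj', hj2⟩) | ⟨q, ⟨hq, hqr⟩, hqe⟩)
    · exact Or.inl ⟨h2, h1⟩
    · rw [Prod.ext_iff] at hj2
      exact Or.inr (Or.inl ⟨hj2.1.symm, by omega⟩)
    · rw [Prod.ext_iff] at hqe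
      refine Or.inr (Or.inr ⟨by omega, ?_⟩)
      have : q = (i - 1, j) := Prod.ext (by omega) hqe.2
      rwa [this] at hq
  · rintro (⟨h1, h2⟩ | ⟨h1, h2⟩ | ⟨h1, h2⟩)
    · exact Or.inl (Or.inl ⟨h2, h1⟩)
    · exact Or.inl (Or.inr ⟨j, by omega, by rw [h1]⟩)
    · exact Or.inr ⟨(i - 1, j), ⟨h2, by simp; omega⟩, Prod.ext (by simp; omega) rfl⟩

lemma mem_insRowPoints {s : Finset (ℕ × ℕ)} {r c i j : ℕ} :
    (i, j) ∈ insRowPoints s r c ↔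
      (i < r ∧ (i, j) ∈ s) ∨ (i = r ∧ j = c) ∨ (r < i ∧ (i - 1, j) ∈ s) := by
  unfold insRowPoints
  simp only [Finset.mem_union, Finset.mem_filter, Finset.mem_image, Finset.mem_singleton]
  constructor
  · rintro ((⟨h1, h2⟩ | h) | ⟨q, ⟨hq, hqr⟩, hqe⟩)
    · exact Or.inl ⟨h2, h1⟩
    · rw [Prod.ext_iff] at h
      exact Or.inr (Or.inl ⟨h.1, h.2⟩)
    · rw [Prod.ext_iff] at hqe
      refine Or.inr (Or.inr ⟨by omega, ?_⟩)
      have : q = (i - 1, j) := Prod.ext (by omega) hqe.2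
      rwa [this] at hq
  · rintro (⟨h1, h2⟩ | ⟨h1, h2⟩ | ⟨h1, h2⟩)
    · exact Or.inl (Or.inl ⟨h2, h1⟩)
    · exact Or.inl (Or.inr (by rw [h1, h2]))
    · exact Or.inr ⟨(i - 1, j), ⟨h2, by simp; omega⟩, Prod.ext (by simp; omega) rfl⟩

lemma card_insRowPoints {s : Finset (ℕ × ℕ)} {r c : ℕ} :
    (insRowPoints s r c).card = s.card + 1 := by
  unfold insRowPoints
  have hinj : Function.Injective (fun q : ℕ × ℕ => (q.1 + 1, q.2)) := by
    intro q1 q2 h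
    simp only [Prod.mk.injEq] at h
    exact Prod.ext (by omega) h.2
  have d1 : Disjoint (s.filter (fun q => q.1 < r)) ({((r : ℕ), (c : ℕ))} : Finset (ℕ × ℕ)) := by
    rw [Finset.disjoint_right]
    rintro ⟨i, j⟩ h2 h1
    rw [Finset.mem_singleton, Prod.mk.injEq] at h2
    have h3 : i < r := (Finset.mem_filter.mp h1).2
    omega
  have d2 : Disjoint (s.filter (fun q => q.1 < r) ∪ {((r : ℕ), (c : ℕ))})
      ((s.filter (fun q => r ≤ q.1)).image (fun q => (q.1 + 1, q.2))) := by
    rw [Finset.disjoint_left]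
    rintro ⟨i, j⟩ h1 h2
    obtain ⟨q, hq, hqe⟩ := Finset.mem_image.mp h2
    have hge : r ≤ q.1 := (Finset.mem_filter.mp hq).2
    simp only [Prod.mk.injEq] at hqe
    rcases Finset.mem_union.mp h1 with h | h
    · have h3 : i < r := (Finset.mem_filter.mp h).2
      omega
    · rw [Finset.mem_singleton, Prod.mk.injEq] at h
      omega
  rw [Finset.card_union_of_disjoint d2, Finset.card_union_of_disjoint d1,
    Finset.card_image_of_injective _ hinj, Finset.card_singleton]
  have := Finset.card_filter_add_card_filter_not (s := s) (p := fun q => q.1 < r)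
  simp only [not_lt] at this
  omega

/-- insert a row of length `c+1` at position `colLen c` -/
def insRowShape (μ : YoungDiagram) (c : ℕ) : YoungDiagram where
  cells := insRowCells μ.cells (μ.colLen c) c
  isLowerSet := by
    rintro ⟨a1, a2⟩ ⟨b1, b2⟩ hba ha
    obtain ⟨hb1, hb2⟩ := Prod.mk_le_mk.mp hba
    rw [Finset.mem_coe] at ha ⊢
    rw [show (insRowCells μ.cells (μ.colLen c) c) = insRowCells μ.cells (μ.colLen c) c from rfl] at ha
    rw [mem_insRowCells] at ha ⊢
    simp only [YoungDiagram.mem_cells] at ha ⊢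
    set r := μ.colLen c with hr
    have F1 : ∀ i < r, (i, c) ∈ μ := fun i hi => YoungDiagram.mem_iff_lt_colLen.mpr hi
    have F2 : ∀ j, (r, j) ∈ μ → j ≤ c := by
      intro j hj
      by_contra hgt
      push_neg at hgt
      have : (r, c) ∈ μ := μ.up_left_mem (le_refl _) (by omega) hj
      rw [YoungDiagram.mem_iff_lt_colLen] at this
      omega
    rcases ha with ⟨h1, h2⟩ | ⟨h1, h2⟩ | ⟨h1, h2⟩
    · exact Or.inl ⟨by omega, μ.up_left_mem hb1 hb2 h2⟩
    · rcases Nat.lt_or_ge b1 r with hb | hb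
      · exact Or.inl ⟨hb, μ.up_left_mem (le_refl _) (by omega) (F1 b1 hb)⟩
      · exact Or.inr (Or.inl ⟨by omega, by omega⟩)
    · have ha2c : a2 ≤ c := F2 a2 (μ.up_left_mem (by omega) (le_refl _) h2)
      rcases Nat.lt_trichotomy b1 r with hb | hb | hb
      · exact Or.inl ⟨hb, μ.up_left_mem (by omega) hb2 h2⟩
      · exact Or.inr (Or.inl ⟨hb, by omega⟩)
      · exact Or.inr (Or.inr ⟨hb, μ.up_left_mem (by omega) hb2 h2⟩)

lemma mem_insRowShape {μ : YoungDiagram} {c i j : ℕ} :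
    (i, j) ∈ insRowShape μ c ↔
      (i < μ.colLen c ∧ (i, j) ∈ μ) ∨ (i = μ.colLen c ∧ j ≤ c) ∨
        (μ.colLen c < i ∧ (i - 1, j) ∈ μ) := by
  change (i, j) ∈ insRowCells μ.cells (μ.colLen c) c ↔ _
  rw [mem_insRowCells]
  simp only [YoungDiagram.mem_cells]

section Insert

variable {T : TreeLikeTableau} {c : ℕ}

/-- insert a new row with a single point at the bottom of column `c` -/
def insRowT (T : TreeLikeTableau) (c : ℕ) (hc : c < cols T) : TreeLikeTableau where
  shape := insRowShape T.shape c
  points := insRowPoints T.points (T.shape.colLen c) c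
  points_subset := by
    rintro ⟨i, j⟩ hij
    rw [mem_insRowPoints] at hij
    rw [YoungDiagram.mem_cells, mem_insRowShape]
    rcases hij with ⟨h1, h2⟩ | ⟨h1, h2⟩ | ⟨h1, h2⟩
    · exact Or.inl ⟨h1, (YoungDiagram.mem_cells _).mp (T.points_subset h2)⟩
    · exact Or.inr (Or.inl ⟨h1, by omega⟩)
    · exact Or.inr (Or.inr ⟨h1, (YoungDiagram.mem_cells _).mp (T.points_subset h2)⟩)
  root_mem := by
    have hr1 : 0 < T.shape.colLen c := YoungDiagram.mem_iff_lt_colLen.mp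
      ((YoungDiagram.mem_iff_lt_rowLen.mpr hc))
    exact mem_insRowPoints.mpr (Or.inl ⟨hr1, T.root_mem⟩)
  point_cond := by
    rintro ⟨i, j⟩ hij hne
    set r := T.shape.colLen c with hrdef
    have hr1 : 0 < r := by
      rw [hrdef]
      exact YoungDiagram.mem_iff_lt_colLen.mp
        ((YoungDiagram.mem_iff_lt_rowLen.mpr hc))
    rw [mem_insRowPoints] at hij
    rcases hij with ⟨h1, h2⟩ | ⟨h1, h2⟩ | ⟨h1, h2⟩
    · -- old point above inserted row
      have hxor := T.point_cond (i, j) h2 (by simpa using hne)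
      simp only at hxor
      have E1 : (∃ c' < j, (i, c') ∈ insRowPoints T.points r c) ↔
          (∃ c' < j, (i, c') ∈ T.points) := by
        constructor
        · rintro ⟨c', hc', hm⟩
          rw [mem_insRowPoints] at hm
          rcases hm with ⟨-, hm⟩ | ⟨hm, -⟩ | ⟨hm, -⟩
          · exact ⟨c', hc', hm⟩
          · omega
          · omega
        · rintro ⟨c', hc', hm⟩
          exact ⟨c', hc', mem_insRowPoints.mpr (Or.inl ⟨h1, hm⟩)⟩
      have E2 : (∃ r' < i, (r', j) ∈ insRowPoints T.points r c) ↔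
          (∃ r' < i, (r', j) ∈ T.points) := by
        constructor
        · rintro ⟨r', hr', hm⟩
          rw [mem_insRowPoints] at hm
          rcases hm with ⟨-, hm⟩ | ⟨hm, -⟩ | ⟨hm, -⟩
          · exact ⟨r', hr', hm⟩
          · omega
          · omega
        · rintro ⟨r', hr', hm⟩
          exact ⟨r', hr', mem_insRowPoints.mpr (Or.inl ⟨by omega, hm⟩)⟩
      rw [E2, E1]
      exact hxor
    · -- the new point
      have hA : ∃ r' < i, (r', j) ∈ insRowPoints T.points r c := by
        have hm : ((0 : ℕ), j) ∈ T.shape := by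
          rw [h2]
          exact T.shape.up_left_mem (le_refl _) (le_refl _) (YoungDiagram.mem_iff_lt_rowLen.mpr hc)
        obtain ⟨r'', hr''⟩ := T.no_empty_col 0 j ((YoungDiagram.mem_cells _).mpr hm)
        have hlt : r'' < r := by
          have h3 := YoungDiagram.mem_iff_lt_colLen.mp (point_mem_shape hr'')
          rw [h2] at h3
          rw [hrdef]
          exact h3
        exact ⟨r'', by omega, mem_insRowPoints.mpr (Or.inl ⟨hlt, hr''⟩)⟩
      have hB : ¬∃ c' < j, (i, c') ∈ insRowPoints T.points r c := by
        rintro ⟨c', hc', hm⟩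
        rw [mem_insRowPoints] at hm
        rcases hm with ⟨hm, -⟩ | ⟨-, hm⟩ | ⟨hm, -⟩ <;> omega
      exact Or.inl ⟨hA, hB⟩
    · -- old point below inserted row
      have hne' : ((i - 1 : ℕ), j) ≠ ((0 : ℕ), (0 : ℕ)) := by
        intro h
        rw [Prod.ext_iff] at h
        simp only at h
        omega
      have hxor := T.point_cond (i - 1, j) h2 hne'
      simp only at hxor
      have E1 : (∃ c' < j, (i, c') ∈ insRowPoints T.points r c) ↔
          (∃ c' < j, (i - 1, c') ∈ T.points) := by
        constructor
        · rintro ⟨c', hc', hm⟩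
          rw [mem_insRowPoints] at hm
          rcases hm with ⟨hm, -⟩ | ⟨hm, -⟩ | ⟨-, hm⟩
          · omega
          · omega
          · exact ⟨c', hc', hm⟩
        · rintro ⟨c', hc', hm⟩
          exact ⟨c', hc', mem_insRowPoints.mpr (Or.inr (Or.inr ⟨h1, hm⟩))⟩
      have E2 : (∃ r' < i, (r', j) ∈ insRowPoints T.points r c) ↔
          (∃ r' < i - 1, (r', j) ∈ T.points) := by
        constructor
        · rintro ⟨r', hr', hm⟩
          rw [mem_insRowPoints] at hm
          rcases hm with ⟨hm1, hm⟩ | ⟨hm1, hm2⟩ | ⟨hm1, hm⟩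
          · exact ⟨r', by omega, hm⟩
          · -- the new point as a witness: impossible
            exfalso
            have h3 : (i - 1, j) ∈ T.shape := point_mem_shape h2
            rw [YoungDiagram.mem_iff_lt_colLen] at h3
            rw [hm2] at h3
            rw [← hrdef] at h3
            omega
          · exact ⟨r' - 1, by omega, hm⟩
        · rintro ⟨r', hr', hm⟩
          rcases Nat.lt_or_ge r' r with h | h
          · exact ⟨r', by omega, mem_insRowPoints.mpr (Or.inl ⟨h, hm⟩)⟩
          · exact ⟨r' + 1, by omega, mem_insRowPoints.mpr (Or.inr (Or.inr ⟨by omega, by simpa using hm⟩))⟩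
      rw [E2, E1]
      exact hxor
  no_empty_row := by
    intro i j hij
    rw [YoungDiagram.mem_cells] at hij
    have hij' : (i, j) ∈ insRowShape T.shape c := hij
    rw [mem_insRowShape] at hij'
    rcases hij' with ⟨h1, h2⟩ | ⟨h1, h2⟩ | ⟨h1, h2⟩
    · obtain ⟨c', hc'⟩ := T.no_empty_row i j ((YoungDiagram.mem_cells _).mpr h2)
      exact ⟨c', mem_insRowPoints.mpr (Or.inl ⟨h1, hc'⟩)⟩
    · exact ⟨c, mem_insRowPoints.mpr (Or.inr (Or.inl ⟨h1, rfl⟩))⟩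
    · obtain ⟨c', hc'⟩ := T.no_empty_row (i - 1) j ((YoungDiagram.mem_cells _).mpr h2)
      exact ⟨c', mem_insRowPoints.mpr (Or.inr (Or.inr ⟨h1, hc'⟩))⟩
  no_empty_col := by
    intro i j hij
    rw [YoungDiagram.mem_cells] at hij
    have hij' : (i, j) ∈ insRowShape T.shape c := hij
    rw [mem_insRowShape] at hij'
    have hsh : ∃ i', (i', j) ∈ T.shape := by
      rcases hij' with ⟨h1, h2⟩ | ⟨h1, h2⟩ | ⟨h1, h2⟩
      · exact ⟨i, h2⟩
      · refine ⟨0, T.shape.up_left_mem (le_refl _) h2 ?_⟩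
        exact YoungDiagram.mem_iff_lt_rowLen.mpr hc
      · exact ⟨i - 1, h2⟩
    obtain ⟨i', hi'⟩ := hsh
    obtain ⟨r'', hr''⟩ := T.no_empty_col i' j ((YoungDiagram.mem_cells _).mpr hi')
    rcases Nat.lt_or_ge r'' (T.shape.colLen c) with h | h
    · exact ⟨r'', mem_insRowPoints.mpr (Or.inl ⟨h, hr''⟩)⟩
    · exact ⟨r'' + 1, mem_insRowPoints.mpr (Or.inr (Or.inr ⟨by omega, by simpa using hr''⟩))⟩

end Insert
end TLTAux
namespace TLTAux
open TreeLikeTableau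

section Props

variable {T T' : TreeLikeTableau} {r c : ℕ}

lemma size_insRowT (hc : c < cols T') : (insRowT T' c hc).size = T'.size + 1 :=
  card_insRowPoints

lemma shape_insRowT (hc : c < cols T') : (insRowT T' c hc).shape = insRowShape T'.shape c := rfl

lemma points_insRowT (hc : c < cols T') :
    (insRowT T' c hc).points = insRowPoints T'.points (T'.shape.colLen c) c := rfl

lemma corner_insRowT (hc : c < cols T') :
    (T'.shape.colLen c, c) ∈ (insRowT T' c hc).occCorners := by
  rw [mem_occCorners_iff]
  refine ⟨mem_insRowPoints.mpr (Or.inr (Or.inl ⟨rfl, rfl⟩)), ?_, ?_⟩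
  · intro h
    rw [show (insRowT T' c hc).shape = insRowShape T'.shape c from rfl] at h
    rw [mem_insRowShape] at h
    rcases h with ⟨h1, -⟩ | ⟨h1, -⟩ | ⟨-, h2⟩
    · omega
    · omega
    · simp only [Nat.add_sub_cancel] at h2
      rw [YoungDiagram.mem_iff_lt_colLen] at h2
      omega
  · intro h
    rw [show (insRowT T' c hc).shape = insRowShape T'.shape c from rfl] at h
    rw [mem_insRowShape] at h
    rcases h with ⟨h1, -⟩ | ⟨-, h2⟩ | ⟨h1, -⟩ <;> omega

lemma rowOnly_insRowT (hc : c < cols T') :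
    rowOnly (insRowT T' c hc) (T'.shape.colLen c, c) := by
  rintro ⟨i, j⟩ hq hq1
  simp only at hq1
  rw [points_insRowT, mem_insRowPoints] at hq
  rcases hq with ⟨h1, -⟩ | ⟨h1, h2⟩ | ⟨h1, -⟩
  · omega
  · rw [Prod.mk.injEq]; exact ⟨hq1, h2⟩
  · omega

lemma not_colOnly_insRowT (hc : c < cols T') :
    ¬colOnly (insRowT T' c hc) (T'.shape.colLen c, c) := by
  intro h
  obtain ⟨r'', hr''⟩ := T'.no_empty_col 0 c
    ((YoungDiagram.mem_cells _).mpr (YoungDiagram.mem_iff_lt_rowLen.mpr hc))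
  have hlt : r'' < T'.shape.colLen c :=
    YoungDiagram.mem_iff_lt_colLen.mp (point_mem_shape hr'')
  have := h (r'', c) (mem_insRowPoints.mpr (Or.inl ⟨hlt, hr''⟩)) rfl
  rw [Prod.mk.injEq] at this
  omega

lemma rows_insRowT (hc : c < cols T') : rows (insRowT T' c hc) = rows T' + 1 := by
  apply colLen_eq
  intro i
  have hanti : T'.shape.colLen c ≤ T'.shape.colLen 0 :=
    T'.shape.colLen_anti 0 c (Nat.zero_le c)
  rw [show ((insRowT T' c hc).shape : YoungDiagram) = insRowShape T'.shape c from rfl]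
  rw [mem_insRowShape]
  simp only [YoungDiagram.mem_iff_lt_colLen]
  show _ ↔ i < rows T' + 1
  unfold rows
  omega

lemma colLenC_insRowT (hc : c < cols T') :
    (insRowT T' c hc).shape.colLen c = T'.shape.colLen c + 1 := by
  apply colLen_eq
  intro i
  rw [show ((insRowT T' c hc).shape : YoungDiagram) = insRowShape T'.shape c from rfl]
  rw [mem_insRowShape]
  simp only [YoungDiagram.mem_iff_lt_colLen]
  omega

lemma cols_deleteRowT (hp : (r, c) ∈ T.occCorners) (hrow : rowOnly T (r, c))
    (hcol : ¬colOnly T (r, c)) : c < cols (deleteRowT T r c hp hrow hcol) := by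
  have : ((0 : ℕ), c) ∈ (deleteRowT T r c hp hrow hcol).shape := by
    show ((0 : ℕ), c) ∈ delRowShape T.shape r
    rw [mem_delRowShape]
    exact Or.inl ⟨del_r_pos hp hrow hcol,
      T.shape.up_left_mem (Nat.zero_le _) (le_refl _) (point_mem_shape (mem_occCorners_iff.mp hp).1)⟩
  exact YoungDiagram.mem_iff_lt_rowLen.mp this

lemma ins_del (hp : (r, c) ∈ T.occCorners) (hrow : rowOnly T (r, c))
    (hcol : ¬colOnly T (r, c)) :
    insRowT (deleteRowT T r c hp hrow hcol) c (cols_deleteRowT hp hrow hcol) = T := by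
  have hr0 : 0 < r := del_r_pos hp hrow hcol
  have hrc : (deleteRowT T r c hp hrow hcol).shape.colLen c = r := colLenC_deleteRowT hp hrow hcol
  have hcs : ((r : ℕ), c) ∈ T.shape := point_mem_shape (mem_occCorners_iff.mp hp).1
  have hcp : ((r : ℕ), c) ∈ T.points := (mem_occCorners_iff.mp hp).1
  apply tlt_ext
  · ext ⟨i, j⟩
    rw [YoungDiagram.mem_cells, YoungDiagram.mem_cells]
    show (i, j) ∈ insRowShape (delRowShape T.shape r) c ↔ (i, j) ∈ T.shape
    rw [mem_insRowShape]
    rw [show (delRowShape T.shape r).colLen c = r from hrc]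
    constructor
    · rintro (⟨h1, h2⟩ | ⟨h1, h2⟩ | ⟨h1, h2⟩)
      · rw [mem_delRowShape] at h2
        rcases h2 with ⟨-, h2⟩ | ⟨h2, -⟩
        · exact h2
        · omega
      · subst h1
        exact T.shape.up_left_mem (le_refl _) h2 hcs
      · rw [mem_delRowShape] at h2
        rcases h2 with ⟨h2, -⟩ | ⟨-, h2⟩
        · omega
        · rwa [Nat.sub_add_cancel (by omega)] at h2
    · intro h
      rcases Nat.lt_trichotomy i r with h1 | h1 | h1
      · exact Or.inl ⟨h1, mem_delRowShape.mpr (Or.inl ⟨h1, h⟩)⟩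
      · refine Or.inr (Or.inl ⟨h1, ?_⟩)
        by_contra hgt
        push_neg at hgt
        subst h1
        exact no_cell_right hp hgt h
      · refine Or.inr (Or.inr ⟨h1, mem_delRowShape.mpr (Or.inr ⟨by omega, ?_⟩)⟩)
        rwa [Nat.sub_add_cancel (by omega)]
  · ext ⟨i, j⟩
    show (i, j) ∈ insRowPoints (delRow T.points r) ((delRowShape T.shape r).colLen c) c ↔ _
    rw [show (delRowShape T.shape r).colLen c = r from hrc]
    rw [mem_insRowPoints]
    constructor
    · rintro (⟨h1, h2⟩ | ⟨h1, h2⟩ | ⟨h1, h2⟩)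
      · rw [mem_delRow] at h2
        rcases h2 with ⟨-, h2⟩ | ⟨h2, -⟩
        · exact h2
        · omega
      · subst h1; subst h2
        exact hcp
      · rw [mem_delRow] at h2
        rcases h2 with ⟨h2, -⟩ | ⟨-, h2⟩
        · omega
        · rwa [Nat.sub_add_cancel (by omega)] at h2
    · intro h
      rcases Nat.lt_trichotomy i r with h1 | h1 | h1
      · exact Or.inl ⟨h1, mem_delRow.mpr (Or.inl ⟨h1, h⟩)⟩
      · refine Or.inr (Or.inl ⟨h1, ?_⟩)
        have := hrow (i, j) h h1
        rw [Prod.mk.injEq] at this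
        exact this.2
      · refine Or.inr (Or.inr ⟨h1, mem_delRow.mpr (Or.inr ⟨by omega, ?_⟩)⟩)
        rwa [Nat.sub_add_cancel (by omega)]

lemma del_ins (hc : c < cols T') :
    deleteRowT (insRowT T' c hc) (T'.shape.colLen c) c (corner_insRowT hc)
      (rowOnly_insRowT hc) (not_colOnly_insRowT hc) = T' := by
  set r := T'.shape.colLen c with hrdef
  apply tlt_ext
  · ext ⟨i, j⟩
    rw [YoungDiagram.mem_cells, YoungDiagram.mem_cells]
    show (i, j) ∈ delRowShape (insRowShape T'.shape c) r ↔ (i, j) ∈ T'.shape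
    rw [mem_delRowShape]
    constructor
    · rintro (⟨h1, h2⟩ | ⟨h1, h2⟩)
      · rw [mem_insRowShape, ← hrdef] at h2
        rcases h2 with ⟨-, h2⟩ | ⟨h2, -⟩ | ⟨h2, -⟩
        · exact h2
        · omega
        · omega
      · rw [mem_insRowShape, ← hrdef] at h2
        rcases h2 with ⟨h2, -⟩ | ⟨h2, -⟩ | ⟨-, h2⟩
        · omega
        · omega
        · simpa using h2
    · intro h
      rcases Nat.lt_or_ge i r with h1 | h1
      · exact Or.inl ⟨h1, mem_insRowShape.mpr (by rw [← hrdef]; exact Or.inl ⟨h1, h⟩)⟩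
      · exact Or.inr ⟨h1, mem_insRowShape.mpr (by rw [← hrdef]; exact Or.inr (Or.inr ⟨by omega, by simpa using h⟩))⟩
  · ext ⟨i, j⟩
    show (i, j) ∈ delRow (insRowPoints T'.points r c) r ↔ _
    rw [mem_delRow]
    constructor
    · rintro (⟨h1, h2⟩ | ⟨h1, h2⟩)
      · rw [mem_insRowPoints] at h2
        rcases h2 with ⟨-, h2⟩ | ⟨h2, -⟩ | ⟨h2, -⟩
        · exact h2
        · omega
        · omega
      · rw [mem_insRowPoints] at h2
        rcases h2 with ⟨h2, -⟩ | ⟨h2, -⟩ | ⟨-, h2⟩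
        · omega
        · omega
        · simpa using h2
    · intro h
      rcases Nat.lt_or_ge i r with h1 | h1
      · exact Or.inl ⟨h1, mem_insRowPoints.mpr (Or.inl ⟨h1, h⟩)⟩
      · exact Or.inr ⟨h1, mem_insRowPoints.mpr (Or.inr (Or.inr ⟨by omega, by simpa using h⟩))⟩

end Props
end TLTAux
namespace TLTAux
open TreeLikeTableau

lemma rowLen_eq {μ : YoungDiagram} {i k : ℕ} (h : ∀ j, (i, j) ∈ μ ↔ j < k) :
    μ.rowLen i = k := by
  apply le_antisymm
  · by_contra hc
    push_neg at hc
    have : (i, k) ∈ μ := YoungDiagram.mem_iff_lt_rowLen.mpr hc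
    rw [h] at this
    omega
  · rcases Nat.eq_zero_or_pos k with rfl | hk
    · exact Nat.zero_le _
    · have : (i, k - 1) ∈ μ := (h _).mpr (by omega)
      have := YoungDiagram.mem_iff_lt_rowLen.mp this
      omega

variable {T : TreeLikeTableau} {r c : ℕ}

lemma cols_deleteRowT_eq (hp : (r, c) ∈ T.occCorners) (hrow : rowOnly T (r, c))
    (hcol : ¬colOnly T (r, c)) : cols (deleteRowT T r c hp hrow hcol) = cols T := by
  apply rowLen_eq
  intro j
  show (0, j) ∈ delRowShape T.shape r ↔ _
  rw [mem_delRowShape]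
  have hr0 : 0 < r := del_r_pos hp hrow hcol
  rw [YoungDiagram.mem_iff_lt_rowLen, YoungDiagram.mem_iff_lt_rowLen]
  show (0 < r ∧ j < T.shape.rowLen 0) ∨ (r ≤ 0 ∧ j < T.shape.rowLen 1) ↔ j < cols T
  unfold cols
  omega

lemma cols_insRowT_eq {T' : TreeLikeTableau} (hc : c < cols T') :
    cols (insRowT T' c hc) = cols T' := by
  apply rowLen_eq
  intro j
  have hr1 : 0 < T'.shape.colLen c := YoungDiagram.mem_iff_lt_colLen.mp
    (YoungDiagram.mem_iff_lt_rowLen.mpr hc)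
  rw [show ((insRowT T' c hc).shape : YoungDiagram) = insRowShape T'.shape c from rfl]
  rw [mem_insRowShape]
  simp only [YoungDiagram.mem_iff_lt_rowLen]
  unfold cols
  omega

/-- index of the horizontal border edge at the bottom of column `c` -/
def horizIdx (T : TreeLikeTableau) (c : ℕ) : ℕ := rows T - T.shape.colLen c + c + 1

/-- index of the vertical border edge at the right end of row `r` -/
def vertIdx (T : TreeLikeTableau) (r : ℕ) : ℕ := rows T - r + T.shape.rowLen r

lemma colLen_le_rows (T : TreeLikeTableau) (c : ℕ) : T.shape.colLen c ≤ rows T :=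
  T.shape.colLen_anti 0 c (Nat.zero_le c)

lemma rowLen_le_cols (T : TreeLikeTableau) (r : ℕ) : T.shape.rowLen r ≤ cols T :=
  T.shape.rowLen_anti 0 r (Nat.zero_le r)

lemma colLen_pos (hc : c < cols T) : 0 < T.shape.colLen c :=
  YoungDiagram.mem_iff_lt_colLen.mp (YoungDiagram.mem_iff_lt_rowLen.mpr hc)

lemma rowLen_pos (hr : r < rows T) : 0 < T.shape.rowLen r :=
  YoungDiagram.mem_iff_lt_rowLen.mp (YoungDiagram.mem_iff_lt_colLen.mpr hr)

lemma horizIdx_bounds (hc : c < cols T) :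
    1 ≤ horizIdx T c ∧ horizIdx T c ≤ rows T + cols T := by
  have h1 := colLen_le_rows T c
  have h2 := colLen_pos hc
  unfold horizIdx
  omega

lemma vertIdx_bounds (hr : r < rows T) :
    1 ≤ vertIdx T r ∧ vertIdx T r ≤ rows T + cols T := by
  have h1 := rowLen_le_cols T r
  have h2 := rowLen_pos hr
  unfold vertIdx
  omega

lemma horizIdx_inj {c1 c2 : ℕ} (h1 : c1 < cols T) (h2 : c2 < cols T)
    (he : horizIdx T c1 = horizIdx T c2) : c1 = c2 := by
  unfold horizIdx at he
  by_contra hne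
  rcases Nat.lt_or_ge c1 c2 with h | h
  · have := T.shape.colLen_anti c1 c2 (le_of_lt h)
    have := colLen_le_rows T c1
    omega
  · have hlt : c2 < c1 := by omega
    have := T.shape.colLen_anti c2 c1 (le_of_lt hlt)
    have := colLen_le_rows T c2
    omega

lemma vertIdx_inj {r1 r2 : ℕ} (h1 : r1 < rows T) (h2 : r2 < rows T)
    (he : vertIdx T r1 = vertIdx T r2) : r1 = r2 := by
  unfold vertIdx at he
  by_contra hne
  rcases Nat.lt_or_ge r1 r2 with h | h
  · have := T.shape.rowLen_anti r1 r2 (le_of_lt h)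
    have := rowLen_le_cols T r1
    omega
  · have hlt : r2 < r1 := by omega
    have := T.shape.rowLen_anti r2 r1 (le_of_lt hlt)
    have := rowLen_le_cols T r2
    omega

lemma horizIdx_ne_vertIdx (hc : c < cols T) (hr : r < rows T) :
    horizIdx T c ≠ vertIdx T r := by
  have hmem : (r, c) ∈ T.shape ↔ c < T.shape.rowLen r := YoungDiagram.mem_iff_lt_rowLen
  have hmem2 : (r, c) ∈ T.shape ↔ r < T.shape.colLen c := YoungDiagram.mem_iff_lt_colLen
  have hiff : c < T.shape.rowLen r ↔ r < T.shape.colLen c := by rw [← hmem, hmem2]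
  have h1 := colLen_le_rows T c
  unfold horizIdx vertIdx
  omega

lemma edge_cover (T : TreeLikeTableau) {i : ℕ} (h1 : 1 ≤ i) (h2 : i ≤ rows T + cols T) :
    (∃ c < cols T, i = horizIdx T c) ∨ (∃ r < rows T, i = vertIdx T r) := by
  set H := (Finset.range (cols T)).image (horizIdx T) with hH
  set V := (Finset.range (rows T)).image (vertIdx T) with hV
  have cardH : H.card = cols T := by
    rw [hH, Finset.card_image_of_injOn, Finset.card_range]
    intro a ha b hb he
    rw [Finset.coe_range, Set.mem_Iio] at ha hb
    exact horizIdx_inj ha hb he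
  have cardV : V.card = rows T := by
    rw [hV, Finset.card_image_of_injOn, Finset.card_range]
    intro a ha b hb he
    rw [Finset.coe_range, Set.mem_Iio] at ha hb
    exact vertIdx_inj ha hb he
  have hdisj : Disjoint H V := by
    rw [Finset.disjoint_left]
    intro a haH haV
    rw [hH, Finset.mem_image] at haH
    rw [hV, Finset.mem_image] at haV
    obtain ⟨c', hc', rfl⟩ := haH
    obtain ⟨r', hr', he⟩ := haV
    rw [Finset.mem_range] at hc' hr'
    exact horizIdx_ne_vertIdx hc' hr' he.symm
  have hsub : H ∪ V ⊆ Finset.Icc 1 (rows T + cols T) := by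
    intro a ha
    rcases Finset.mem_union.mp ha with h | h
    · rw [hH, Finset.mem_image] at h
      obtain ⟨c', hc', rfl⟩ := h
      rw [Finset.mem_range] at hc'
      obtain ⟨hb1, hb2⟩ := horizIdx_bounds hc'
      exact Finset.mem_Icc.mpr ⟨hb1, hb2⟩
    · rw [hV, Finset.mem_image] at h
      obtain ⟨r', hr', rfl⟩ := h
      rw [Finset.mem_range] at hr'
      obtain ⟨hb1, hb2⟩ := vertIdx_bounds hr'
      exact Finset.mem_Icc.mpr ⟨hb1, hb2⟩
  have hcard : (Finset.Icc 1 (rows T + cols T)).card ≤ (H ∪ V).card := by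
    rw [Finset.card_union_of_disjoint hdisj, cardH, cardV, Nat.card_Icc]
    omega
  have heq : H ∪ V = Finset.Icc 1 (rows T + cols T) :=
    Finset.eq_of_subset_of_card_le hsub hcard
  have hi : i ∈ H ∪ V := by
    rw [heq, Finset.mem_Icc]
    exact ⟨h1, h2⟩
  rcases Finset.mem_union.mp hi with h | h
  · rw [hH, Finset.mem_image] at h
    obtain ⟨c', hc', he⟩ := h
    rw [Finset.mem_range] at hc'
    exact Or.inl ⟨c', hc', he.symm⟩
  · rw [hV, Finset.mem_image] at h
    obtain ⟨r', hr', he⟩ := h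
    rw [Finset.mem_range] at hr'
    exact Or.inr ⟨r', hr', he.symm⟩

lemma deleteRowT_congr {T1 T2 : TreeLikeTableau} (h : T1 = T2) {r c : ℕ}
    (hp1 : (r, c) ∈ T1.occCorners) (hrow1 : rowOnly T1 (r, c)) (hcol1 : ¬colOnly T1 (r, c))
    (hp2 : (r, c) ∈ T2.occCorners) (hrow2 : rowOnly T2 (r, c)) (hcol2 : ¬colOnly T2 (r, c)) :
    deleteRowT T1 r c hp1 hrow1 hcol1 = deleteRowT T2 r c hp2 hrow2 hcol2 := by
  subst h; rfl

lemma insRowT_congr {T1 T2 : TreeLikeTableau} (h : T1 = T2) {c : ℕ}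
    (hc1 : c < cols T1) (hc2 : c < cols T2) :
    insRowT T1 c hc1 = insRowT T2 c hc2 := by
  subst h; rfl

end TLTAux
namespace TLTAux
open TreeLikeTableau

section Maps
attribute [local instance] Classical.propDecidable

variable {T T' : TreeLikeTableau} {r c : ℕ}

lemma not_colOnly_of {p : ℕ × ℕ} (h2 : 2 ≤ T.size) (hp : p ∈ T.occCorners)
    (hr : rowOnly T p) : ¬colOnly T p := by
  rcases corner_dichotomy h2 hp with ⟨-, h⟩ | ⟨-, h⟩
  · exact h
  · exact absurd hr h

lemma colOnly_of {p : ℕ × ℕ} (h2 : 2 ≤ T.size) (hp : p ∈ T.occCorners)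
    (hr : ¬rowOnly T p) : colOnly T p := by
  rcases corner_dichotomy h2 hp with ⟨h, -⟩ | ⟨h, -⟩
  · exact absurd h hr
  · exact h

lemma not_rowOnly_of {p : ℕ × ℕ} (h2 : 2 ≤ T.size) (hp : p ∈ T.occCorners)
    (hc : colOnly T p) : ¬rowOnly T p := by
  rcases corner_dichotomy h2 hp with ⟨-, h⟩ | ⟨-, h⟩
  · exact fun _ => h hc
  · exact h

lemma corner_lt (hp : (r, c) ∈ T.occCorners) : r < rows T ∧ c < cols T := by
  have hm : (r, c) ∈ T.shape := point_mem_shape (mem_occCorners_iff.mp hp).1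
  constructor
  · exact YoungDiagram.mem_iff_lt_colLen.mp (T.shape.up_left_mem (le_refl _) (Nat.zero_le _) hm)
  · exact YoungDiagram.mem_iff_lt_rowLen.mp (T.shape.up_left_mem (Nat.zero_le _) (le_refl _) hm)

lemma tr_corner (hp : (r, c) ∈ T.occCorners) : (c, r) ∈ (tr T).occCorners :=
  mem_tr_occCorners.mpr hp

/-- the forward map: delete the row or column of the occupied corner -/
noncomputable def Fmap (T : TreeLikeTableau) (r c : ℕ) (h2 : 2 ≤ T.size)
    (hp : (r, c) ∈ T.occCorners) : TreeLikeTableau × ℕ :=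
  if hr : rowOnly T (r, c) then
    (deleteRowT T r c hp hr (not_colOnly_of h2 hp hr), rows T - r + c)
  else
    (tr (deleteRowT (tr T) c r (tr_corner hp)
      (rowOnly_tr.mpr (colOnly_of h2 hp hr))
      (fun h => hr (colOnly_tr.mp h))), rows T - r + c)

/-- the backward map: insert a row or column at border edge `i` -/
noncomputable def Gmap (T' : TreeLikeTableau) (i : ℕ) : TreeLikeTableau × (ℕ × ℕ) :=
  if hc : ∃ c', c' < cols T' ∧ i = horizIdx T' c' then
    (insRowT T' hc.choose hc.choose_spec.1, (T'.shape.colLen hc.choose, hc.choose))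
  else if hv : ∃ r', r' < rows T' ∧ i = vertIdx T' r' then
    (tr (insRowT (tr T') hv.choose (by rw [cols_tr]; exact hv.choose_spec.1)),
      (hv.choose, (tr T').shape.colLen hv.choose))
  else (T', (0, 0))

lemma Fmap_congr {x y : TreeLikeTableau × (ℕ × ℕ)} (h : x = y)
    (h2x : 2 ≤ x.1.size) (hpx : (x.2.1, x.2.2) ∈ x.1.occCorners)
    (h2y : 2 ≤ y.1.size) (hpy : (y.2.1, y.2.2) ∈ y.1.occCorners) :
    Fmap x.1 x.2.1 x.2.2 h2x hpx = Fmap y.1 y.2.1 y.2.2 h2y hpy := by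
  subst h; rfl

lemma insRowT_congr' {c1 c2 : ℕ} (h : c1 = c2) (h1 : c1 < cols T') (h2 : c2 < cols T') :
    insRowT T' c1 h1 = insRowT T' c2 h2 := by
  subst h; rfl

lemma Fmap_snd (h2 : 2 ≤ T.size) (hp : (r, c) ∈ T.occCorners) :
    (Fmap T r c h2 hp).2 = rows T - r + c := by
  unfold Fmap
  split <;> rfl

lemma Fmap_size (h2 : 2 ≤ T.size) (hp : (r, c) ∈ T.occCorners) :
    (Fmap T r c h2 hp).1.size + 1 = T.size := by
  unfold Fmap
  by_cases hr : rowOnly T (r, c)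
  · rw [dif_pos hr]
    exact size_deleteRowT hp hr (not_colOnly_of h2 hp hr)
  · rw [dif_neg hr]
    show (tr _).size + 1 = T.size
    rw [size_tr]
    have h := size_deleteRowT (tr_corner hp) (rowOnly_tr.mpr (colOnly_of h2 hp hr))
      (fun h => hr (colOnly_tr.mp h))
    rw [size_tr] at h
    exact h

lemma Fmap_idx (h2 : 2 ≤ T.size) (hp : (r, c) ∈ T.occCorners) :
    1 ≤ (Fmap T r c h2 hp).2 ∧ (Fmap T r c h2 hp).2 ≤ T.size := by
  rw [Fmap_snd]
  obtain ⟨h1, hc1⟩ := corner_lt hp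
  have := rows_add_cols T
  omega

lemma Gmap_props {i : ℕ} (hs : 1 ≤ T'.size) (hi1 : 1 ≤ i) (hi2 : i ≤ T'.size + 1) :
    (Gmap T' i).1.size = T'.size + 1 ∧ ((Gmap T' i).2.1, (Gmap T' i).2.2) ∈ (Gmap T' i).1.occCorners := by
  have hcover := edge_cover T' (i := i) hi1 (by rw [rows_add_cols]; omega)
  unfold Gmap
  by_cases hc : ∃ c', c' < cols T' ∧ i = horizIdx T' c'
  · rw [dif_pos hc]
    exact ⟨size_insRowT hc.choose_spec.1, corner_insRowT hc.choose_spec.1⟩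
  · rw [dif_neg hc]
    have hv : ∃ r', r' < rows T' ∧ i = vertIdx T' r' := by
      rcases hcover with h | h
      · exact absurd h hc
      · exact h
    rw [dif_pos hv]
    constructor
    · show (tr _).size = T'.size + 1
      rw [size_tr]
      have h := size_insRowT (T' := tr T') (c := hv.choose)
        (by rw [cols_tr]; exact hv.choose_spec.1)
      rw [size_tr] at h
      exact h
    · show (_, _) ∈ (tr _).occCorners
      rw [mem_tr_occCorners]
      exact corner_insRowT _

lemma Gmap_cases {i : ℕ} (hs : 1 ≤ T'.size) (hi1 : 1 ≤ i) (hi2 : i ≤ T'.size + 1) :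
    (∃ c, ∃ hcc : c < cols T',
      Gmap T' i = (insRowT T' c hcc, (T'.shape.colLen c, c)) ∧ i = horizIdx T' c) ∨
    (∃ r, ∃ hrr : r < rows T',
      Gmap T' i = (tr (insRowT (tr T') r (by rw [cols_tr]; exact hrr)),
        (r, (tr T').shape.colLen r)) ∧ i = vertIdx T' r) := by
  have hcover := edge_cover T' (i := i) hi1 (by rw [rows_add_cols]; omega)
  by_cases hc : ∃ c', c' < cols T' ∧ i = horizIdx T' c'
  · refine Or.inl ⟨hc.choose, hc.choose_spec.1, ?_, hc.choose_spec.2⟩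
    unfold Gmap
    rw [dif_pos hc]
  · have hv : ∃ r', r' < rows T' ∧ i = vertIdx T' r' := by
      rcases hcover with h | h
      · exact absurd h hc
      · exact h
    refine Or.inr ⟨hv.choose, hv.choose_spec.1, ?_, hv.choose_spec.2⟩
    unfold Gmap
    rw [dif_neg hc, dif_pos hv]

lemma Gmap_colcase (h2 : 2 ≤ T.size) (hp : (r, c) ∈ T.occCorners)
    (hpT : (c, r) ∈ (tr T).occCorners) (hrowT : rowOnly (tr T) (c, r))
    (hcolT : ¬colOnly (tr T) (c, r)) :
    Gmap (tr (deleteRowT (tr T) c r hpT hrowT hcolT)) (rows T - r + c) = (T, (r, c)) := by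
  obtain ⟨hrlt, hclt⟩ := corner_lt hp
  set S := deleteRowT (tr T) c r hpT hrowT hcolT with hS
  have h1 : rows (tr S) = rows T := by
    rw [rows_tr, hS, cols_deleteRowT_eq hpT hrowT hcolT, cols_tr]
  have h2' : (tr S).shape.rowLen r = c := by
    show (S.shape.transpose).rowLen r = c
    rw [YoungDiagram.rowLen_transpose]
    exact colLenC_deleteRowT hpT hrowT hcolT
  have hvi : rows T - r + c = vertIdx (tr S) r := by
    unfold vertIdx
    rw [h1, h2']
  have hrS : r < rows (tr S) := by rw [h1]; exact hrlt
  have hnc : ¬∃ c', c' < cols (tr S) ∧ rows T - r + c = horizIdx (tr S) c' := by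
    rintro ⟨c', hc', he⟩
    exact horizIdx_ne_vertIdx hc' hrS (he.symm.trans hvi)
  have hv : ∃ r', r' < rows (tr S) ∧ rows T - r + c = vertIdx (tr S) r' := ⟨r, hrS, hvi⟩
  unfold Gmap
  rw [dif_neg hnc, dif_pos hv]
  have hch : hv.choose = r :=
    vertIdx_inj hv.choose_spec.1 hrS (hv.choose_spec.2.symm.trans hvi)
  have hrcols : r < cols S := by
    rw [hS, cols_deleteRowT_eq hpT hrowT hcolT, cols_tr]
    exact hrlt
  simp only [Prod.mk.injEq]
  refine ⟨?_, hch, ?_⟩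
  · have e1 : insRowT (tr (tr S)) hv.choose
        (by rw [cols_tr]; exact hv.choose_spec.1) = tr T :=
      ((insRowT_congr (tr_tr S) _ (by rw [← hch] at hrcols; exact hrcols)).trans
        (insRowT_congr' hch _ hrcols)).trans (ins_del hpT hrowT hcolT)
    exact (congrArg tr e1).trans (tr_tr T)
  · rw [tr_tr, hch]
    exact colLenC_deleteRowT hpT hrowT hcolT

lemma Gmap_Fmap (h2 : 2 ≤ T.size) (hp : (r, c) ∈ T.occCorners) :
    Gmap (Fmap T r c h2 hp).1 (Fmap T r c h2 hp).2 = (T, (r, c)) := by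
  obtain ⟨hrlt, hclt⟩ := corner_lt hp
  unfold Fmap
  by_cases hr : rowOnly T (r, c)
  · rw [dif_pos hr]
    simp only
    set hcol := not_colOnly_of h2 hp hr with hcoldef
    set T' := deleteRowT T r c hp hr hcol with hT'
    have hcc : c < cols T' := cols_deleteRowT hp hr hcol
    have hrowsT' : rows T' + 1 = rows T := colLen0_deleteRowT hp hr hcol
    have hcolc : T'.shape.colLen c = r := colLenC_deleteRowT hp hr hcol
    have hclr : T'.shape.colLen c ≤ rows T' := colLen_le_rows T' c
    have hii : rows T - r + c = horizIdx T' c := by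
      unfold horizIdx
      rw [hcolc]
      omega
    have hex : ∃ c', c' < cols T' ∧ rows T - r + c = horizIdx T' c' := ⟨c, hcc, hii⟩
    unfold Gmap
    rw [dif_pos hex]
    have hch : hex.choose = c :=
      horizIdx_inj hex.choose_spec.1 hcc (hex.choose_spec.2.symm.trans hii)
    simp only [Prod.mk.injEq]
    refine ⟨?_, ?_, hch⟩
    · exact (insRowT_congr' hch hex.choose_spec.1 hcc).trans (ins_del hp hr hcol)
    · rw [hch]
      exact hcolc
  · rw [dif_neg hr]
    simp only
    exact Gmap_colcase h2 hp _ _ _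

lemma Fmap_rowins (T' : TreeLikeTableau) (c : ℕ) (hcc : c < cols T')
    (h2 : 2 ≤ (insRowT T' c hcc).size)
    (hp : (T'.shape.colLen c, c) ∈ (insRowT T' c hcc).occCorners) :
    Fmap (insRowT T' c hcc) (T'.shape.colLen c) c h2 hp = (T', horizIdx T' c) := by
  unfold Fmap
  rw [dif_pos (rowOnly_insRowT hcc)]
  simp only [Prod.mk.injEq]
  constructor
  · exact del_ins hcc
  · have hrows : rows (insRowT T' c hcc) = rows T' + 1 := rows_insRowT hcc
    have hle : T'.shape.colLen c ≤ rows T' := colLen_le_rows T' c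
    unfold horizIdx
    omega

lemma Fmap_colins (T' : TreeLikeTableau) (r : ℕ) (hrr : r < cols (tr T'))
    (h2 : 2 ≤ (tr (insRowT (tr T') r hrr)).size)
    (hp : (r, (tr T').shape.colLen r) ∈ (tr (insRowT (tr T') r hrr)).occCorners) :
    Fmap (tr (insRowT (tr T') r hrr)) r ((tr T').shape.colLen r) h2 hp = (T', vertIdx T' r) := by
  set S := insRowT (tr T') r hrr with hSdef
  have hcol : colOnly (tr S) (r, (tr T').shape.colLen r) :=
    colOnly_tr.mpr (rowOnly_insRowT hrr)
  have hnrow : ¬rowOnly (tr S) (r, (tr T').shape.colLen r) := not_rowOnly_of h2 hp hcol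
  unfold Fmap
  rw [dif_neg hnrow]
  simp only [Prod.mk.injEq]
  constructor
  · have e1 : deleteRowT (tr (tr S)) ((tr T').shape.colLen r) r
        (tr_corner hp) (rowOnly_tr.mpr (colOnly_of h2 hp hnrow))
        (fun h => hnrow (colOnly_tr.mp h)) = tr T' :=
      (deleteRowT_congr (tr_tr S) _ _ _ (corner_insRowT hrr) (rowOnly_insRowT hrr)
        (not_colOnly_insRowT hrr)).trans (del_ins hrr)
    exact (congrArg tr e1).trans (tr_tr T')
  · have hrows : rows (tr S) = rows T' := by
      rw [rows_tr, hSdef, cols_insRowT_eq hrr, cols_tr]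
    have hlen : (tr T').shape.colLen r = T'.shape.rowLen r := by
      show (T'.shape.transpose).colLen r = _
      rw [YoungDiagram.colLen_transpose]
    unfold vertIdx
    rw [hrows, hlen]

end Maps
end TLTAux
namespace TLTAux
open TreeLikeTableau

section Maps2
attribute [local instance] Classical.propDecidable

lemma Fmap_prop {T : TreeLikeTableau} {r c n : ℕ} (hn : 2 ≤ n) (hT : T.size = n)
    (h2 : 2 ≤ T.size) (hp : (r, c) ∈ T.occCorners) :
    (Fmap T r c h2 hp).1.size = n - 1 ∧ (Fmap T r c h2 hp).2 ∈ Finset.Icc 1 n := by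
  have hsz := Fmap_size h2 hp
  have hidx := Fmap_idx h2 hp
  rw [hT] at hsz hidx
  exact ⟨by omega, Finset.mem_Icc.mpr ⟨hidx.1, hidx.2⟩⟩

lemma Gmap_prop {T' : TreeLikeTableau} {i n : ℕ} (hn : 2 ≤ n) (hT : T'.size = n - 1)
    (hi : i ∈ Finset.Icc 1 n) :
    (Gmap T' i).1.size = n ∧ (Gmap T' i).2 ∈ (Gmap T' i).1.occCorners := by
  rw [Finset.mem_Icc] at hi
  have hs : 1 ≤ T'.size := by omega
  have h := Gmap_props hs hi.1 (by omega)
  refine ⟨by have := h.1; omega, h.2⟩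

lemma FG (n : ℕ) (hn : 2 ≤ n) (T' : TreeLikeTableau) (i : ℕ) (hT : T'.size = n - 1)
    (hi : i ∈ Finset.Icc 1 n)
    (h2 : 2 ≤ (Gmap T' i).1.size)
    (hp : ((Gmap T' i).2.1, (Gmap T' i).2.2) ∈ (Gmap T' i).1.occCorners) :
    Fmap (Gmap T' i).1 (Gmap T' i).2.1 (Gmap T' i).2.2 h2 hp = (T', i) := by
  rw [Finset.mem_Icc] at hi
  have hs : 1 ≤ T'.size := by omega
  have hi2 : i ≤ T'.size + 1 := by omega
  rcases Gmap_cases hs hi.1 hi2 with ⟨c, hcc, hGeq, hieq⟩ | ⟨r, hrr, hGeq, hieq⟩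
  · have h2y : 2 ≤ (insRowT T' c hcc).size := by
      rw [size_insRowT hcc]
      omega
    have hpy := corner_insRowT hcc
    exact (Fmap_congr hGeq _ _ h2y hpy).trans
      ((Fmap_rowins T' c hcc h2y hpy).trans (by rw [← hieq]))
  · have hrr2 : r < cols (tr T') := by
      rw [cols_tr]; exact hrr
    have h2y : 2 ≤ (tr (insRowT (tr T') r hrr2)).size := by
      rw [size_tr, size_insRowT hrr2, size_tr]
      omega
    have hpy : (r, (tr T').shape.colLen r) ∈ (tr (insRowT (tr T') r hrr2)).occCorners :=
      mem_tr_occCorners.mpr (corner_insRowT hrr2)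
    exact (Fmap_congr hGeq _ _ h2y hpy).trans
      ((Fmap_colins T' r hrr2 h2y hpy).trans (by rw [← hieq]))

end Maps2
end TLTAux
/-- There is a bijection between pairs `(T, occupied corner of T)` with `T` a
tree-like tableau of size `n`, and pairs `(T', i)` with `T'` a tree-like
tableau of size `n - 1` and `i ∈ {1, …, n}`. -/
theorem occupied_corners_bijection (n : ℕ) (hn : 2 ≤ n) :
    Nonempty
      ({x : TreeLikeTableau × (ℕ × ℕ) // x.1.size = n ∧ x.2 ∈ x.1.occCorners} ≃
       {y : TreeLikeTableau × ℕ // y.1.size = n - 1 ∧ y.2 ∈ Finset.Icc 1 n}) := by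
  classical
  refine ⟨{
    toFun := fun x =>
      ⟨TLTAux.Fmap x.1.1 x.1.2.1 x.1.2.2 (x.2.1.symm ▸ hn) x.2.2,
        TLTAux.Fmap_prop hn x.2.1 (x.2.1.symm ▸ hn) x.2.2⟩
    invFun := fun y =>
      ⟨TLTAux.Gmap y.1.1 y.1.2, TLTAux.Gmap_prop hn y.2.1 y.2.2⟩
    left_inv := fun x => Subtype.ext (TLTAux.Gmap_Fmap (x.2.1.symm ▸ hn) x.2.2)
    right_inv := fun y => by
      have hgp := TLTAux.Gmap_prop (T' := y.1.1) (i := y.1.2) hn y.2.1 y.2.2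
      exact Subtype.ext (TLTAux.FG n hn y.1.1 y.1.2 y.2.1 y.2.2
        (by rw [hgp.1]; exact hn) hgp.2) }⟩
end

section
/- For n ≥ 2 and k ≥ 1, the number a_{n,k} of tree-like tableaux of size n with exactly k occupied corners satisfies the recurrence k·a_{n,k} = 2k·a_{n-1,k} + (n - 2(k-1))·a_{n-1,k-1}. -/
open Polynomial

/-- `a n k` is the number of tree-like tableaux of size `n` with exactly `k`
occupied corners. -/
noncomputable def a (n k : ℕ) : ℕ :=
  Set.ncard {T : TreeLikeTableau | T.size = n ∧ T.oc = k}

attribute [local instance] Classical.propDecidable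

namespace TreeLikeTableau

lemma ext' {S T : TreeLikeTableau} (h1 : S.shape = T.shape) (h2 : S.points = T.points) :
    S = T := by
  cases S; cases T; simp_all

/-- Transpose of a tree-like tableau. -/
def tr (T : TreeLikeTableau) : TreeLikeTableau where
  shape := T.shape.transpose
  points := T.points.image Prod.swap
  points_subset := by
    intro p hp
    simp only [Finset.mem_image] at hp
    obtain ⟨q, hq, rfl⟩ := hp
    have := T.points_subset hq
    rw [YoungDiagram.mem_cells] at this ⊢
    rw [YoungDiagram.mem_transpose]
    simpa using this
  root_mem := by
    refine Finset.mem_image.2 ⟨(0,0), T.root_mem, rfl⟩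
  point_cond := by
    intro p hp hne
    simp only [Finset.mem_image] at hp
    obtain ⟨q, hq, rfl⟩ := hp
    have hqne : q ≠ (0,0) := by
      intro h; apply hne; rw [h]; rfl
    have H := T.point_cond q hq hqne
    have h1 : (∃ r < q.swap.1, (r, q.swap.2) ∈ T.points.image Prod.swap) ↔
        (∃ c < q.2, (q.1, c) ∈ T.points) := by
      constructor
      · rintro ⟨r, hr, hmem⟩
        simp only [Finset.mem_image] at hmem
        obtain ⟨u, hu, hswap⟩ := hmem
        refine ⟨r, hr, ?_⟩
        have : u = (q.1, r) := by
          have := congrArg Prod.swap hswap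
          simpa [Prod.swap] using this
        rwa [this] at hu
      · rintro ⟨c, hc, hmem⟩
        exact ⟨c, hc, Finset.mem_image.2 ⟨(q.1, c), hmem, rfl⟩⟩
    have h2 : (∃ c < q.swap.2, (q.swap.1, c) ∈ T.points.image Prod.swap) ↔
        (∃ r < q.1, (r, q.2) ∈ T.points) := by
      constructor
      · rintro ⟨c, hc, hmem⟩
        simp only [Finset.mem_image] at hmem
        obtain ⟨u, hu, hswap⟩ := hmem
        refine ⟨c, hc, ?_⟩
        have : u = (c, q.2) := by
          have := congrArg Prod.swap hswap
          simpa [Prod.swap] using this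
        rwa [this] at hu
      · rintro ⟨r, hr, hmem⟩
        exact ⟨r, hr, Finset.mem_image.2 ⟨(r, q.2), hmem, rfl⟩⟩
    rcases H with ⟨hA, hB⟩ | ⟨hB, hA⟩
    · exact Or.inr ⟨h2.mpr hA, fun hX => hB (h1.mp hX)⟩
    · exact Or.inl ⟨h1.mpr hB, fun hY => hA (h2.mp hY)⟩
  no_empty_row := by
    intro i j h
    rw [YoungDiagram.mem_cells, YoungDiagram.mem_transpose] at h
    obtain ⟨r, hr⟩ := T.no_empty_col j i (by rwa [YoungDiagram.mem_cells])
    exact ⟨r, Finset.mem_image.2 ⟨(r, i), hr, rfl⟩⟩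
  no_empty_col := by
    intro i j h
    rw [YoungDiagram.mem_cells, YoungDiagram.mem_transpose] at h
    obtain ⟨c, hc⟩ := T.no_empty_row j i (by rwa [YoungDiagram.mem_cells])
    exact ⟨c, Finset.mem_image.2 ⟨(j, c), hc, rfl⟩⟩

lemma tr_points (T : TreeLikeTableau) : T.tr.points = T.points.image Prod.swap := rfl

lemma mem_tr_points {T : TreeLikeTableau} {p : ℕ × ℕ} :
    p ∈ T.tr.points ↔ p.swap ∈ T.points := by
  simp only [tr_points, Finset.mem_image]
  constructor
  · rintro ⟨q, hq, rfl⟩; simpa using hq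
  · intro h; exact ⟨p.swap, h, by simp⟩

lemma mem_tr_shape {T : TreeLikeTableau} {p : ℕ × ℕ} :
    p ∈ T.tr.shape.cells ↔ p.swap ∈ T.shape.cells := by
  simp only [YoungDiagram.mem_cells]
  exact YoungDiagram.mem_transpose

lemma tr_tr (T : TreeLikeTableau) : T.tr.tr = T := by
  apply ext'
  · exact YoungDiagram.transpose_transpose _
  · rw [tr_points, tr_points, Finset.image_image]
    simp

lemma size_tr (T : TreeLikeTableau) : T.tr.size = T.size := by
  rw [size, size, tr_points, Finset.card_image_of_injective _ Prod.swap_injective]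

lemma occCorners_tr (T : TreeLikeTableau) :
    T.tr.occCorners = T.occCorners.image Prod.swap := by
  ext p
  simp only [occCorners, Finset.mem_filter, Finset.mem_image]
  constructor
  · rintro ⟨hp, h1, h2⟩
    rw [mem_tr_points] at hp
    refine ⟨p.swap, ⟨hp, ?_, ?_⟩, by simp⟩
    · intro h; exact h2 (by rw [mem_tr_shape]; simpa using h)
    · intro h; exact h1 (by rw [mem_tr_shape]; simpa using h)
  · rintro ⟨q, ⟨hq, h1, h2⟩, rfl⟩
    refine ⟨mem_tr_points.2 (by simpa using hq), ?_, ?_⟩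
    · intro h; rw [mem_tr_shape] at h; exact h2 (by simpa using h)
    · intro h; rw [mem_tr_shape] at h; exact h1 (by simpa using h)

lemma oc_tr (T : TreeLikeTableau) : T.tr.oc = T.oc := by
  rw [oc, oc, occCorners_tr, Finset.card_image_of_injective _ Prod.swap_injective]

lemma mem_occCorners {T : TreeLikeTableau} {p : ℕ × ℕ} :
    p ∈ T.occCorners ↔ p ∈ T.points ∧ (p.1 + 1, p.2) ∉ T.shape.cells ∧
      (p.1, p.2 + 1) ∉ T.shape.cells := by
  simp [occCorners, Finset.mem_filter]

end TreeLikeTableau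
namespace TreeLikeTableau

lemma xor_congr {a b a' b' : Prop} (ha : a ↔ a') (hb : b ↔ b') (h : Xor' a b) :
    Xor' a' b' := by
  rw [Xor'] at h ⊢; rw [← ha, ← hb]; exact h

lemma cells_lower {Y : YoungDiagram} {i1 i2 j1 j2 : ℕ} (hi : i1 ≤ i2) (hj : j1 ≤ j2)
    (h : (i2, j2) ∈ Y.cells) : (i1, j1) ∈ Y.cells := by
  rw [YoungDiagram.mem_cells] at h ⊢
  exact Y.up_left_mem hi hj h

/-- Row-shift: rows `> i` are pushed down by one. -/
def shiftR (i : ℕ) (q : ℕ × ℕ) : ℕ × ℕ := if q.1 ≤ i then q else (q.1 + 1, q.2)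

lemma shiftR_injective (i : ℕ) : Function.Injective (shiftR i) := by
  intro q1 q2 h
  unfold shiftR at h
  split_ifs at h with h1 h2 h2
  · exact h
  · exfalso
    have : q1.1 = q2.1 + 1 := by rw [h]
    omega
  · exfalso
    have : q1.1 + 1 = q2.1 := by rw [← h]
    omega
  · have : q1.1 = q2.1 := by
      have := congrArg Prod.fst h; simpa using this
    have h2' := congrArg Prod.snd h
    simp only at h2'
    exact Prod.ext this h2'

lemma mem_image_shiftR {S : Finset (ℕ × ℕ)} {i : ℕ} {q : ℕ × ℕ} :
    q ∈ S.image (shiftR i) ↔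
      (q.1 ≤ i ∧ q ∈ S) ∨ (i + 2 ≤ q.1 ∧ (q.1 - 1, q.2) ∈ S) := by
  simp only [Finset.mem_image]
  constructor
  · rintro ⟨u, hu, rfl⟩
    by_cases h : u.1 ≤ i
    · left; exact ⟨by simp [shiftR, h], by simpa [shiftR, h] using hu⟩
    · right
      simp only [shiftR, if_neg h]
      exact ⟨by omega, by simpa using hu⟩
  · rintro (⟨h1, h2⟩ | ⟨h1, h2⟩)
    · exact ⟨q, h2, by simp [shiftR, h1]⟩
    · refine ⟨(q.1 - 1, q.2), h2, ?_⟩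
      simp only [shiftR]
      rw [if_neg (by omega)]
      have : q.1 - 1 + 1 = q.1 := by omega
      simp [this]

/-- Cells of the shape obtained by inserting a new row of length `c+1` after row `i`. -/
def insCells (S : Finset (ℕ × ℕ)) (i c : ℕ) : Finset (ℕ × ℕ) :=
  S.image (shiftR i) ∪ (Finset.range (c + 1)).image (fun c' => (i + 1, c'))

lemma mem_insCells {S : Finset (ℕ × ℕ)} {i c : ℕ} {q : ℕ × ℕ} :
    q ∈ insCells S i c ↔
      (q.1 ≤ i ∧ q ∈ S) ∨ (q.1 = i + 1 ∧ q.2 ≤ c) ∨ (i + 2 ≤ q.1 ∧ (q.1 - 1, q.2) ∈ S) := by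
  unfold insCells
  rw [Finset.mem_union, mem_image_shiftR]
  simp only [Finset.mem_image, Finset.mem_range]
  constructor
  · rintro ((h | h) | ⟨c', hc', rfl⟩)
    · exact Or.inl h
    · exact Or.inr (Or.inr h)
    · exact Or.inr (Or.inl ⟨rfl, by omega⟩)
  · rintro (h | ⟨h1, h2⟩ | h)
    · exact Or.inl (Or.inl h)
    · right
      exact ⟨q.2, by omega, by rw [← h1]⟩
    · exact Or.inl (Or.inr h)

/-- Points after inserting a new row after row `i` with a single point in column `c`. -/
def insPts (P : Finset (ℕ × ℕ)) (i c : ℕ) : Finset (ℕ × ℕ) :=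
  insert (i + 1, c) (P.image (shiftR i))

lemma mem_insPts {P : Finset (ℕ × ℕ)} {i c : ℕ} {q : ℕ × ℕ} :
    q ∈ insPts P i c ↔
      q = (i + 1, c) ∨ (q.1 ≤ i ∧ q ∈ P) ∨ (i + 2 ≤ q.1 ∧ (q.1 - 1, q.2) ∈ P) := by
  unfold insPts
  rw [Finset.mem_insert, mem_image_shiftR]

/-- The shape with a new row of length `c+1` inserted after row `i`. -/
def insShape (Y : YoungDiagram) (i c : ℕ) (h1 : (i, c) ∈ Y.cells) (h2 : (i + 1, c) ∉ Y.cells) :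
    YoungDiagram where
  cells := insCells Y.cells i c
  isLowerSet := by
    rintro ⟨a1, a2⟩ ⟨b1, b2⟩ hba ha
    simp only [Finset.mem_coe] at ha ⊢
    rw [mem_insCells] at ha ⊢
    obtain ⟨hb1, hb2⟩ : b1 ≤ a1 ∧ b2 ≤ a2 := Prod.mk_le_mk.1 hba
    simp only at *
    rcases ha with ⟨ha1, ha⟩ | ⟨ha1, ha2⟩ | ⟨ha1, ha⟩
    · exact Or.inl ⟨le_trans hb1 ha1, cells_lower hb1 hb2 ha⟩
    · -- a1 = i+1, a2 ≤ c
      rcases Nat.lt_or_ge b1 (i + 1) with hb | hb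
      · left
        refine ⟨by omega, ?_⟩
        exact cells_lower (by omega) (le_trans hb2 ha2) h1
      · right; left
        exact ⟨by omega, le_trans hb2 ha2⟩
    · rcases Nat.lt_or_ge b1 (i + 1) with hb | hb
      · left
        refine ⟨by omega, ?_⟩
        exact cells_lower (by omega) hb2 ha
      · rcases Nat.eq_or_lt_of_le hb with hb' | hb'
        · right; left
          refine ⟨by omega, ?_⟩
          -- need b2 ≤ c : (a1-1, a2) ∈ Y with a1-1 ≥ i+1 ; if b2 > c then (i+1,c) ∈ Y
          by_contra hbc
          apply h2
          exact cells_lower (by omega) (by omega) ha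
        · right; right
          refine ⟨by omega, ?_⟩
          exact cells_lower (by omega) hb2 ha

lemma mem_insShape {Y : YoungDiagram} {i c : ℕ} {h1 : (i, c) ∈ Y.cells}
    {h2 : (i + 1, c) ∉ Y.cells} {q : ℕ × ℕ} :
    q ∈ (insShape Y i c h1 h2).cells ↔
      (q.1 ≤ i ∧ q ∈ Y.cells) ∨ (q.1 = i + 1 ∧ q.2 ≤ c) ∨
        (i + 2 ≤ q.1 ∧ (q.1 - 1, q.2) ∈ Y.cells) :=
  mem_insCells

end TreeLikeTableau
namespace TreeLikeTableau

section RowIns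

variable (T : TreeLikeTableau) (i c : ℕ)
  (h1 : (i, c) ∈ T.shape.cells) (h2 : (i + 1, c) ∉ T.shape.cells)

/-- Insert after row `i` a new row of length `c+1` with one point, in column `c`.
Valid when `(i,c)` is the bottom cell of column `c`. -/
def rowInsAux : TreeLikeTableau where
  shape := insShape T.shape i c h1 h2
  points := insPts T.points i c
  points_subset := by
    intro q hq
    rw [mem_insPts] at hq
    rw [mem_insShape]
    rcases hq with rfl | ⟨hqi, hqP⟩ | ⟨hqi, hqP⟩
    · exact Or.inr (Or.inl ⟨rfl, le_refl c⟩)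
    · exact Or.inl ⟨hqi, T.points_subset hqP⟩
    · exact Or.inr (Or.inr ⟨hqi, T.points_subset hqP⟩)
  root_mem := by
    rw [mem_insPts]
    exact Or.inr (Or.inl ⟨Nat.zero_le i, T.root_mem⟩)
  point_cond := by
    intro p hp hne
    rw [mem_insPts] at hp
    rcases hp with rfl | ⟨hpi, hpP⟩ | ⟨hpi, hpP⟩
    · -- the new point
      refine Or.inl ⟨?_, ?_⟩
      · obtain ⟨r₀, hr₀⟩ := T.no_empty_col i c h1
        have hr₀i : r₀ ≤ i := by
          by_contra hcon
          exact h2 (cells_lower (by omega) le_rfl (T.points_subset hr₀))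
        exact ⟨r₀, by omega, mem_insPts.2 (Or.inr (Or.inl ⟨hr₀i, hr₀⟩))⟩
      · rintro ⟨c', hc', hmem⟩
        rw [mem_insPts] at hmem
        rcases hmem with heq | ⟨hh, _⟩ | ⟨hh, _⟩
        · have : c' = c := by
            have := congrArg Prod.snd heq; simpa using this
          omega
        · simp at hh
        · simp at hh
    · -- kept point
      have H := T.point_cond p hpP hne
      refine xor_congr (Iff.symm ?_) (Iff.symm ?_) H
      · constructor
        · rintro ⟨r, hr, hmem⟩
          rw [mem_insPts] at hmem
          rcases hmem with heq | ⟨_, hP⟩ | ⟨hh, _⟩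
          · exfalso
            have : r = i + 1 := by
              have := congrArg Prod.fst heq; simpa using this
            omega
          · exact ⟨r, hr, hP⟩
          · exfalso; simp only at hh; omega
        · rintro ⟨r, hr, hP⟩
          exact ⟨r, hr, mem_insPts.2 (Or.inr (Or.inl ⟨by simp only; omega, hP⟩))⟩
      · constructor
        · rintro ⟨c', hc', hmem⟩
          rw [mem_insPts] at hmem
          rcases hmem with heq | ⟨_, hP⟩ | ⟨hh, _⟩
          · exfalso
            have : p.1 = i + 1 := by
              have := congrArg Prod.fst heq; simpa using this
            omega
          · exact ⟨c', hc', hP⟩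
          · exfalso; simp only at hh; omega
        · rintro ⟨c', hc', hP⟩
          exact ⟨c', hc', mem_insPts.2 (Or.inr (Or.inl ⟨by simp only; omega, hP⟩))⟩
    · -- shifted point
      have hqne : (p.1 - 1, p.2) ≠ ((0 : ℕ), (0 : ℕ)) := by
        intro hcon
        have : p.1 - 1 = 0 := by
          have := congrArg Prod.fst hcon; simpa using this
        omega
      have H := T.point_cond (p.1 - 1, p.2) hpP hqne
      dsimp only at H
      refine xor_congr (Iff.symm ?_) (Iff.symm ?_) H
      · constructor
        · rintro ⟨r, hr, hmem⟩
          rw [mem_insPts] at hmem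
          rcases hmem with heq | ⟨hri, hP⟩ | ⟨hri, hP⟩
          · exfalso
            have hrc1 : r = i + 1 := by
              have := congrArg Prod.fst heq; simpa using this
            have hrc2 : p.2 = c := by
              have := congrArg Prod.snd heq; simpa using this
            apply h2
            refine cells_lower (by omega) (le_of_eq ?_) (T.points_subset hpP)
            simpa using hrc2.symm
          · exact ⟨r, by omega, hP⟩
          · refine ⟨r - 1, by simp only at hri ⊢; omega, ?_⟩
            simpa using hP
        · rintro ⟨r, hr, hP⟩
          rcases Nat.lt_or_ge r (i + 1) with hri | hri
          · exact ⟨r, by omega, mem_insPts.2 (Or.inr (Or.inl ⟨by simp only; omega, hP⟩))⟩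
          · refine ⟨r + 1, by omega, mem_insPts.2 (Or.inr (Or.inr ⟨by simp only; omega, by simpa using hP⟩))⟩
      · constructor
        · rintro ⟨c', hc', hmem⟩
          rw [mem_insPts] at hmem
          rcases hmem with heq | ⟨hri, hP⟩ | ⟨_, hP⟩
          · exfalso
            have : p.1 = i + 1 := by
              have := congrArg Prod.fst heq; simpa using this
            omega
          · exfalso; simp only at hri; omega
          · exact ⟨c', hc', by simpa using hP⟩
        · rintro ⟨c', hc', hP⟩
          refine ⟨c', hc', mem_insPts.2 (Or.inr (Or.inr ⟨by simp only; omega, by simpa using hP⟩))⟩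
  no_empty_row := by
    intro r j h
    rw [mem_insShape] at h
    rcases h with ⟨hr, hY⟩ | ⟨hr, _⟩ | ⟨hr, hY⟩
    · obtain ⟨c', hc'⟩ := T.no_empty_row r j hY
      exact ⟨c', mem_insPts.2 (Or.inr (Or.inl ⟨hr, hc'⟩))⟩
    · have hr' : r = i + 1 := hr
      exact ⟨c, mem_insPts.2 (Or.inl (by rw [hr']))⟩
    · obtain ⟨c', hc'⟩ := T.no_empty_row (r - 1) j hY
      exact ⟨c', mem_insPts.2 (Or.inr (Or.inr ⟨hr, hc'⟩))⟩
  no_empty_col := by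
    intro r j h
    rw [mem_insShape] at h
    have hcol : ∃ r₂, (r₂, j) ∈ T.shape.cells := by
      rcases h with ⟨_, hY⟩ | ⟨_, hj⟩ | ⟨_, hY⟩
      · exact ⟨r, hY⟩
      · exact ⟨i, cells_lower le_rfl hj h1⟩
      · exact ⟨r - 1, hY⟩
    obtain ⟨r₂, hr₂⟩ := hcol
    obtain ⟨r₀, hr₀⟩ := T.no_empty_col r₂ j hr₂
    rcases Nat.lt_or_ge r₀ (i + 1) with hri | hri
    · exact ⟨r₀, mem_insPts.2 (Or.inr (Or.inl ⟨by omega, hr₀⟩))⟩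
    · exact ⟨r₀ + 1, mem_insPts.2 (Or.inr (Or.inr ⟨by omega, by simpa using hr₀⟩))⟩

lemma rowInsAux_size : (rowInsAux T i c h1 h2).size = T.size + 1 := by
  have hnot : (i + 1, c) ∉ T.points.image (shiftR i) := by
    rw [mem_image_shiftR]
    rintro (⟨hh, _⟩ | ⟨hh, _⟩) <;> simp at hh <;> omega
  rw [size, size]
  show (insPts T.points i c).card = T.points.card + 1
  rw [insPts, Finset.card_insert_of_notMem hnot,
    Finset.card_image_of_injective _ (shiftR_injective i)]

end RowIns

end TreeLikeTableau
namespace TreeLikeTableau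

section RowIns2

variable (T : TreeLikeTableau) (i c : ℕ)
  (h1 : (i, c) ∈ T.shape.cells) (h2 : (i + 1, c) ∉ T.shape.cells)

lemma rowInsAux_shape_mem {q : ℕ × ℕ} :
    q ∈ (rowInsAux T i c h1 h2).shape.cells ↔
      (q.1 ≤ i ∧ q ∈ T.shape.cells) ∨ (q.1 = i + 1 ∧ q.2 ≤ c) ∨
        (i + 2 ≤ q.1 ∧ (q.1 - 1, q.2) ∈ T.shape.cells) :=
  mem_insShape (Y := T.shape) (h1 := h1) (h2 := h2)

lemma rowInsAux_points_mem {q : ℕ × ℕ} :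
    q ∈ (rowInsAux T i c h1 h2).points ↔
      q = (i + 1, c) ∨ (q.1 ≤ i ∧ q ∈ T.points) ∨ (i + 2 ≤ q.1 ∧ (q.1 - 1, q.2) ∈ T.points) :=
  mem_insPts

lemma shape_mem_low {q : ℕ × ℕ} (hq : q.1 ≤ i) :
    q ∈ T.shape.cells ↔ q ∈ (rowInsAux T i c h1 h2).shape.cells := by
  rw [rowInsAux_shape_mem]
  constructor
  · intro h; exact Or.inl ⟨hq, h⟩
  · rintro (⟨_, h⟩ | ⟨h, _⟩ | ⟨h, _⟩)
    · exact h
    · omega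
    · omega

lemma shape_mem_high {q : ℕ × ℕ} (hq : i + 1 ≤ q.1) :
    q ∈ T.shape.cells ↔ (q.1 + 1, q.2) ∈ (rowInsAux T i c h1 h2).shape.cells := by
  rw [rowInsAux_shape_mem]
  constructor
  · intro h
    refine Or.inr (Or.inr ⟨by simp only; omega, by simpa using h⟩)
  · rintro (⟨h, _⟩ | ⟨h, _⟩ | ⟨_, h⟩)
    · simp only at h; omega
    · simp only at h; omega
    · simpa using h

lemma pts_mem_low {q : ℕ × ℕ} (hq : q.1 ≤ i) :
    q ∈ T.points ↔ q ∈ (rowInsAux T i c h1 h2).points := by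
  rw [rowInsAux_points_mem]
  constructor
  · intro h; exact Or.inr (Or.inl ⟨hq, h⟩)
  · rintro (heq | ⟨_, h⟩ | ⟨h, _⟩)
    · exfalso
      have : q.1 = i + 1 := by rw [heq]
      omega
    · exact h
    · omega

lemma pts_mem_high {q : ℕ × ℕ} (hq : i + 1 ≤ q.1) :
    q ∈ T.points ↔ (q.1 + 1, q.2) ∈ (rowInsAux T i c h1 h2).points := by
  rw [rowInsAux_points_mem]
  constructor
  · intro h
    refine Or.inr (Or.inr ⟨by simp only; omega, by simpa using h⟩)
  · rintro (heq | ⟨h, _⟩ | ⟨_, h⟩)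
    · exfalso
      have : q.1 + 1 = i + 1 := by
        have := congrArg Prod.fst heq; simpa using this
      omega
    · simp only at h; omega
    · simpa using h

lemma occCorners_rowInsAux :
    (rowInsAux T i c h1 h2).occCorners =
      insert (i + 1, c) ((T.occCorners.erase (i, c)).image (shiftR i)) := by
  ext q
  rw [mem_occCorners, rowInsAux_points_mem, Finset.mem_insert, mem_image_shiftR]
  simp only [Finset.mem_erase]
  constructor
  · rintro ⟨hq | ⟨hqi, hqP⟩ | ⟨hqi, hqP⟩, hb, hr⟩
    · exact Or.inl hq
    · -- kept point
      right; left
      refine ⟨hqi, ⟨?_, mem_occCorners.2 ⟨hqP, ?_, ?_⟩⟩⟩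
      · -- q ≠ (i,c)
        intro hcon
        apply hb
        rw [rowInsAux_shape_mem]
        right; left
        constructor
        · have : q.1 = i := by rw [hcon]
          simp only; omega
        · have : q.2 = c := by rw [hcon]
          simp only; omega
      · -- (q.1+1, q.2) ∉ T.cells
        intro hcon
        apply hb
        rw [rowInsAux_shape_mem]
        rcases Nat.lt_or_ge (q.1 + 1) (i + 1) with hlt | hge
        · exact Or.inl ⟨by simp only; omega, hcon⟩
        · -- q.1 = i
          have hqi' : q.1 = i := by omega
          right; left
          refine ⟨by simp only; omega, ?_⟩
          -- q.2 ≤ c, else (i+1,c) ∈ T.cells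
          simp only
          by_contra hgt
          apply h2
          exact cells_lower le_rfl (show c ≤ q.2 by omega) (by rwa [hqi'] at hcon)
      · intro hcon
        apply hr
        rw [rowInsAux_shape_mem]
        exact Or.inl ⟨by simp only; omega, hcon⟩
    · -- shifted point
      right; right
      refine ⟨hqi, ⟨?_, mem_occCorners.2 ⟨hqP, ?_, ?_⟩⟩⟩
      · intro hcon
        have : q.1 - 1 = i := by
          have := congrArg Prod.fst hcon; simpa using this
        omega
      · intro hcon
        apply hb
        rw [rowInsAux_shape_mem]
        refine Or.inr (Or.inr ⟨by simp only; omega, ?_⟩)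
        simp only [Nat.add_sub_cancel]
        have : q.1 - 1 + 1 = q.1 := by omega
        rwa [this] at hcon
      · intro hcon
        apply hr
        rw [rowInsAux_shape_mem]
        exact Or.inr (Or.inr ⟨by simp only; omega, by simpa using hcon⟩)
  · rintro (rfl | ⟨hqi, hne, hocc⟩ | ⟨hqi, hne, hocc⟩)
    · refine ⟨Or.inl rfl, ?_, ?_⟩
      · intro hcon
        rw [rowInsAux_shape_mem] at hcon
        rcases hcon with ⟨h, _⟩ | ⟨h, _⟩ | ⟨_, h⟩
        · simp only at h; omega
        · simp only at h; omega
        · exact h2 (by simpa using h)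
      · intro hcon
        rw [rowInsAux_shape_mem] at hcon
        rcases hcon with ⟨h, _⟩ | ⟨_, h⟩ | ⟨h, _⟩
        · simp only at h; omega
        · simp only at h; omega
        · simp only at h; omega
    · rw [mem_occCorners] at hocc
      obtain ⟨hP, hb, hr⟩ := hocc
      refine ⟨Or.inr (Or.inl ⟨hqi, hP⟩), ?_, ?_⟩
      · intro hcon
        rw [rowInsAux_shape_mem] at hcon
        rcases hcon with ⟨_, h⟩ | ⟨hh, h⟩ | ⟨hh, _⟩
        · exact hb h
        · -- q.1 + 1 = i + 1, q.2 ≤ c : so q.1 = i, and q ≠ (i,c) gives q.2 < c,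
          -- here (q.1+1,q.2) ∈ new row, i.e. q.1 = i and q.2 ≤ c.
          -- q occupied corner of T with q.1 = i: its right cell (i, q.2+1) ∉ T.cells.
          -- since (i,c) ∈ T.cells and q.2 ≤ c: if q.2 < c then (i,q.2+1) ∈ T.cells, contra hr.
          -- so q.2 = c, contra hne.
          simp only at hh h
          have hqi' : q.1 = i := by omega
          rcases Nat.lt_or_ge q.2 c with hlt | hge
          · apply hr
            rw [← hqi'] at h1
            exact cells_lower le_rfl (by omega) h1
          · apply hne
            have : q.2 = c := by omega
            exact Prod.ext hqi' this
        · simp only at hh; omega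
      · intro hcon
        rw [rowInsAux_shape_mem] at hcon
        rcases hcon with ⟨_, h⟩ | ⟨hh, _⟩ | ⟨hh, _⟩
        · exact hr h
        · simp only at hh; omega
        · simp only at hh; omega
    · rw [mem_occCorners] at hocc
      obtain ⟨hP, hb, hr⟩ := hocc
      refine ⟨Or.inr (Or.inr ⟨hqi, hP⟩), ?_, ?_⟩
      · intro hcon
        rw [rowInsAux_shape_mem] at hcon
        rcases hcon with ⟨hh, _⟩ | ⟨hh, _⟩ | ⟨_, h⟩
        · simp only at hh; omega
        · simp only at hh; omega
        · apply hb
          simp only [Nat.add_sub_cancel] at h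
          have heq : (q.1 - 1 + 1, q.2) = (q.1, q.2) := by
            have : q.1 - 1 + 1 = q.1 := by omega
            rw [this]
          rw [heq]
          simpa using h
      · intro hcon
        rw [rowInsAux_shape_mem] at hcon
        rcases hcon with ⟨hh, _⟩ | ⟨hh, _⟩ | ⟨_, h⟩
        · simp only at hh; omega
        · simp only at hh; omega
        · exact hr (by simpa using h)

lemma oc_rowInsAux :
    (rowInsAux T i c h1 h2).oc = if (i, c) ∈ T.occCorners then T.oc else T.oc + 1 := by
  rw [oc, occCorners_rowInsAux]
  have hnot : (i + 1, c) ∉ (T.occCorners.erase (i, c)).image (shiftR i) := by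
    rw [mem_image_shiftR]
    rintro (⟨hh, _⟩ | ⟨hh, _⟩) <;> simp only at hh <;> omega
  rw [Finset.card_insert_of_notMem hnot,
    Finset.card_image_of_injective _ (shiftR_injective i)]
  by_cases hmem : (i, c) ∈ T.occCorners
  · rw [if_pos hmem, Finset.card_erase_of_mem hmem, oc]
    have : 1 ≤ T.occCorners.card := Finset.card_pos.2 ⟨_, hmem⟩
    omega
  · rw [if_neg hmem, Finset.erase_eq_of_notMem hmem]
    rfl

lemma corner_mem_rowInsAux :
    (i + 1, c) ∈ (rowInsAux T i c h1 h2).occCorners := by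
  rw [occCorners_rowInsAux]
  exact Finset.mem_insert_self _ _

end RowIns2

lemma rowInsAux_inj {T T' : TreeLikeTableau} {i c : ℕ}
    {h1 : (i, c) ∈ T.shape.cells} {h2 : (i + 1, c) ∉ T.shape.cells}
    {h1' : (i, c) ∈ T'.shape.cells} {h2' : (i + 1, c) ∉ T'.shape.cells}
    (h : rowInsAux T i c h1 h2 = rowInsAux T' i c h1' h2') : T = T' := by
  apply ext'
  · apply YoungDiagram.ext
    ext q
    rcases Nat.lt_or_ge q.1 (i + 1) with hq | hq
    · rw [shape_mem_low T i c h1 h2 (by omega), shape_mem_low T' i c h1' h2' (by omega)]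
      exact iff_of_eq (by rw [h])
    · rw [shape_mem_high T i c h1 h2 hq, shape_mem_high T' i c h1' h2' hq]
      exact iff_of_eq (by rw [h])
  · ext q
    rcases Nat.lt_or_ge q.1 (i + 1) with hq | hq
    · rw [pts_mem_low T i c h1 h2 (by omega), pts_mem_low T' i c h1' h2' (by omega)]
      exact iff_of_eq (by rw [h])
    · rw [pts_mem_high T i c h1 h2 hq, pts_mem_high T' i c h1' h2' hq]
      exact iff_of_eq (by rw [h])

end TreeLikeTableau
namespace TreeLikeTableau

/-- Unshift: rows `> a` are pulled up by one; used for deleting row `a`. -/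
def unshift (a : ℕ) (q : ℕ × ℕ) : ℕ × ℕ := if q.1 < a then q else (q.1 - 1, q.2)

def delCells (S : Finset (ℕ × ℕ)) (a : ℕ) : Finset (ℕ × ℕ) :=
  (S.filter (fun q => q.1 ≠ a)).image (unshift a)

lemma mem_delCells {S : Finset (ℕ × ℕ)} {a : ℕ} {q : ℕ × ℕ} :
    q ∈ delCells S a ↔ (q.1 < a ∧ q ∈ S) ∨ (a ≤ q.1 ∧ (q.1 + 1, q.2) ∈ S) := by
  unfold delCells
  simp only [Finset.mem_image, Finset.mem_filter]
  constructor
  · rintro ⟨u, ⟨hu, hua⟩, rfl⟩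
    rcases Nat.lt_or_ge u.1 a with h | h
    · left
      constructor
      · simpa [unshift, h] using h
      · simpa [unshift, h] using hu
    · have hgt : a < u.1 := by omega
      right
      simp only [unshift, if_neg (by omega : ¬ u.1 < a)]
      refine ⟨show a ≤ u.1 - 1 by omega, ?_⟩
      have : u.1 - 1 + 1 = u.1 := by omega
      simpa [this] using hu
  · rintro (⟨h1, h2⟩ | ⟨h1, h2⟩)
    · exact ⟨q, ⟨h2, by omega⟩, by simp [unshift, h1]⟩
    · refine ⟨(q.1 + 1, q.2), ⟨h2, by simp; omega⟩, ?_⟩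
      simp [unshift]
      omega

variable {T : TreeLikeTableau} {a b : ℕ}

lemma row_pt_unique (hc : (a, b) ∈ T.occCorners)
    (habove : ∃ r < a, (r, b) ∈ T.points) :
    ∀ q ∈ T.points, q.1 = a → q = (a, b) := by
  obtain ⟨hP, hb, hr⟩ := mem_occCorners.1 hc
  intro q hq hqa
  have ha : 1 ≤ a := by obtain ⟨r, hr', _⟩ := habove; omega
  have hne : (a, b) ≠ ((0 : ℕ), (0 : ℕ)) := by
    intro h
    have : a = 0 := by have := congrArg Prod.fst h; simpa using this
    omega
  have H := T.point_cond (a, b) hP hne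
  dsimp only at H
  have hnl : ¬∃ c' < b, (a, c') ∈ T.points := by
    rcases H with ⟨_, h⟩ | ⟨_, h⟩
    · exact h
    · exact absurd habove h
  -- q = (a, q.2) with q.2 ≤ b
  have hq2 : q.2 ≤ b := by
    by_contra hgt
    apply hr
    show (a, b + 1) ∈ T.shape.cells
    have hcell : (q.1, q.2) ∈ T.shape.cells := T.points_subset hq
    rw [hqa] at hcell
    exact cells_lower (le_refl a) (show b + 1 ≤ q.2 by omega) hcell
  rcases Nat.eq_or_lt_of_le hq2 with he | hlt
  · have : q = (q.1, q.2) := rfl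
    rw [this, hqa, he]
  · exfalso
    apply hnl
    refine ⟨q.2, hlt, ?_⟩
    have : (q.1, q.2) = q := rfl
    rw [← hqa]
    simpa [this] using hq

lemma no_cell_below (hc : (a, b) ∈ T.occCorners) {r : ℕ} (hr : a < r) :
    (r, b) ∉ T.shape.cells := by
  obtain ⟨_, hb, _⟩ := mem_occCorners.1 hc
  intro h
  exact hb (cells_lower (by omega) le_rfl h)

lemma exists_del (hc : (a, b) ∈ T.occCorners)
    (habove : ∃ r < a, (r, b) ∈ T.points) :
    ∃ (T' : TreeLikeTableau) (h1 : (a - 1, b) ∈ T'.shape.cells)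
      (h2 : (a - 1 + 1, b) ∉ T'.shape.cells),
        rowInsAux T' (a - 1) b h1 h2 = T := by
  obtain ⟨hP, hbel, hrt⟩ := mem_occCorners.1 hc
  have ha : 1 ≤ a := by obtain ⟨r, hr', _⟩ := habove; omega
  have huniq := row_pt_unique hc habove
  -- the deleted tableau
  refine ⟨{ shape := ⟨delCells T.shape.cells a, ?_⟩
            points := delCells T.points a
            points_subset := ?_
            root_mem := ?_
            point_cond := ?_
            no_empty_row := ?_
            no_empty_col := ?_ }, ?_, ?_, ?_⟩
  · -- lower set
    rintro ⟨a1, a2⟩ ⟨b1, b2⟩ hba h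
    simp only [Finset.mem_coe] at h ⊢
    rw [mem_delCells] at h ⊢
    obtain ⟨hb1, hb2⟩ : b1 ≤ a1 ∧ b2 ≤ a2 := Prod.mk_le_mk.1 hba
    simp only at *
    rcases h with ⟨h1, h2⟩ | ⟨h1, h2⟩
    · exact Or.inl ⟨by omega, cells_lower hb1 hb2 h2⟩
    · rcases Nat.lt_or_ge b1 a with hb | hb
      · exact Or.inl ⟨hb, cells_lower (by omega) hb2 h2⟩
      · exact Or.inr ⟨hb, cells_lower (by omega) hb2 h2⟩
  · -- points_subset
    intro q hq
    rw [mem_delCells] at hq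
    show q ∈ delCells T.shape.cells a
    rw [mem_delCells]
    rcases hq with ⟨h1, h2⟩ | ⟨h1, h2⟩
    · exact Or.inl ⟨h1, T.points_subset h2⟩
    · exact Or.inr ⟨h1, T.points_subset h2⟩
  · -- root
    show ((0 : ℕ), (0 : ℕ)) ∈ delCells T.points a
    rw [mem_delCells]
    exact Or.inl ⟨by omega, T.root_mem⟩
  · -- point_cond
    intro p hp hne
    rw [mem_delCells] at hp
    rcases hp with ⟨hpa, hpP⟩ | ⟨hpa, hpP⟩
    · have H := T.point_cond p hpP hne
      refine xor_congr (Iff.symm ?_) (Iff.symm ?_) H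
      · constructor
        · rintro ⟨r, hr, hmem⟩
          rw [mem_delCells] at hmem
          rcases hmem with ⟨_, h⟩ | ⟨h, _⟩
          · exact ⟨r, hr, h⟩
          · exfalso; simp only at h; omega
        · rintro ⟨r, hr, h⟩
          exact ⟨r, hr, mem_delCells.2 (Or.inl ⟨by simp only; omega, h⟩)⟩
      · constructor
        · rintro ⟨c', hc', hmem⟩
          rw [mem_delCells] at hmem
          rcases hmem with ⟨_, h⟩ | ⟨h, _⟩
          · exact ⟨c', hc', h⟩
          · exfalso; simp only at h; omega
        · rintro ⟨c', hc', h⟩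
          exact ⟨c', hc', mem_delCells.2 (Or.inl ⟨by simp only; omega, h⟩)⟩
    · -- shifted point, q := (p.1+1, p.2)
      have hqne : (p.1 + 1, p.2) ≠ ((0 : ℕ), (0 : ℕ)) := by
        intro h
        have : p.1 + 1 = 0 := by have := congrArg Prod.fst h; simpa using this
        omega
      have H := T.point_cond (p.1 + 1, p.2) hpP hqne
      dsimp only at H
      refine xor_congr (Iff.symm ?_) (Iff.symm ?_) H
      · constructor
        · rintro ⟨r, hr, hmem⟩
          rw [mem_delCells] at hmem
          rcases hmem with ⟨_, h⟩ | ⟨hra, h⟩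
          · exact ⟨r, by omega, h⟩
          · refine ⟨r + 1, by omega, by simpa using h⟩
        · rintro ⟨r, hr, h⟩
          rcases Nat.lt_or_ge r a with hra | hra
          · refine ⟨r, by omega, mem_delCells.2 (Or.inl ⟨by simp only; omega, h⟩)⟩
          · rcases Nat.eq_or_lt_of_le hra with he | hlt
            · -- r = a : impossible
              exfalso
              have := huniq (r, p.2) h (by omega)
              have hp2 : p.2 = b := by
                have := congrArg Prod.snd this; simpa using this
              apply hbel
              have hcell : (p.1 + 1, p.2) ∈ T.shape.cells := T.points_subset hpP
              rw [hp2] at hcell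
              exact cells_lower (by omega) le_rfl hcell
            · refine ⟨r - 1, by omega, mem_delCells.2 (Or.inr ⟨by simp only; omega, ?_⟩)⟩
              have : r - 1 + 1 = r := by omega
              simpa [this] using h
      · constructor
        · rintro ⟨c', hc', hmem⟩
          rw [mem_delCells] at hmem
          rcases hmem with ⟨h, _⟩ | ⟨_, h⟩
          · exfalso; simp only at h; omega
          · exact ⟨c', hc', by simpa using h⟩
        · rintro ⟨c', hc', h⟩
          exact ⟨c', hc', mem_delCells.2 (Or.inr ⟨by simp only; omega, by simpa using h⟩)⟩
  · -- no_empty_row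
    intro r j h
    rw [mem_delCells] at h
    rcases h with ⟨h1, h2⟩ | ⟨h1, h2⟩
    · obtain ⟨c', hc'⟩ := T.no_empty_row r j h2
      exact ⟨c', mem_delCells.2 (Or.inl ⟨h1, hc'⟩)⟩
    · obtain ⟨c', hc'⟩ := T.no_empty_row (r + 1) j h2
      exact ⟨c', mem_delCells.2 (Or.inr ⟨h1, hc'⟩)⟩
  · -- no_empty_col
    intro r j h
    rw [mem_delCells] at h
    have hcell : ∃ r₂, (r₂, j) ∈ T.shape.cells := by
      rcases h with ⟨_, h2⟩ | ⟨_, h2⟩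
      · exact ⟨r, h2⟩
      · exact ⟨r + 1, h2⟩
    obtain ⟨r₂, hr₂⟩ := hcell
    obtain ⟨r₀, hr₀⟩ := T.no_empty_col r₂ j hr₂
    rcases Nat.lt_or_ge r₀ a with hra | hra
    · exact ⟨r₀, mem_delCells.2 (Or.inl ⟨hra, hr₀⟩)⟩
    · rcases Nat.eq_or_lt_of_le hra with he | hlt
      · -- r₀ = a: the unique point, j = b, use habove
        have := huniq (r₀, j) hr₀ (by omega)
        have hj : j = b := by
          have := congrArg Prod.snd this; simpa using this
        obtain ⟨r₁, hr₁, hr₁P⟩ := habove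
        refine ⟨r₁, mem_delCells.2 (Or.inl ⟨by omega, by rw [hj]; exact hr₁P⟩)⟩
      · refine ⟨r₀ - 1, mem_delCells.2 (Or.inr ⟨by simp only; omega, ?_⟩)⟩
        have : r₀ - 1 + 1 = r₀ := by omega
        simpa [this] using hr₀
  · -- h1 : (a-1, b) ∈ cells'
    show ((a : ℕ) - 1, b) ∈ delCells T.shape.cells a
    rw [mem_delCells]
    exact Or.inl ⟨by simp only; omega, cells_lower (by omega) le_rfl (T.points_subset hP)⟩
  · -- h2 : (a-1+1, b) ∉ cells'
    show ¬ ((a : ℕ) - 1 + 1, b) ∈ delCells T.shape.cells a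
    rw [mem_delCells]
    rintro (⟨h, _⟩ | ⟨_, h⟩)
    · simp only at h; omega
    · apply no_cell_below hc (r := a - 1 + 1 + 1) (by omega)
      have : a - 1 + 1 + 1 = a + 1 := by omega
      simp only at h
      rwa [← this] at hbel
  · -- rowInsAux = T
    apply ext'
    · apply YoungDiagram.ext
      ext q
      rw [rowInsAux_shape_mem]
      show _ ↔ q ∈ T.shape.cells
      constructor
      · rintro (⟨hq, h⟩ | ⟨hq, h⟩ | ⟨hq, h⟩)
        · rw [mem_delCells] at h
          rcases h with ⟨_, h⟩ | ⟨h', _⟩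
          · exact h
          · omega
        · -- q.1 = a-1+1 = a, q.2 ≤ b
          have hqa : q.1 = a := by omega
          have : (q.1, q.2) = q := rfl
          rw [← this, hqa]
          exact cells_lower le_rfl h (T.points_subset hP)
        · rw [mem_delCells] at h
          rcases h with ⟨h', _⟩ | ⟨_, h⟩
          · simp only at h'; omega
          · simp only at h
            have : q.1 - 1 + 1 = q.1 := by omega
            rw [this] at h
            simpa using h
      · intro h
        rcases Nat.lt_or_ge q.1 a with hq | hq
        · exact Or.inl ⟨by omega, mem_delCells.2 (Or.inl ⟨hq, h⟩)⟩
        · rcases Nat.eq_or_lt_of_le hq with he | hlt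
          · right; left
            refine ⟨by omega, ?_⟩
            by_contra hgt
            apply hrt
            show (a, b + 1) ∈ T.shape.cells
            exact cells_lower (show a ≤ q.1 by omega) (show b + 1 ≤ q.2 by omega)
              (show (q.1, q.2) ∈ T.shape.cells from h)
          · right; right
            refine ⟨by omega, mem_delCells.2 (Or.inr ⟨by simp only; omega, ?_⟩)⟩
            simp only
            have : q.1 - 1 + 1 = q.1 := by omega
            rw [this]
            simpa using h
    · ext q
      rw [rowInsAux_points_mem]
      show _ ↔ q ∈ T.points
      constructor
      · rintro (rfl | ⟨hq, h⟩ | ⟨hq, h⟩)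
        · have : a - 1 + 1 = a := by omega
          rw [this]
          exact hP
        · rw [mem_delCells] at h
          rcases h with ⟨_, h⟩ | ⟨h', _⟩
          · exact h
          · omega
        · rw [mem_delCells] at h
          rcases h with ⟨h', _⟩ | ⟨_, h⟩
          · simp only at h'; omega
          · simp only at h
            have : q.1 - 1 + 1 = q.1 := by omega
            rw [this] at h
            simpa using h
      · intro h
        rcases Nat.lt_or_ge q.1 a with hq | hq
        · exact Or.inr (Or.inl ⟨by omega, mem_delCells.2 (Or.inl ⟨hq, h⟩)⟩)
        · rcases Nat.eq_or_lt_of_le hq with he | hlt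
          · left
            have := huniq q h (by omega)
            rw [this]
            have h' : a - 1 + 1 = a := by omega
            rw [h']
          · right; right
            refine ⟨by omega, mem_delCells.2 (Or.inr ⟨by simp only; omega, ?_⟩)⟩
            simp only
            have : q.1 - 1 + 1 = q.1 := by omega
            rw [this]
            simpa using h

end TreeLikeTableau
namespace TreeLikeTableau

/-- Bottom cells of columns: the valid positions for a row insertion. -/
def btm (T : TreeLikeTableau) : Finset (ℕ × ℕ) :=
  T.shape.cells.filter (fun q => (q.1 + 1, q.2) ∉ T.shape.cells)

lemma mem_btm {T : TreeLikeTableau} {q : ℕ × ℕ} :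
    q ∈ T.btm ↔ q ∈ T.shape.cells ∧ (q.1 + 1, q.2) ∉ T.shape.cells := by
  simp [btm]

lemma occCorners_subset_btm (T : TreeLikeTableau) : T.occCorners ⊆ T.btm := by
  intro q hq
  rw [mem_occCorners] at hq
  exact mem_btm.2 ⟨T.points_subset hq.1, hq.2.1⟩

lemma card_btm (T : TreeLikeTableau) :
    T.btm.card = (T.shape.cells.image Prod.snd).card := by
  rw [← Finset.card_image_of_injOn (f := Prod.snd) ?_]
  · congr 1
    apply Finset.Subset.antisymm
    · intro j hj
      rw [Finset.mem_image] at hj ⊢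
      obtain ⟨q, hq, rfl⟩ := hj
      exact ⟨q, (mem_btm.1 hq).1, rfl⟩
    · intro j hj
      rw [Finset.mem_image] at hj
      obtain ⟨q, hq, rfl⟩ := hj
      have hS : (T.shape.cells.filter (fun p => p.2 = q.2)).Nonempty := ⟨q, by simp [hq]⟩
      set S := (T.shape.cells.filter (fun p => p.2 = q.2)).image Prod.fst with hSdef
      have hSne : S.Nonempty := hS.image _
      set r₀ := S.max' hSne with hr₀
      have hr₀S : r₀ ∈ S := S.max'_mem hSne
      rw [hSdef, Finset.mem_image] at hr₀S
      obtain ⟨p, hp, hpr⟩ := hr₀S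
      rw [Finset.mem_filter] at hp
      rw [Finset.mem_image]
      refine ⟨(r₀, q.2), ?_, rfl⟩
      rw [mem_btm]
      constructor
      · have : p = (r₀, q.2) := by
          rw [← hpr, ← hp.2]
        rw [← this]; exact hp.1
      · intro hcon
        have : r₀ + 1 ∈ S := by
          rw [hSdef, Finset.mem_image]
          exact ⟨(r₀ + 1, q.2), Finset.mem_filter.2 ⟨hcon, rfl⟩, rfl⟩
        have := S.le_max' _ this
        omega
  · intro p hp q hq hpq
    rw [Finset.mem_coe, mem_btm] at hp hq
    rcases Nat.lt_trichotomy p.1 q.1 with h | h | h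
    · exfalso
      apply hp.2
      exact cells_lower (by omega) (le_of_eq hpq) (show (q.1, q.2) ∈ _ from hq.1)
    · exact Prod.ext h hpq
    · exfalso
      apply hq.2
      exact cells_lower (by omega) (le_of_eq hpq.symm) (show (p.1, p.2) ∈ _ from hp.1)

lemma tr_cols_eq_rows (T : TreeLikeTableau) :
    T.tr.shape.cells.image Prod.snd = T.shape.cells.image Prod.fst := by
  ext j
  simp only [Finset.mem_image]
  constructor
  · rintro ⟨q, hq, rfl⟩
    rw [mem_tr_shape] at hq
    exact ⟨q.swap, hq, rfl⟩
  · rintro ⟨q, hq, rfl⟩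
    refine ⟨q.swap, ?_, rfl⟩
    rw [mem_tr_shape]
    simpa using hq

set_option maxHeartbeats 1000000 in
/-- Key count: number of (nonempty) rows plus columns equals size plus one. -/
lemma rows_add_cols (T : TreeLikeTableau) :
    (T.shape.cells.image Prod.fst).card + (T.shape.cells.image Prod.snd).card
      = T.size + 1 := by
  classical
  set L := T.points.filter (fun p => ¬∃ c' < p.2, (p.1, c') ∈ T.points) with hL
  set Tp := T.points.filter (fun p => ¬∃ r < p.1, (r, p.2) ∈ T.points) with hTp
  have hunion : L ∪ Tp = T.points := by
    apply Finset.Subset.antisymm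
    · intro p hp
      rw [Finset.mem_union, hL, hTp, Finset.mem_filter, Finset.mem_filter] at hp
      tauto
    · intro p hp
      by_cases hroot : p = (0, 0)
      · rw [Finset.mem_union, hL, Finset.mem_filter]
        left
        refine ⟨hp, ?_⟩
        rintro ⟨c', hc', _⟩
        have : p.2 = 0 := by rw [hroot]
        omega
      · have H := T.point_cond p hp hroot
        rw [Finset.mem_union, hL, hTp, Finset.mem_filter, Finset.mem_filter]
        rcases H with ⟨_, hn⟩ | ⟨_, hn⟩
        · exact Or.inl ⟨hp, hn⟩
        · exact Or.inr ⟨hp, hn⟩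
  have hinter : L ∩ Tp = {((0 : ℕ), (0 : ℕ))} := by
    apply Finset.Subset.antisymm
    · intro p hp
      rw [Finset.mem_inter, hL, hTp, Finset.mem_filter, Finset.mem_filter] at hp
      obtain ⟨⟨hpP, hnl⟩, _, hna⟩ := hp
      rw [Finset.mem_singleton]
      by_contra hne
      rcases T.point_cond p hpP hne with ⟨h, _⟩ | ⟨h, _⟩
      · exact hna h
      · exact hnl h
    · intro p hp
      rw [Finset.mem_singleton] at hp
      subst hp
      rw [Finset.mem_inter, hL, hTp, Finset.mem_filter, Finset.mem_filter]
      refine ⟨⟨T.root_mem, ?_⟩, T.root_mem, ?_⟩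
      · rintro ⟨c', hc', _⟩; simp at hc'
      · rintro ⟨r, hr, _⟩; simp at hr
  have hcardL : L.card = (T.shape.cells.image Prod.fst).card := by
    rw [← Finset.card_image_of_injOn (f := Prod.fst) (s := L) ?_]
    · congr 1
      apply Finset.Subset.antisymm
      · intro i hi
        rw [Finset.mem_image] at hi ⊢
        obtain ⟨p, hp, rfl⟩ := hi
        rw [hL, Finset.mem_filter] at hp
        exact ⟨p, T.points_subset hp.1, rfl⟩
      · intro i hi
        rw [Finset.mem_image] at hi
        obtain ⟨q, hq, rfl⟩ := hi
        obtain ⟨c₁, hc₁⟩ := T.no_empty_row q.1 q.2 (show (q.1, q.2) ∈ _ from hq)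
        have hSne : ((T.points.filter (fun p => p.1 = q.1)).image Prod.snd).Nonempty :=
          ⟨c₁, Finset.mem_image.2 ⟨(q.1, c₁), Finset.mem_filter.2 ⟨hc₁, rfl⟩, rfl⟩⟩
        set c₀ := ((T.points.filter (fun p => p.1 = q.1)).image Prod.snd).min' hSne with hc₀
        have hc₀S := Finset.min'_mem _ hSne
        rw [Finset.mem_image] at hc₀S
        obtain ⟨p, hp, hps⟩ := hc₀S
        rw [Finset.mem_filter] at hp
        rw [Finset.mem_image]
        refine ⟨(q.1, c₀), ?_, rfl⟩
        rw [hL, Finset.mem_filter]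
        constructor
        · have : p = (q.1, c₀) := Prod.ext hp.2 (by rw [hc₀]; exact hps)
          rw [← this]; exact hp.1
        · rintro ⟨c', hc', hmem⟩
          have : c' ∈ (T.points.filter (fun p => p.1 = q.1)).image Prod.snd := by
            rw [Finset.mem_image]
            exact ⟨(q.1, c'), Finset.mem_filter.2 ⟨by simpa using hmem, rfl⟩, rfl⟩
          have := Finset.min'_le _ _ this
          simp only at hc'
          omega
    · intro p hp q hq hpq
      rw [Finset.mem_coe, hL, Finset.mem_filter] at hp hq
      rcases Nat.lt_trichotomy p.2 q.2 with h | h | h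
      · exfalso
        apply hq.2
        refine ⟨p.2, h, ?_⟩
        rw [← hpq]
        exact hp.1
      · exact Prod.ext hpq h
      · exfalso
        apply hp.2
        refine ⟨q.2, h, ?_⟩
        rw [hpq]
        exact hq.1
  have hcardTp : Tp.card = (T.shape.cells.image Prod.snd).card := by
    rw [← Finset.card_image_of_injOn (f := Prod.snd) (s := Tp) ?_]
    · congr 1
      apply Finset.Subset.antisymm
      · intro j hj
        rw [Finset.mem_image] at hj ⊢
        obtain ⟨p, hp, rfl⟩ := hj
        rw [hTp, Finset.mem_filter] at hp
        exact ⟨p, T.points_subset hp.1, rfl⟩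
      · intro j hj
        rw [Finset.mem_image] at hj
        obtain ⟨q, hq, rfl⟩ := hj
        obtain ⟨r₁, hr₁⟩ := T.no_empty_col q.1 q.2 (show (q.1, q.2) ∈ _ from hq)
        have hSne : ((T.points.filter (fun p => p.2 = q.2)).image Prod.fst).Nonempty :=
          ⟨r₁, Finset.mem_image.2 ⟨(r₁, q.2), Finset.mem_filter.2 ⟨hr₁, rfl⟩, rfl⟩⟩
        set r₀ := ((T.points.filter (fun p => p.2 = q.2)).image Prod.fst).min' hSne with hr₀
        have hr₀S := Finset.min'_mem _ hSne
        rw [Finset.mem_image] at hr₀S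
        obtain ⟨p, hp, hps⟩ := hr₀S
        rw [Finset.mem_filter] at hp
        rw [Finset.mem_image]
        refine ⟨(r₀, q.2), ?_, rfl⟩
        rw [hTp, Finset.mem_filter]
        constructor
        · have : p = (r₀, q.2) := Prod.ext (by rw [hr₀]; exact hps) hp.2
          rw [← this]; exact hp.1
        · rintro ⟨r, hr, hmem⟩
          have : r ∈ (T.points.filter (fun p => p.2 = q.2)).image Prod.fst := by
            rw [Finset.mem_image]
            exact ⟨(r, q.2), Finset.mem_filter.2 ⟨by simpa using hmem, rfl⟩, rfl⟩
          have := Finset.min'_le _ _ this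
          simp only at hr
          omega
    · intro p hp q hq hpq
      rw [Finset.mem_coe, hTp, Finset.mem_filter] at hp hq
      rcases Nat.lt_trichotomy p.1 q.1 with h | h | h
      · exfalso
        apply hq.2
        refine ⟨p.1, h, ?_⟩
        rw [← hpq]
        exact hp.1
      · exact Prod.ext h hpq
      · exfalso
        apply hp.2
        refine ⟨q.1, h, ?_⟩
        rw [hpq]
        exact hq.1
  have := Finset.card_union_add_card_inter L Tp
  rw [hunion, hinter] at this
  rw [← hcardL, ← hcardTp, size]
  simp at this
  omega

lemma card_btm_add (T : TreeLikeTableau) :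
    T.btm.card + T.tr.btm.card = T.size + 1 := by
  rw [card_btm, card_btm, tr_cols_eq_rows, ← rows_add_cols T, Nat.add_comm]

end TreeLikeTableau
namespace TreeLikeTableau

lemma rows_le (T : TreeLikeTableau) {m : ℕ} (h : ((m : ℕ), (0 : ℕ)) ∈ T.shape.cells) :
    m < T.size := by
  classical
  set f : ℕ → ℕ × ℕ := fun r =>
    if h : (r, (0 : ℕ)) ∈ T.shape.cells then (r, Classical.choose (T.no_empty_row r 0 h))
    else (r, 0) with hf
  have hfst : ∀ r, (f r).1 = r := by
    intro r; rw [hf]; dsimp only; split <;> rfl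
  have hmaps : ∀ r ∈ Finset.range (m + 1), f r ∈ T.points := by
    intro r hr
    rw [Finset.mem_range] at hr
    have hcell : (r, (0 : ℕ)) ∈ T.shape.cells := cells_lower (by omega) le_rfl h
    rw [hf]; dsimp only; rw [dif_pos hcell]
    exact Classical.choose_spec (T.no_empty_row r 0 hcell)
  have hinj : Set.InjOn f ↑(Finset.range (m + 1)) := by
    intro r _ r' _ hrr
    have := congrArg Prod.fst hrr
    rwa [hfst, hfst] at this
  have := Finset.card_le_card_of_injOn f hmaps hinj
  simpa [size] using this

lemma shape_bound (T : TreeLikeTableau) {q : ℕ × ℕ} (hq : q ∈ T.shape.cells) :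
    q.1 < T.size ∧ q.2 < T.size := by
  constructor
  · exact T.rows_le (cells_lower le_rfl (Nat.zero_le _) (show (q.1, q.2) ∈ _ from hq))
  · have htr : ((q.2 : ℕ), (0 : ℕ)) ∈ T.tr.shape.cells := by
      rw [mem_tr_shape]
      exact cells_lower (Nat.zero_le _) le_rfl (show (q.1, q.2) ∈ _ from hq)
    have := T.tr.rows_le htr
    rwa [size_tr] at this

lemma finite_size (n : ℕ) : {T : TreeLikeTableau | T.size = n}.Finite := by
  classical
  have hinj : Set.InjOn (fun T : TreeLikeTableau => (T.shape.cells, T.points))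
      {T | T.size = n} := by
    intro S _ T _ h
    exact ext' (YoungDiagram.ext (congrArg Prod.fst h)) (congrArg Prod.snd h)
  apply Set.Finite.of_finite_image ?_ hinj
  apply Set.Finite.subset (Set.toFinite
    (↑(((Finset.range n ×ˢ Finset.range n).powerset ×ˢ
        (Finset.range n ×ˢ Finset.range n).powerset) :
        Finset (Finset (ℕ × ℕ) × Finset (ℕ × ℕ))) : Set _))
  rintro x ⟨T, hT, rfl⟩
  simp only [Set.mem_setOf_eq] at hT
  simp only [Finset.coe_product, Set.mem_prod, Finset.mem_coe, Finset.mem_powerset]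
  constructor
  · intro q hq
    have := T.shape_bound hq
    simp only [Finset.mem_product, Finset.mem_range]
    omega
  · intro q hq
    have := T.shape_bound (T.points_subset hq)
    simp only [Finset.mem_product, Finset.mem_range]
    omega

/-- The finite set of tree-like tableaux of size `n`. -/
noncomputable def Tfin (n : ℕ) : Finset TreeLikeTableau := (finite_size n).toFinset

lemma mem_Tfin {n : ℕ} {T : TreeLikeTableau} : T ∈ Tfin n ↔ T.size = n := by
  simp [Tfin, Set.Finite.mem_toFinset]

end TreeLikeTableau

open TreeLikeTableau in
lemma a_eq_card (n k : ℕ) :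
    a n k = ((Tfin n).filter (fun T => T.oc = k)).card := by
  classical
  rw [a]
  rw [show {T : TreeLikeTableau | T.size = n ∧ T.oc = k} =
      ↑((Tfin n).filter (fun T => T.oc = k)) from ?_]
  · exact Set.ncard_coe_finset _
  · ext T
    simp [mem_Tfin, and_comm]
namespace TreeLikeTableau

lemma new_point_above (T : TreeLikeTableau) (i c : ℕ) (h1 : (i, c) ∈ T.shape.cells)
    (h2 : (i + 1, c) ∉ T.shape.cells) :
    ∃ r < i + 1, (r, c) ∈ (rowInsAux T i c h1 h2).points := by
  obtain ⟨r₀, hr₀⟩ := T.no_empty_col i c h1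
  have hr₀i : r₀ ≤ i := by
    by_contra hcon
    exact h2 (cells_lower (by omega) le_rfl (T.points_subset hr₀))
  exact ⟨r₀, by omega, (rowInsAux_points_mem T i c h1 h2).2 (Or.inr (Or.inl ⟨hr₀i, hr₀⟩))⟩

lemma new_point_no_left (T : TreeLikeTableau) (i c : ℕ) (h1 : (i, c) ∈ T.shape.cells)
    (h2 : (i + 1, c) ∉ T.shape.cells) :
    ¬∃ c' < c, (i + 1, c') ∈ (rowInsAux T i c h1 h2).points := by
  rintro ⟨c', hc', hmem⟩
  rw [rowInsAux_points_mem] at hmem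
  rcases hmem with heq | ⟨hh, _⟩ | ⟨hh, _⟩
  · have : c' = c := by have := congrArg Prod.snd heq; simpa using this
    omega
  · simp only at hh; omega
  · simp only at hh; omega

lemma root_corner_size {T : TreeLikeTableau} (h : ((0 : ℕ), (0 : ℕ)) ∈ T.occCorners) :
    T.size = 1 := by
  obtain ⟨hP, hb, hr⟩ := mem_occCorners.1 h
  simp only at hb hr
  have : T.points = {((0 : ℕ), (0 : ℕ))} := by
    apply Finset.Subset.antisymm
    · intro q hq
      rw [Finset.mem_singleton]
      have hcell := T.points_subset hq
      by_contra hne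
      rcases Nat.eq_zero_or_pos q.1 with h1 | h1
      · rcases Nat.eq_zero_or_pos q.2 with h2 | h2
        · exact hne (Prod.ext h1 h2)
        · exact hr (cells_lower (by omega) (by omega) (show (q.1, q.2) ∈ _ from hcell))
      · exact hb (cells_lower (by omega) (Nat.zero_le _) (show (q.1, q.2) ∈ _ from hcell))
    · intro q hq
      rw [Finset.mem_singleton] at hq
      rw [hq]
      exact T.root_mem
  rw [size, this, Finset.card_singleton]

/-- Total version of the row insertion. -/
noncomputable def rowIns (T : TreeLikeTableau) (i c : ℕ) : TreeLikeTableau :=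
  if h : (i, c) ∈ T.shape.cells ∧ (i + 1, c) ∉ T.shape.cells then rowInsAux T i c h.1 h.2
  else T

lemma rowIns_eq {T : TreeLikeTableau} {i c : ℕ} (h1 : (i, c) ∈ T.shape.cells)
    (h2 : (i + 1, c) ∉ T.shape.cells) : rowIns T i c = rowInsAux T i c h1 h2 :=
  dif_pos ⟨h1, h2⟩

/-- Both-orientations data set. -/
noncomputable def D (T' : TreeLikeTableau) (f : TreeLikeTableau → Finset (ℕ × ℕ)) :
    Finset (Bool × ℕ × ℕ) :=
  {false} ×ˢ f T' ∪ {true} ×ˢ f T'.tr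

lemma mem_D {T' : TreeLikeTableau} {f : TreeLikeTableau → Finset (ℕ × ℕ)}
    {x : Bool × ℕ × ℕ} :
    x ∈ D T' f ↔ (x.1 = false ∧ x.2 ∈ f T') ∨ (x.1 = true ∧ x.2 ∈ f T'.tr) := by
  unfold D
  rw [Finset.mem_union, Finset.mem_product, Finset.mem_product]
  simp [Finset.mem_singleton]

lemma card_D (T' : TreeLikeTableau) (f : TreeLikeTableau → Finset (ℕ × ℕ)) :
    (D T' f).card = (f T').card + (f T'.tr).card := by
  unfold D
  rw [Finset.card_union_of_disjoint, Finset.card_product, Finset.card_product]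
  · simp
  · rw [Finset.disjoint_left]
    intro x hx hx'
    rw [Finset.mem_product, Finset.mem_singleton] at hx hx'
    rw [hx.1] at hx'
    exact absurd hx'.1 (by simp)

lemma D_occ_subset_btm (T' : TreeLikeTableau) : D T' occCorners ⊆ D T' btm := by
  intro x hx
  rw [mem_D] at hx ⊢
  rcases hx with ⟨hb, hx⟩ | ⟨hb, hx⟩
  · exact Or.inl ⟨hb, occCorners_subset_btm _ hx⟩
  · exact Or.inr ⟨hb, occCorners_subset_btm _ hx⟩

lemma card_D_occ (T' : TreeLikeTableau) : (D T' occCorners).card = 2 * T'.oc := by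
  rw [card_D]
  show T'.oc + T'.tr.oc = 2 * T'.oc
  rw [oc_tr]
  omega

lemma card_D_btm (T' : TreeLikeTableau) : (D T' btm).card = T'.size + 1 := by
  rw [card_D, card_btm_add]

/-- The set of insertion data on `T'` leading to a tableau with `k` occupied corners. -/
noncomputable def insSet (T' : TreeLikeTableau) (k : ℕ) : Finset (Bool × ℕ × ℕ) :=
  if T'.oc = k then D T' occCorners
  else if T'.oc = k - 1 then D T' btm \ D T' occCorners
  else ∅

lemma insSet_subset (T' : TreeLikeTableau) (k : ℕ) : insSet T' k ⊆ D T' btm := by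
  unfold insSet
  split_ifs
  · exact D_occ_subset_btm T'
  · exact Finset.sdiff_subset.trans (le_refl _)
  · exact Finset.empty_subset _

/-- The insertion map. -/
noncomputable def phi (x : (_ : TreeLikeTableau) × Bool × ℕ × ℕ) :
    (_ : TreeLikeTableau) × ℕ × ℕ :=
  if x.2.1 then ⟨(rowIns x.1.tr x.2.2.1 x.2.2.2).tr, (x.2.2.2, x.2.2.1 + 1)⟩
  else ⟨rowIns x.1 x.2.2.1 x.2.2.2, (x.2.2.1 + 1, x.2.2.2)⟩

end TreeLikeTableau
namespace TreeLikeTableau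

lemma phi_false_spec (T' : TreeLikeTableau) (i c : ℕ) (h1 : (i, c) ∈ T'.shape.cells)
    (h2 : (i + 1, c) ∉ T'.shape.cells) :
    (rowIns T' i c).size = T'.size + 1 ∧
    (rowIns T' i c).oc = (if (i, c) ∈ T'.occCorners then T'.oc else T'.oc + 1) ∧
    (i + 1, c) ∈ (rowIns T' i c).occCorners ∧
    (∃ r < i + 1, (r, c) ∈ (rowIns T' i c).points) := by
  rw [rowIns_eq h1 h2]
  exact ⟨rowInsAux_size T' i c h1 h2, oc_rowInsAux T' i c h1 h2,
    corner_mem_rowInsAux T' i c h1 h2, new_point_above T' i c h1 h2⟩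

lemma phi_true_spec (T' : TreeLikeTableau) (i c : ℕ) (h1 : (i, c) ∈ T'.tr.shape.cells)
    (h2 : (i + 1, c) ∉ T'.tr.shape.cells) :
    ((rowIns T'.tr i c).tr).size = T'.size + 1 ∧
    ((rowIns T'.tr i c).tr).oc = (if (i, c) ∈ T'.tr.occCorners then T'.oc else T'.oc + 1) ∧
    (c, i + 1) ∈ ((rowIns T'.tr i c).tr).occCorners ∧
    ¬(∃ r < c, (r, i + 1) ∈ ((rowIns T'.tr i c).tr).points) := by
  rw [rowIns_eq h1 h2]
  refine ⟨?_, ?_, ?_, ?_⟩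
  · rw [size_tr, rowInsAux_size, size_tr]
  · rw [oc_tr, oc_rowInsAux, oc_tr]
  · rw [occCorners_tr]
    exact Finset.mem_image.2 ⟨(i + 1, c), corner_mem_rowInsAux _ i c h1 h2, rfl⟩
  · rintro ⟨r, hr, hmem⟩
    rw [mem_tr_points] at hmem
    exact new_point_no_left T'.tr i c h1 h2 ⟨r, hr, hmem⟩

lemma card_AB (n k : ℕ) (hn : 2 ≤ n) (hk : 1 ≤ k) :
    ((Tfin (n - 1)).sigma (fun T' => insSet T' k)).card
      = (((Tfin n).filter (fun T => T.oc = k)).sigma (fun T => T.occCorners)).card := by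
  classical
  apply Finset.card_bij (fun x _ => phi x)
  · -- maps into target
    rintro ⟨T', b, i, c⟩ hx
    rw [Finset.mem_sigma] at hx
    obtain ⟨hT', hins⟩ := hx
    rw [mem_Tfin] at hT'
    rw [Finset.mem_sigma, Finset.mem_filter, mem_Tfin]
    unfold insSet at hins
    by_cases hoc : T'.oc = k
    · rw [if_pos hoc] at hins
      rw [mem_D] at hins
      rcases hins with ⟨hb, hcc⟩ | ⟨hb, hcc⟩
      · have hb' : b = false := hb
        subst hb'
        obtain ⟨h1, h2⟩ := mem_btm.1 (occCorners_subset_btm _ hcc)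
        obtain ⟨hs, ho, hcm, _⟩ := phi_false_spec T' i c h1 h2
        have hphi : phi ⟨T', (false, i, c)⟩ = ⟨rowIns T' i c, (i + 1, c)⟩ := rfl
        rw [hphi]
        refine ⟨⟨?_, ?_⟩, hcm⟩
        · rw [hs, hT']; omega
        · rw [ho, if_pos hcc, hoc]
      · have hb' : b = true := hb
        subst hb'
        obtain ⟨h1, h2⟩ := mem_btm.1 (occCorners_subset_btm _ hcc)
        obtain ⟨hs, ho, hcm, _⟩ := phi_true_spec T' i c h1 h2
        have hphi : phi ⟨T', (true, i, c)⟩ = ⟨(rowIns T'.tr i c).tr, (c, i + 1)⟩ := rfl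
        rw [hphi]
        refine ⟨⟨?_, ?_⟩, hcm⟩
        · rw [hs, hT']; omega
        · rw [ho, if_pos hcc, hoc]
    · rw [if_neg hoc] at hins
      by_cases hoc' : T'.oc = k - 1
      · rw [if_pos hoc'] at hins
        rw [Finset.mem_sdiff, mem_D, mem_D] at hins
        obtain ⟨hbt, hnot⟩ := hins
        rcases hbt with ⟨hb, hbtm⟩ | ⟨hb, hbtm⟩
        · have hb' : b = false := hb
          subst hb'
          obtain ⟨h1, h2⟩ := mem_btm.1 hbtm
          have hncc : (i, c) ∉ T'.occCorners := by
            intro hcon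
            exact hnot (Or.inl ⟨rfl, hcon⟩)
          obtain ⟨hs, ho, hcm, _⟩ := phi_false_spec T' i c h1 h2
          have hphi : phi ⟨T', (false, i, c)⟩ = ⟨rowIns T' i c, (i + 1, c)⟩ := rfl
          rw [hphi]
          refine ⟨⟨?_, ?_⟩, hcm⟩
          · rw [hs, hT']; omega
          · rw [ho, if_neg hncc, hoc']; omega
        · have hb' : b = true := hb
          subst hb'
          obtain ⟨h1, h2⟩ := mem_btm.1 hbtm
          have hncc : (i, c) ∉ T'.tr.occCorners := by
            intro hcon
            exact hnot (Or.inr ⟨rfl, hcon⟩)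
          obtain ⟨hs, ho, hcm, _⟩ := phi_true_spec T' i c h1 h2
          have hphi : phi ⟨T', (true, i, c)⟩ = ⟨(rowIns T'.tr i c).tr, (c, i + 1)⟩ := rfl
          rw [hphi]
          refine ⟨⟨?_, ?_⟩, hcm⟩
          · rw [hs, hT']; omega
          · rw [ho, if_neg hncc, hoc']; omega
      · rw [if_neg hoc'] at hins
        exact absurd hins (Finset.notMem_empty _)
  · -- injectivity
    rintro ⟨T1, b1, i1, c1⟩ hx1 ⟨T2, b2, i2, c2⟩ hx2 heq
    rw [Finset.mem_sigma] at hx1 hx2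
    have hv1 := mem_D.1 (insSet_subset T1 k hx1.2)
    have hv2 := mem_D.1 (insSet_subset T2 k hx2.2)
    simp only at hv1 hv2
    rcases hv1 with ⟨hb1, hbtm1⟩ | ⟨hb1, hbtm1⟩ <;>
      rcases hv2 with ⟨hb2, hbtm2⟩ | ⟨hb2, hbtm2⟩
    · -- false, false
      have hb1' : b1 = false := hb1
      have hb2' : b2 = false := hb2
      subst hb1'; subst hb2'
      obtain ⟨h11, h12⟩ := mem_btm.1 hbtm1
      obtain ⟨h21, h22⟩ := mem_btm.1 hbtm2
      have hphi1 : phi ⟨T1, (false, i1, c1)⟩ = ⟨rowIns T1 i1 c1, (i1 + 1, c1)⟩ := rfl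
      have hphi2 : phi ⟨T2, (false, i2, c2)⟩ = ⟨rowIns T2 i2 c2, (i2 + 1, c2)⟩ := rfl
      rw [hphi1, hphi2] at heq
      have hsnd := congrArg (fun s : (_ : TreeLikeTableau) × ℕ × ℕ => s.2) heq
      simp only at hsnd
      have hi12 : i1 = i2 := by
        have := congrArg Prod.fst hsnd; simp only at this; omega
      have hc12 : c1 = c2 := by
        have := congrArg Prod.snd hsnd; simp only at this; omega
      subst hi12; subst hc12
      have hfst := congrArg (fun s : (_ : TreeLikeTableau) × ℕ × ℕ => s.1) heq
      simp only at hfst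
      rw [rowIns_eq h11 h12, rowIns_eq h21 h22] at hfst
      have := rowInsAux_inj hfst
      rw [this]
    · -- false, true : contradiction
      exfalso
      have hb1' : b1 = false := hb1
      have hb2' : b2 = true := hb2
      subst hb1'; subst hb2'
      obtain ⟨h11, h12⟩ := mem_btm.1 hbtm1
      obtain ⟨h21, h22⟩ := mem_btm.1 hbtm2
      have hphi1 : phi ⟨T1, (false, i1, c1)⟩ = ⟨rowIns T1 i1 c1, (i1 + 1, c1)⟩ := rfl
      have hphi2 : phi ⟨T2, (true, i2, c2)⟩ = ⟨(rowIns T2.tr i2 c2).tr, (c2, i2 + 1)⟩ := rfl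
      rw [hphi1, hphi2] at heq
      have hsnd := congrArg (fun s : (_ : TreeLikeTableau) × ℕ × ℕ => s.2) heq
      simp only at hsnd
      have hfst := congrArg (fun s : (_ : TreeLikeTableau) × ℕ × ℕ => s.1) heq
      simp only at hfst
      have he1 : i1 + 1 = c2 := by
        have := congrArg Prod.fst hsnd; simpa using this
      have he2 : c1 = i2 + 1 := by
        have := congrArg Prod.snd hsnd; simpa using this
      obtain ⟨_, _, _, habove⟩ := phi_false_spec T1 i1 c1 h11 h12
      obtain ⟨_, _, _, hnabove⟩ := phi_true_spec T2 i2 c2 h21 h22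
      apply hnabove
      rw [← hfst, ← he1, ← he2]
      exact habove
    · -- true, false : contradiction
      exfalso
      have hb1' : b1 = true := hb1
      have hb2' : b2 = false := hb2
      subst hb1'; subst hb2'
      obtain ⟨h11, h12⟩ := mem_btm.1 hbtm1
      obtain ⟨h21, h22⟩ := mem_btm.1 hbtm2
      have hphi1 : phi ⟨T1, (true, i1, c1)⟩ = ⟨(rowIns T1.tr i1 c1).tr, (c1, i1 + 1)⟩ := rfl
      have hphi2 : phi ⟨T2, (false, i2, c2)⟩ = ⟨rowIns T2 i2 c2, (i2 + 1, c2)⟩ := rfl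
      rw [hphi1, hphi2] at heq
      have hsnd := congrArg (fun s : (_ : TreeLikeTableau) × ℕ × ℕ => s.2) heq
      simp only at hsnd
      have hfst := congrArg (fun s : (_ : TreeLikeTableau) × ℕ × ℕ => s.1) heq
      simp only at hfst
      have he1 : c1 = i2 + 1 := by
        have := congrArg Prod.fst hsnd; simpa using this
      have he2 : i1 + 1 = c2 := by
        have := congrArg Prod.snd hsnd; simpa using this
      obtain ⟨_, _, _, habove⟩ := phi_false_spec T2 i2 c2 h21 h22
      obtain ⟨_, _, _, hnabove⟩ := phi_true_spec T1 i1 c1 h11 h12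
      apply hnabove
      rw [hfst, he1, he2]
      exact habove
    · -- true, true
      have hb1' : b1 = true := hb1
      have hb2' : b2 = true := hb2
      subst hb1'; subst hb2'
      obtain ⟨h11, h12⟩ := mem_btm.1 hbtm1
      obtain ⟨h21, h22⟩ := mem_btm.1 hbtm2
      have hphi1 : phi ⟨T1, (true, i1, c1)⟩ = ⟨(rowIns T1.tr i1 c1).tr, (c1, i1 + 1)⟩ := rfl
      have hphi2 : phi ⟨T2, (true, i2, c2)⟩ = ⟨(rowIns T2.tr i2 c2).tr, (c2, i2 + 1)⟩ := rfl
      rw [hphi1, hphi2] at heq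
      have hsnd := congrArg (fun s : (_ : TreeLikeTableau) × ℕ × ℕ => s.2) heq
      simp only at hsnd
      have hi12 : i1 = i2 := by
        have := congrArg Prod.snd hsnd; simp only at this; omega
      have hc12 : c1 = c2 := by
        have := congrArg Prod.fst hsnd; simp only at this; omega
      subst hi12; subst hc12
      have hfst := congrArg (fun s : (_ : TreeLikeTableau) × ℕ × ℕ => s.1) heq
      simp only at hfst
      have hfst' : rowIns T1.tr i1 c1 = rowIns T2.tr i1 c1 := by
        have := congrArg tr hfst
        rwa [tr_tr, tr_tr] at this
      rw [rowIns_eq h11 h12, rowIns_eq h21 h22] at hfst'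
      have := rowInsAux_inj hfst'
      have hT : T1 = T2 := by
        have := congrArg tr this
        rwa [tr_tr, tr_tr] at this
      rw [hT]
  · -- surjectivity
    rintro ⟨T, cv⟩ hy
    rw [Finset.mem_sigma, Finset.mem_filter, mem_Tfin] at hy
    dsimp only at hy
    obtain ⟨⟨hTn, hTk⟩, hcc⟩ := hy
    have hpt : cv ∈ T.points := (mem_occCorners.1 hcc).1
    have hne : cv ≠ (0, 0) := by
      intro hcon
      rw [hcon] at hcc
      have := root_corner_size hcc
      omega
    rcases T.point_cond cv hpt hne with ⟨habove, hnleft⟩ | ⟨hleft, hnabove⟩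
    · -- row case : b = false
      have ha : 1 ≤ cv.1 := by
        obtain ⟨r, hr, _⟩ := habove; omega
      obtain ⟨T', h1, h2, heqT⟩ := exists_del (a := cv.1) (b := cv.2) hcc habove
      have hsz := rowInsAux_size T' (cv.1 - 1) cv.2 h1 h2
      rw [heqT] at hsz
      have hoc := oc_rowInsAux T' (cv.1 - 1) cv.2 h1 h2
      rw [heqT] at hoc
      refine ⟨⟨T', (false, cv.1 - 1, cv.2)⟩, ?_, ?_⟩
      · rw [Finset.mem_sigma, mem_Tfin]
        dsimp only
        refine ⟨by omega, ?_⟩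
        unfold insSet
        by_cases hmem : (cv.1 - 1, cv.2) ∈ T'.occCorners
        · rw [if_pos hmem] at hoc
          rw [if_pos (by omega : T'.oc = k)]
          rw [mem_D]
          exact Or.inl ⟨rfl, hmem⟩
        · rw [if_neg hmem] at hoc
          rw [if_neg (by omega : ¬ T'.oc = k), if_pos (by omega : T'.oc = k - 1)]
          rw [Finset.mem_sdiff, mem_D, mem_D]
          constructor
          · exact Or.inl ⟨rfl, mem_btm.2 ⟨h1, h2⟩⟩
          · rintro (⟨_, hcon⟩ | ⟨hcon, _⟩)
            · exact hmem hcon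
            · exact absurd hcon (by simp)
      · have hphi : phi ⟨T', (false, cv.1 - 1, cv.2)⟩ =
            ⟨rowIns T' (cv.1 - 1) cv.2, (cv.1 - 1 + 1, cv.2)⟩ := rfl
        rw [hphi, rowIns_eq h1 h2, heqT]
        have : (cv.1 - 1 + 1, cv.2) = cv := by
          have h' : cv.1 - 1 + 1 = cv.1 := by omega
          rw [h']
        rw [this]
    · -- column case : b = true
      have hcS : (cv.2, cv.1) ∈ T.tr.occCorners := by
        rw [occCorners_tr]
        exact Finset.mem_image.2 ⟨cv, hcc, rfl⟩
      have haboveS : ∃ r < cv.2, (r, cv.1) ∈ T.tr.points := by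
        obtain ⟨c', hc', hm⟩ := hleft
        exact ⟨c', hc', mem_tr_points.2 (by simpa using hm)⟩
      have ha : 1 ≤ cv.2 := by
        obtain ⟨r, hr, _⟩ := haboveS; omega
      obtain ⟨T'', h1, h2, heqS⟩ := exists_del (a := cv.2) (b := cv.1) hcS haboveS
      have hsz := rowInsAux_size T'' (cv.2 - 1) cv.1 h1 h2
      rw [heqS, size_tr] at hsz
      have hoc := oc_rowInsAux T'' (cv.2 - 1) cv.1 h1 h2
      rw [heqS, oc_tr] at hoc
      have htr2 : T''.tr.tr = T'' := tr_tr T''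
      refine ⟨⟨T''.tr, (true, cv.2 - 1, cv.1)⟩, ?_, ?_⟩
      · rw [Finset.mem_sigma, mem_Tfin]
        dsimp only
        rw [size_tr]
        refine ⟨by omega, ?_⟩
        unfold insSet
        rw [oc_tr]
        by_cases hmem : (cv.2 - 1, cv.1) ∈ T''.occCorners
        · rw [if_pos hmem] at hoc
          rw [if_pos (by omega : T''.oc = k)]
          rw [mem_D, htr2]
          exact Or.inr ⟨rfl, hmem⟩
        · rw [if_neg hmem] at hoc
          rw [if_neg (by omega : ¬ T''.oc = k), if_pos (by omega : T''.oc = k - 1)]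
          rw [Finset.mem_sdiff, mem_D, mem_D, htr2]
          constructor
          · exact Or.inr ⟨rfl, mem_btm.2 ⟨h1, h2⟩⟩
          · rintro (⟨hcon, _⟩ | ⟨_, hcon⟩)
            · exact absurd hcon (by simp)
            · exact hmem hcon
      · have hphi : phi ⟨T''.tr, (true, cv.2 - 1, cv.1)⟩ =
            ⟨(rowIns T''.tr.tr (cv.2 - 1) cv.1).tr, (cv.1, cv.2 - 1 + 1)⟩ := rfl
        rw [hphi, htr2, rowIns_eq h1 h2, heqS, tr_tr]
        have : (cv.1, cv.2 - 1 + 1) = cv := by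
          have h' : cv.2 - 1 + 1 = cv.2 := by omega
          rw [h']
        rw [this]

end TreeLikeTableau

open TreeLikeTableau

/-- The recurrence `k·a_{n,k} = 2k·a_{n-1,k} + (n - 2(k-1))·a_{n-1,k-1}`
for `n ≥ 2` and `k ≥ 1`. -/
theorem occupied_corners_recurrence (n k : ℕ) (hn : 2 ≤ n) (hk : 1 ≤ k) :
    (k : ℤ) * a n k =
      2 * k * a (n - 1) k + ((n : ℤ) - 2 * ((k : ℤ) - 1)) * a (n - 1) (k - 1) := by

  classical
  have hA : (((Tfin n).filter (fun T => T.oc = k)).sigma (fun T => T.occCorners)).card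
      = a n k * k := by
    rw [Finset.card_sigma, a_eq_card]
    rw [Finset.sum_congr rfl (g := fun _ => k)
      (fun T hT => (show T.occCorners.card = k from (Finset.mem_filter.1 hT).2))]
    rw [Finset.sum_const, smul_eq_mul]
  set C := ((Tfin (n - 1)).filter (fun T : TreeLikeTableau => T.oc = k - 1)).card with hC
  have haC : a (n - 1) (k - 1) = C := a_eq_card (n - 1) (k - 1)
  have hB : ((Tfin (n - 1)).sigma (fun T' => insSet T' k)).card =
      a (n - 1) k * (2 * k) + C * (n - 2 * (k - 1)) := by
    rw [Finset.card_sigma]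
    have hterm : ∀ T' ∈ Tfin (n - 1), (insSet T' k).card =
        (if T'.oc = k then 2 * k else 0) + (if T'.oc = k - 1 then n - 2 * (k - 1) else 0) := by
      intro T' hT'
      rw [mem_Tfin] at hT'
      unfold insSet
      by_cases h1 : T'.oc = k
      · rw [if_pos h1, if_pos h1, card_D_occ,
          if_neg (show ¬ T'.oc = k - 1 by rw [h1]; omega), h1]
        omega
      · rw [if_neg h1, if_neg h1]
        by_cases h2 : T'.oc = k - 1
        · rw [if_pos h2, if_pos h2,
            Finset.card_sdiff_of_subset (D_occ_subset_btm T'), card_D_occ, card_D_btm, hT', h2]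
          omega
        · rw [if_neg h2, if_neg h2, Finset.card_empty]
      
    rw [Finset.sum_congr rfl hterm, Finset.sum_add_distrib, ← Finset.sum_filter,
      ← Finset.sum_filter, Finset.sum_const, Finset.sum_const, smul_eq_mul, smul_eq_mul,
      a_eq_card]
  have key : a n k * k = a (n - 1) k * (2 * k) + C * (n - 2 * (k - 1)) := by
    rw [← hA, ← hB, card_AB n k hn hk]
  rcases Nat.eq_zero_or_pos C with hC0 | hCpos
  · rw [haC, hC0]
    rw [hC0, Nat.zero_mul, Nat.add_zero] at key
    rw [show ((k : ℤ) * a n k) = ((a n k * k : ℕ) : ℤ) by push_cast; ring, key]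
    push_cast
    ring
  · obtain ⟨T', hT'⟩ := Finset.card_pos.1 hCpos
    rw [Finset.mem_filter, mem_Tfin] at hT'
    have hbound : 2 * (k - 1) ≤ n := by
      have hcard := Finset.card_le_card (D_occ_subset_btm T')
      rw [card_D_occ, card_D_btm, hT'.1, hT'.2] at hcard
      omega
    have hcast : ((n - 2 * (k - 1) : ℕ) : ℤ) = (n : ℤ) - 2 * ((k : ℤ) - 1) := by
      rw [Nat.cast_sub hbound]
      push_cast [Nat.cast_sub hk]
      ring
    rw [haC]
    rw [show ((k : ℤ) * a n k) = ((a n k * k : ℕ) : ℤ) by push_cast; ring, key]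
    push_cast [hcast]
    ring
end

section
/- For 2 ≤ k ≤ n, the number of permutations σ of {1,...,n} satisfying: (1) σ(k-1) = σ(k)+1 or σ(k-1) < σ(k), and (2) σ(j) > σ(k)+1 for all k < j ≤ n, equals n!/((n-k+2)(n-k+1)) plus (n-1)! if k = n (and plus 0 otherwise). -/
open Finset



lemma card_perm_fixing {α : Type*} [Fintype α] [DecidableEq α] (s : Finset α) :
    (univ.filter (fun τ : Equiv.Perm α => ∀ x ∈ s, τ x = x)).card
      = (Fintype.card α - s.card).factorial := by
  have e1 : {τ : Equiv.Perm α // ∀ x ∈ s, τ x = x}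
      ≃ {f : Equiv.Perm α // ∀ a, ¬ (a ∉ s) → f a = a} :=
    Equiv.subtypeEquiv (Equiv.refl _) (by intro τ; simp only [Equiv.refl_apply, not_not])
  have e2 := Equiv.Perm.subtypeEquivSubtypePerm (fun x : α => x ∉ s)
  rw [← Fintype.card_subtype]
  rw [Fintype.card_congr (e1.trans e2.symm), Fintype.card_perm]
  congr 1
  rw [Fintype.card_subtype_compl, Fintype.card_coe]

lemma card_perm_extend {α : Type*} [Fintype α] [DecidableEq α] (s : Finset α)
    (f : α → α) (hf : Set.InjOn f s) :
    (univ.filter (fun σ : Equiv.Perm α => ∀ x ∈ s, σ x = f x)).card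
      = (Fintype.card α - s.card).factorial := by
  obtain ⟨g, hg⟩ := Finset.exists_equiv_extend_of_card_eq (t := (univ : Finset α))
    (by simp) (s := s) (f := f) (by simp) hf
  set σ₀ : Equiv.Perm α := g.trans (Equiv.subtypeUnivEquiv (fun x => Finset.mem_univ x))
    with hσ₀def
  have hσ₀ : ∀ x ∈ s, σ₀ x = f x := fun x hx => by
    simpa [hσ₀def, Equiv.subtypeUnivEquiv] using hg x hx
  rw [← card_perm_fixing s]
  apply Finset.card_bij' (fun σ _ => σ₀⁻¹ * σ) (fun τ _ => σ₀ * τ)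
  · intro σ hσ
    simp only [mem_filter, mem_univ, true_and] at hσ ⊢
    intro x hx
    simp [Equiv.Perm.mul_apply, hσ x hx, ← hσ₀ x hx]
  · intro τ hτ
    simp only [mem_filter, mem_univ, true_and] at hτ ⊢
    intro x hx
    simp [Equiv.Perm.mul_apply, hτ x hx, hσ₀ x hx]
  · intro σ _; group
  · intro τ _; group


lemma hockey (M : ℕ) : ∀ t : ℕ, ∑ b ∈ range (t+1), (M+b).choose M = (M+t+1).choose (M+1) := by
  intro t
  induction t with
  | zero => simp
  | succ t ih =>
      rw [sum_range_succ, ih, show M + (t+1) = M + t + 1 from rfl,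
        show M + t + 1 + 1 = (M+t+1)+1 from rfl, Nat.choose_succ_succ' (M+t+1) M]
      omega

lemma keysum (M : ℕ) : ∀ N : ℕ,
    ∑ b ∈ range (N+1), (N+1-b) * (M+b).choose M = (M+N+2).choose (M+2) := by
  intro N
  induction N with
  | zero => simp
  | succ N ih =>
      have hcg : ∀ b ∈ range (N+1), (N+2-b) * (M+b).choose M
          = (N+1-b) * (M+b).choose M + (M+b).choose M := by
        intro b hb
        rw [mem_range] at hb
        have : N+2-b = (N+1-b) + 1 := by omega
        rw [this, add_mul, one_mul]
      have step : ∑ b ∈ range (N+2), (N+2-b) * (M+b).choose M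
          = (∑ b ∈ range (N+1), (N+1-b) * (M+b).choose M)
            + ∑ b ∈ range (N+2), (M+b).choose M := by
        rw [sum_range_succ (fun b => (N+2-b) * (M+b).choose M),
          sum_range_succ (fun b => (M+b).choose M),
          sum_congr rfl hcg, sum_add_distrib, show N+2-(N+1) = 1 from by omega, one_mul]
        omega
      rw [show N+1+1 = N+2 from rfl, step, ih, hockey M (N+1),
        show M+(N+1)+1 = M+N+2 from rfl, show M+(N+1)+2 = (M+N+2)+1 from rfl,
        show M+2 = (M+1)+1 from rfl, Nat.choose_succ_succ' (M+N+2) (M+1)]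
      omega


lemma fin_filter_val_gt (n c : ℕ) :
    ((univ : Finset (Fin n)).filter (fun j => c < j.val)).card = n - (c + 1) := by
  rw [show n - (c+1) = (range (n - (c+1))).card from (card_range _).symm]
  apply card_bij' (fun j _ => j.val - (c+1))
    (fun x hx => ⟨x + (c+1), by rw [mem_range] at hx; omega⟩)
  · intro j hj; rw [mem_filter] at hj; apply Fin.ext; simp; omega
  · intro x hx; rw [mem_range] at hx; simp
  · intro j hj; rw [mem_filter] at hj; rw [mem_range]; have := j.isLt; omega
  · intro x hx; rw [mem_range] at hx; simp only [mem_filter, mem_univ, true_and]; omega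

lemma card_g (n k : ℕ) (hk : 1 ≤ k) (a : Fin n)
    (T : Finset (Fin n)) (hT : T = univ.filter (fun j : Fin n => k - 1 < j.val)) :
    Fintype.card {g : ↥T → Fin n // (∀ x, a.val + 1 < (g x).val) ∧ Function.Injective g}
      = (n - a.val - 2).descFactorial (n - k) := by
  set B : Finset (Fin n) := univ.filter (fun w : Fin n => a.val + 1 < w.val) with hB
  have key : ∀ g : {g : ↥T → Fin n // (∀ x, a.val + 1 < (g x).val) ∧ Function.Injective g},
      ∀ x : ↥T, (g.1 x) ∈ B := by
    intro g x; simp only [hB, mem_filter, mem_univ, true_and]; exact g.2.1 x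
  have eqv : {g : ↥T → Fin n // (∀ x, a.val + 1 < (g x).val) ∧ Function.Injective g}
      ≃ (↥T ↪ ↥B) :=
    { toFun := fun g => ⟨fun x => ⟨g.1 x, key g x⟩, fun x y h => g.2.2 (congrArg Subtype.val h)⟩
      invFun := fun f => ⟨fun x => (f x).val,
        ⟨fun x => (mem_filter.mp (f x).2).2, fun x y h => f.injective (Subtype.ext h)⟩⟩
      left_inv := fun g => rfl
      right_inv := fun f => rfl }
  rw [Fintype.card_congr eqv, Fintype.card_embedding_eq, Fintype.card_coe, Fintype.card_coe,
    hB, hT, fin_filter_val_gt, fin_filter_val_gt]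
  congr 1
  omega


lemma card_b (n : ℕ) (a : Fin n) :
    Fintype.card {b : Fin n // b.val = a.val + 1 ∨ b < a}
      = a.val + (if a.val + 1 < n then 1 else 0) := by
  rw [Fintype.card_subtype]
  by_cases h : a.val + 1 < n
  · rw [if_pos h]
    have hset : univ.filter (fun b : Fin n => b.val = a.val + 1 ∨ b < a)
        = insert (⟨a.val+1, h⟩ : Fin n) (Finset.Iio a) := by
      ext b
      simp only [mem_filter, mem_univ, true_and, mem_insert, Finset.mem_Iio, Fin.lt_def,
        Fin.ext_iff]
    rw [hset, card_insert_of_notMem (by simp [Finset.mem_Iio, Fin.lt_def]), Fin.card_Iio]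
  · rw [if_neg h]
    have hset : univ.filter (fun b : Fin n => b.val = a.val + 1 ∨ b < a) = Finset.Iio a := by
      ext b
      have := b.isLt
      simp only [mem_filter, mem_univ, true_and, Finset.mem_Iio, Fin.lt_def]
      omega
    rw [hset, Fin.card_Iio, Nat.add_zero]



set_option maxHeartbeats 1000000 in
lemma count_aux (n k : ℕ) (hk : 2 ≤ k) (hkn : k ≤ n) (p0 p1 : Fin n)
    (hp0 : p0.val = k - 2) (hp1 : p1.val = k - 1) :
    (univ.filter (fun σ : Equiv.Perm (Fin n) =>
        ((σ p0).val = (σ p1).val + 1 ∨ σ p0 < σ p1) ∧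
        ∀ j : Fin n, k - 1 < j.val → (σ p1).val + 1 < (σ j).val)).card
      = (∑ a ∈ range n, ((a + if a + 1 < n then 1 else 0) * (n - a - 2).descFactorial (n - k)))
          * (k - 2).factorial := by
  set T : Finset (Fin n) := univ.filter (fun j : Fin n => k - 1 < j.val) with hT
  have hp0T : p0 ∉ T := by simp [hT]; omega
  have hp1T : p1 ∉ T := by simp [hT]; omega
  have hp01 : p0 ≠ p1 := by
    intro h; rw [Fin.ext_iff] at h; omega
  have hTcard : T.card = n - k := by rw [hT, fin_filter_val_gt]; omega
  set A : Finset (Equiv.Perm (Fin n)) := univ.filter (fun σ : Equiv.Perm (Fin n) =>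
      ((σ p0).val = (σ p1).val + 1 ∨ σ p0 < σ p1) ∧
      ∀ j : Fin n, k - 1 < j.val → (σ p1).val + 1 < (σ j).val) with hA
  let Φ : Equiv.Perm (Fin n) → Fin n × Fin n × (↥T → Fin n) :=
    fun σ => (σ p1, σ p0, fun x => σ x.val)
  let Q : Fin n → Fin n × (↥T → Fin n) → Prop := fun a w =>
    (w.1.val = a.val + 1 ∨ w.1 < a) ∧
    ((∀ x : ↥T, a.val + 1 < (w.2 x).val) ∧ Function.Injective w.2)
  let Valid : Fin n × Fin n × (↥T → Fin n) → Prop := fun v => Q v.1 v.2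
  have stepA : A.card = ∑ v ∈ univ, (A.filter (fun σ => Φ σ = v)).card :=
    card_eq_sum_card_fiberwise (fun σ _ => mem_univ _)
  have stepB : ∀ v, (A.filter (fun σ => Φ σ = v)).card
      = if Valid v then (k - 2).factorial else 0 := by
    rintro ⟨a, b, g⟩
    by_cases hv : Valid (a, b, g)
    · rw [if_pos hv]
      obtain ⟨hv1, hv2, hv3⟩ := hv
      simp only [Valid, Q] at hv1 hv2 hv3
      have hbval : b.val = a.val + 1 ∨ b.val < a.val := by
        rcases hv1 with h | h
        · exact Or.inl h
        · exact Or.inr (Fin.lt_def.mp h)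
      set s : Finset (Fin n) := insert p0 (insert p1 T) with hs
      set f : Fin n → Fin n := fun x =>
        if x = p0 then b else if x = p1 then a else if h : x ∈ T then g ⟨x, h⟩ else x with hf
      have hfp0 : f p0 = b := by simp [hf]
      have hfp1 : f p1 = a := by simp [hf, Ne.symm hp01]
      have hfT : ∀ x (hx : x ∈ T), f x = g ⟨x, hx⟩ := by
        intro x hx
        have hx0 : x ≠ p0 := fun h => hp0T (h ▸ hx)
        have hx1 : x ≠ p1 := fun h => hp1T (h ▸ hx)
        simp [hf, hx0, hx1, hx]
      have hscard : s.card = (n - k) + 2 := by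
        rw [hs, card_insert_of_notMem (by simp [mem_insert, hp01, hp0T]),
          card_insert_of_notMem hp1T, hTcard]
      have hinj : Set.InjOn f s := by
        intro x hx y hy hxy
        simp only [hs, mem_insert, mem_coe] at hx hy
        rcases hx with rfl | rfl | hx <;> rcases hy with rfl | rfl | hy
        · rfl
        · exfalso; rw [hfp0, hfp1, Fin.ext_iff] at hxy; omega
        · exfalso; rw [hfp0, hfT y hy] at hxy
          have h1 := hv2 ⟨y, hy⟩
          have h2 : b.val = (g ⟨y, hy⟩).val := congrArg Fin.val hxy
          omega
        · exfalso; rw [hfp1, hfp0, Fin.ext_iff] at hxy; omega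
        · rfl
        · exfalso; rw [hfp1, hfT y hy] at hxy
          have h1 := hv2 ⟨y, hy⟩
          have h2 : a.val = (g ⟨y, hy⟩).val := congrArg Fin.val hxy
          omega
        · exfalso; rw [hfT x hx, hfp0] at hxy
          have h1 := hv2 ⟨x, hx⟩
          have h2 : (g ⟨x, hx⟩).val = b.val := congrArg Fin.val hxy
          omega
        · exfalso; rw [hfT x hx, hfp1] at hxy
          have h1 := hv2 ⟨x, hx⟩
          have h2 : (g ⟨x, hx⟩).val = a.val := congrArg Fin.val hxy
          omega
        · rw [hfT x hx, hfT y hy] at hxy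
          exact congrArg Subtype.val (hv3 hxy)
      have hfs : A.filter (fun σ => Φ σ = (a, b, g))
          = univ.filter (fun σ : Equiv.Perm (Fin n) => ∀ x ∈ s, σ x = f x) := by
        ext σ
        simp only [mem_filter, mem_univ, true_and, hA]
        constructor
        · rintro ⟨⟨hP1, hP2⟩, hΦ⟩
          rw [Prod.ext_iff, Prod.ext_iff] at hΦ
          obtain ⟨ha, hb, hg⟩ := hΦ
          intro x hx
          simp only [hs, mem_insert] at hx
          rcases hx with rfl | rfl | hx
          · rw [hfp0]; exact hb
          · rw [hfp1]; exact ha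
          · rw [hfT x hx]; exact congrFun hg ⟨x, hx⟩
        · intro hext
          have hb : σ p0 = b := by
            rw [hext p0 (mem_insert_self _ _), hfp0]
          have ha : σ p1 = a := by
            rw [hext p1 (mem_insert_of_mem (mem_insert_self _ _)), hfp1]
          have hgx : ∀ x : ↥T, σ x.val = g x := by
            intro x
            rw [hext x.val (mem_insert_of_mem (mem_insert_of_mem x.2)), hfT _ x.2,
              Subtype.coe_eta]
          refine ⟨⟨?_, ?_⟩, ?_⟩
          · rw [ha, hb]; exact hv1
          · intro j hj
            have hjT : j ∈ T := by rw [hT]; simp only [mem_filter, mem_univ, true_and]; exact hj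
            rw [ha, hgx ⟨j, hjT⟩]
            exact hv2 ⟨j, hjT⟩
          · have hfun : (fun x : ↥T => σ x.val) = g := funext hgx
            show (σ p1, σ p0, fun x : ↥T => σ x.val) = (a, b, g)
            rw [Prod.mk.injEq, Prod.mk.injEq]
            exact ⟨ha, hb, hfun⟩
      rw [hfs]
      have hres := card_perm_extend s f hinj
      rw [Fintype.card_fin, hscard, show n - (n - k + 2) = k - 2 from by omega] at hres
      convert hres using 3
    · rw [if_neg hv, card_eq_zero, Finset.eq_empty_iff_forall_notMem]
      intro σ hσ
      rw [mem_filter, hA, mem_filter] at hσ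
      obtain ⟨⟨-, hP1, hP2⟩, hΦ⟩ := hσ
      rw [Prod.ext_iff, Prod.ext_iff] at hΦ
      obtain ⟨ha, hb, hg⟩ := hΦ
      apply hv
      refine ⟨?_, ?_, ?_⟩
      · rw [← ha, ← hb]; exact hP1
      · intro x
        rw [← ha, ← hg]
        exact hP2 x.val (mem_filter.mp x.2).2
      · rw [← hg]
        intro x y h
        exact Subtype.ext (σ.injective h)
  have stepC : A.card = (univ.filter Valid).card * (k - 2).factorial := by
    rw [stepA, sum_congr rfl (fun v _ => stepB v), ← sum_filter, sum_const, smul_eq_mul]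
  have hW : (univ.filter Valid).card
      = ∑ a ∈ range n, ((a + if a + 1 < n then 1 else 0) * (n - a - 2).descFactorial (n - k)) := by
    rw [← Fintype.card_subtype]
    rw [Fintype.card_congr (Equiv.subtypeProdEquivSigmaSubtype Q), Fintype.card_sigma]
    have hcard : ∀ a : Fin n, Fintype.card {w : Fin n × (↥T → Fin n) // Q a w}
        = (a.val + if a.val + 1 < n then 1 else 0) * (n - a.val - 2).descFactorial (n - k) := by
      intro a
      rw [Fintype.card_congr (Equiv.subtypeProdEquivProd
        (p := fun b : Fin n => b.val = a.val + 1 ∨ b < a)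
        (q := fun g : ↥T → Fin n => (∀ x : ↥T, a.val + 1 < (g x).val) ∧ Function.Injective g)),
        Fintype.card_prod, card_b, card_g n k (by omega) a T hT]
    rw [Finset.sum_congr rfl (fun a _ => hcard a)]
    exact Fin.sum_univ_eq_sum_range
      (fun i => (i + if i + 1 < n then 1 else 0) * (n - i - 2).descFactorial (n - k)) n
  rw [stepC, hW]

/-- For `2 ≤ k ≤ n`, the number of permutations `σ` of `{1,…,n}` (here realized
as permutations of `Fin n`, with positions and values written 0-based) such that
(1) `σ(k-1) = σ(k) + 1` or `σ(k-1) < σ(k)`, and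
(2) `σ(j) > σ(k) + 1` for all `k < j ≤ n`,
equals `n!/((n-k+2)(n-k+1))`, plus `(n-1)!` if `k = n`. -/
theorem count_permutations_corner_condition (n k : ℕ) (hk : 2 ≤ k) (hkn : k ≤ n) :
    ((Finset.univ.filter (fun σ : Equiv.Perm (Fin n) =>
        ((σ ⟨k - 2, by omega⟩).val = (σ ⟨k - 1, by omega⟩).val + 1 ∨
          σ ⟨k - 2, by omega⟩ < σ ⟨k - 1, by omega⟩) ∧
        ∀ j : Fin n, k - 1 < j.val → (σ ⟨k - 1, by omega⟩).val + 1 < (σ j).val)).card : ℚ)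
      = (n.factorial : ℚ) / (((n - k + 2 : ℕ) : ℚ) * ((n - k + 1 : ℕ) : ℚ))
        + (if k = n then ((n - 1).factorial : ℚ) else 0) := by
  rw [count_aux n k hk hkn ⟨k - 2, by omega⟩ ⟨k - 1, by omega⟩ rfl rfl]
  by_cases hkn' : k = n
  · subst hkn'
    obtain ⟨t, rfl⟩ : ∃ t, k = t + 2 := ⟨k - 2, by omega⟩
    rw [if_pos rfl]
    have hsub : t + 2 - (t + 2) = 0 := by omega
    rw [hsub]
    have hdesc : ∀ a ∈ range (t+2), ((a + if a + 1 < t+2 then 1 else 0)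
        * (t + 2 - a - 2).descFactorial 0) = a + if a + 1 < t+2 then 1 else 0 := by
      intro a _; rw [Nat.descFactorial_zero, mul_one]
    rw [sum_congr rfl hdesc, sum_add_distrib]
    have hite : (∑ a ∈ range (t+2), if a + 1 < t+2 then 1 else 0) = t + 1 := by
      rw [Finset.sum_boole, show (range (t+2)).filter (fun a => a + 1 < t+2) = range (t+1) from by
        ext a; simp only [mem_filter, mem_range]; omega, card_range, Nat.cast_id]
    rw [hite]
    have hG : (∑ i ∈ range (t+2), i) * 2 = (t+2) * (t+1) := by
      rw [Finset.sum_range_id_mul_two, show t+2-1 = t+1 from rfl]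
    have hGq : ((∑ i ∈ range (t+2), i : ℕ) : ℚ) * 2 = (t+2) * (t+1) := by exact_mod_cast hG
    have f1 : ((t+1).factorial : ℚ) = (t+1) * t.factorial := by
      rw [show (t+1).factorial = (t+1) * t.factorial from rfl]; push_cast; ring
    have f2 : ((t+2).factorial : ℚ) = (t+2) * ((t+1) * t.factorial) := by
      rw [show (t+2).factorial = (t+2) * ((t+1) * t.factorial) from rfl]; push_cast; ring
    have hcast1 : ((t + 2 - 1).factorial : ℚ) = (t+1) * t.factorial := by
      rw [show t + 2 - 1 = t + 1 from by omega]; exact f1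
    rw [hcast1, f2]
    push_cast
    have hq := hGq
    push_cast at hq
    linear_combination ((t.factorial : ℚ)/2) * hq
  · rw [if_neg hkn']
    set m := n - k with hmdef
    have hm : 1 ≤ m := by omega
    have h1 : ∀ a ∈ range (k-1), ((a + if a + 1 < n then 1 else 0) * (n - a - 2).descFactorial m)
        = (m.factorial * ((a+1) * (n - a - 2).choose m)) := by
      intro a ha
      rw [mem_range] at ha
      rw [if_pos (by omega), Nat.descFactorial_eq_factorial_mul_choose]
      ring
    have h2 : (∑ a ∈ range n, ((a + if a + 1 < n then 1 else 0) * (n - a - 2).descFactorial m))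
        = ∑ a ∈ range (k-1), ((a + if a + 1 < n then 1 else 0) * (n - a - 2).descFactorial m) := by
      refine (sum_subset (range_subset_range.mpr (show k-1 ≤ n by omega)) ?_).symm
      intro a ha hna
      rw [mem_range] at ha hna
      rw [Nat.descFactorial_eq_zero_iff_lt.mpr (by omega), mul_zero]
    rw [h2, sum_congr rfl h1, ← mul_sum]
    have h3 : (∑ a ∈ range (k-1), (a+1) * (n - a - 2).choose m) = n.choose (m+2) := by
      rw [← Finset.sum_range_reflect (fun a => (a+1) * (n - a - 2).choose m) (k-1)]
      have hcg : ∀ j ∈ range (k-1), ((k-1-1-j)+1) * (n - (k-1-1-j) - 2).choose m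
          = (k-1-j) * (m + j).choose m := by
        intro j hj; rw [mem_range] at hj
        have e1 : (k-1-1-j)+1 = k-1-j := by omega
        have e2 : n - (k-1-1-j) - 2 = m + j := by omega
        rw [e1, e2]
      rw [sum_congr rfl hcg, show k - 1 = (k-2) + 1 from by omega]
      have hks := keysum m (k-2)
      rw [show m + (k-2) + 2 = n from by omega] at hks
      exact hks
    rw [h3]
    have hkey : (m.factorial * n.choose (m+2)) * (k-2).factorial * ((m+2)*(m+1))
        = n.factorial := by
      have hc := Nat.choose_mul_factorial_mul_factorial (show m+2 ≤ n by omega)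
      rw [show n - (m+2) = k-2 from by omega] at hc
      rw [← hc, show (m+2).factorial = (m+2)*((m+1)*m.factorial) from rfl]
      ring
    rw [add_zero, eq_div_iff (by positivity)]
    push_cast [← hkey]
    ring
end
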